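/- arXiv:2003.13134 — 7 statements merged into one kernel-verified Lean document; each statement's English description precedes it below -/
import Mathlib

section
/- If X is a semi-orderable Hausdorff space, then cws(X) ≤ 2. Moreover, cws(X) = 2 if and only if X is not orderable and has at most 2 connected components. -/
open Topology

/-- A weak selection for `X`: a choice function on (unordered) pairs,
encoded as a symmetric map `X → X → X` picking one of its two arguments. -/
structure WeakSelection (X : Type*) where
  toFun : X → X → X
  mem_pair : ∀ x y, toFun x y = x ∨ toFun x y = y
  comm : ∀ x y, toFun x y = toFun y x

namespace WeakSelection

variable {X : Type*}

/-- `x ≤_σ y` iff `σ {x, y} = x`. -/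
def le (σ : WeakSelection X) (x y : X) : Prop := σ.toFun x y = x

/-- `x <_σ y` iff `x ≤_σ y` and `x ≠ y`. -/
def lt (σ : WeakSelection X) (x y : X) : Prop := σ.le x y ∧ x ≠ y

/-- The selection topology `T_σ`, generated by the `≤_σ`-open intervals. -/
def selTop (σ : WeakSelection X) : TopologicalSpace X :=
  TopologicalSpace.generateFrom
    {s : Set X | ∃ a : X, s = {y | σ.lt y a} ∨ s = {y | σ.lt a y}}

/-- Continuity of a weak selection on a topological space. -/
def Continuous [TopologicalSpace X] (σ : WeakSelection X) : Prop :=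
  ∀ x y : X, σ.lt x y → ∃ U V : Set X, IsOpen U ∧ IsOpen V ∧ x ∈ U ∧ y ∈ V ∧
    ∀ s ∈ U, ∀ t ∈ V, σ.lt s t

end WeakSelection

/-- The supremum topology of the selection topologies of a family of weak
selections: the smallest topology containing all of them. -/
def supSelTop {X : Type*} (Sig : Set (WeakSelection X)) : TopologicalSpace X :=
  TopologicalSpace.generateFrom (⋃ σ ∈ Sig, {s : Set X | IsOpen[σ.selTop] s})

/-- The cws-number of a space: the least cardinality of a collection of
continuous weak selections whose selection topologies generate the topology. -/
noncomputable def cws (X : Type*) [t : TopologicalSpace X] : Cardinal :=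
  sInf {c : Cardinal | ∃ Sig : Set (WeakSelection X),
    (∀ σ ∈ Sig, σ.Continuous) ∧ supSelTop Sig = t ∧ Cardinal.mk ↥Sig = c}

/-- A space is orderable if its topology is the open-interval topology of some
linear order. -/
def IsOrderableTop (X : Type*) [t : TopologicalSpace X] : Prop :=
  ∃ l : LinearOrder X, t = TopologicalSpace.generateFrom
    {s : Set X | ∃ a : X, s = {x | l.lt x a} ∨ s = {x | l.lt a x}}

/-- A space is semi-orderable if it is the topological sum of two orderable
spaces, i.e. has a clopen partition into two orderable subspaces. -/
def SemiOrderable (X : Type*) [TopologicalSpace X] : Prop :=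
  ∃ A : Set X, IsClopen A ∧ IsOrderableTop ↥A ∧ IsOrderableTop ↥(Aᶜ)

set_option linter.unusedSectionVars false

/-! ### Auxiliary lemmas -/

open Set TopologicalSpace

namespace WeakSelection

variable {X : Type*}

theorem le_self (σ : WeakSelection X) (x : X) : σ.le x x := (σ.mem_pair x x).elim id id

theorem le_total' (σ : WeakSelection X) (x y : X) : σ.le x y ∨ σ.le y x := by
  rcases σ.mem_pair x y with h | h
  · exact Or.inl h
  · exact Or.inr ((σ.comm y x).trans h)

theorem eq_of_le_le {σ : WeakSelection X} {x y : X} (h : σ.le x y) (h' : σ.le y x) : x = y := by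
  have := σ.comm x y
  rw [h, h'] at this
  exact this

theorem lt_asymm' {σ : WeakSelection X} {x y : X} (h : σ.lt x y) (h' : σ.lt y x) : False :=
  h.2 (eq_of_le_le h.1 h'.1)

theorem lt_of_le_of_ne' {σ : WeakSelection X} {x y : X} (h : σ.le x y) (h' : x ≠ y) :
    σ.lt x y := ⟨h, h'⟩

theorem lt_or_lt_of_ne {σ : WeakSelection X} {x y : X} (h : x ≠ y) :
    σ.lt x y ∨ σ.lt y x := by
  rcases σ.le_total' x y with h' | h'
  · exact Or.inl ⟨h', h⟩
  · exact Or.inr ⟨h', h.symm⟩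

variable [TopologicalSpace X] {σ : WeakSelection X}

theorem isOpen_lt_left (hσ : σ.Continuous) (a : X) : IsOpen {y | σ.lt y a} := by
  rw [isOpen_iff_forall_mem_open]
  intro y hy
  obtain ⟨U, V, hU, hV, hyU, haV, h⟩ := hσ y a hy
  exact ⟨U, fun s hs => h s hs a haV, hU, hyU⟩

theorem isOpen_lt_right (hσ : σ.Continuous) (a : X) : IsOpen {y | σ.lt a y} := by
  rw [isOpen_iff_forall_mem_open]
  intro y hy
  obtain ⟨U, V, hU, hV, haU, hyV, h⟩ := hσ a y hy
  exact ⟨V, fun s hs => h a haU s hs, hV, hyV⟩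

theorem isOpen_ltPairs (hσ : σ.Continuous) : IsOpen {p : X × X | σ.lt p.1 p.2} := by
  rw [isOpen_iff_forall_mem_open]
  rintro ⟨x, y⟩ hxy
  obtain ⟨U, V, hU, hV, hxU, hyV, h⟩ := hσ x y hxy
  exact ⟨U ×ˢ V, fun p hp => h p.1 hp.1 p.2 hp.2, hU.prod hV, hxU, hyV⟩

/-- No 3-cycles of `<_σ` meeting a preconnected set. -/
theorem no_cycle (hσ : σ.Continuous) {C : Set X} (hC : IsPreconnected C)
    {x y z : X} (hx : x ∈ C) (hy : y ∈ C) (hz : z ∈ C)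
    (h1 : σ.lt x y) (h2 : σ.lt y z) (h3 : σ.lt z x) : False := by
  have hS : IsOpen ({w | σ.lt x w} ∩ {w | σ.lt w z}) :=
    (isOpen_lt_right hσ x).inter (isOpen_lt_left hσ z)
  have hT : IsOpen ({w | σ.lt w x} ∪ {w | σ.lt z w}) :=
    (isOpen_lt_left hσ x).union (isOpen_lt_right hσ z)
  have hcover : C ⊆ ({w | σ.lt x w} ∩ {w | σ.lt w z}) ∪ ({w | σ.lt w x} ∪ {w | σ.lt z w}) := by
    intro w _
    by_cases hwx : w = x
    · subst hwx; exact Or.inr (Or.inr h3)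
    rcases lt_or_lt_of_ne (σ := σ) hwx with h | h
    · exact Or.inr (Or.inl h)
    · by_cases hwz : w = z
      · subst hwz; exact Or.inr (Or.inl h3)
      rcases lt_or_lt_of_ne (σ := σ) hwz with h' | h'
      · exact Or.inl ⟨h, h'⟩
      · exact Or.inr (Or.inr h')
  have h1' : (C ∩ ({w | σ.lt x w} ∩ {w | σ.lt w z})).Nonempty := ⟨y, hy, h1, h2⟩
  have h2' : (C ∩ ({w | σ.lt w x} ∪ {w | σ.lt z w})).Nonempty := ⟨x, hx, Or.inr h3⟩
  obtain ⟨w, _, ⟨hw1, hw2⟩, hw3 | hw3⟩ := hC _ _ hS hT hcover h1' h2'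
  · exact lt_asymm' hw1 hw3
  · exact lt_asymm' hw2 hw3

/-- Across two disjoint preconnected sets, comparison is constant. -/
theorem cross_const (hσ : σ.Continuous) {C D : Set X} (hC : IsPreconnected C)
    (hD : IsPreconnected D) (hdis : ∀ c ∈ C, ∀ d ∈ D, c ≠ d)
    {c₀ d₀ : X} (hc₀ : c₀ ∈ C) (hd₀ : d₀ ∈ D) (h : σ.lt c₀ d₀) :
    ∀ c ∈ C, ∀ d ∈ D, σ.lt c d := by
  by_contra hcon
  push_neg at hcon
  obtain ⟨c, hc, d, hd, hcd⟩ := hcon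
  have hcd' : σ.lt d c := by
    rcases lt_or_lt_of_ne (σ := σ) (hdis c hc d hd) with h' | h'
    · exact absurd h' hcd
    · exact h'
  have hCD : IsPreconnected (C ×ˢ D) := hC.prod hD
  have hcover : C ×ˢ D ⊆ {p : X × X | σ.lt p.1 p.2} ∪ {p : X × X | σ.lt p.2 p.1} := by
    rintro ⟨a, b⟩ ⟨ha, hb⟩
    rcases lt_or_lt_of_ne (σ := σ) (hdis a ha b hb) with h' | h'
    · exact Or.inl h'
    · exact Or.inr h'
  have hswap : IsOpen {p : X × X | σ.lt p.2 p.1} := by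
    have : {p : X × X | σ.lt p.2 p.1} = Prod.swap ⁻¹' {p : X × X | σ.lt p.1 p.2} := rfl
    rw [this]
    exact (isOpen_ltPairs hσ).preimage continuous_swap
  obtain ⟨⟨a, b⟩, _, hp1, hp2⟩ := hCD _ _ (isOpen_ltPairs hσ) hswap hcover
    ⟨⟨c₀, d₀⟩, ⟨hc₀, hd₀⟩, h⟩ ⟨⟨c, d⟩, ⟨hc, hd⟩, hcd'⟩
  exact lt_asymm' hp1 hp2

end WeakSelection

/-! ### Selections from relations -/

section SelOfRel

variable {X : Type*}

open Classical in
noncomputable def selOfRel (r : X → X → Prop) (tot : ∀ x y, r x y ∨ r y x)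
    (anti : ∀ x y, r x y → r y x → x = y) : WeakSelection X where
  toFun x y := if r x y then x else y
  mem_pair x y := by by_cases h : r x y <;> simp [h]
  comm x y := by
    by_cases h : r x y <;> by_cases h' : r y x <;> simp [h, h']
    · exact anti _ _ h h'
    · exact ((tot x y).elim h h').elim

theorem selOfRel_le_iff {r : X → X → Prop} {tot} {anti} {x y : X} :
    (selOfRel r tot anti).le x y ↔ r x y := by
  classical
  unfold selOfRel WeakSelection.le
  by_cases h : r x y
  · simp [h]
  · simp [h]
    intro h'
    apply h
    have h2 : r y x := (tot x y).resolve_left h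
    rw [h'] at h2
    rw [h']
    exact h2

theorem selOfRel_lt_iff {r : X → X → Prop} {tot} {anti} {x y : X} :
    (selOfRel r tot anti).lt x y ↔ r x y ∧ x ≠ y := by
  unfold WeakSelection.lt
  rw [selOfRel_le_iff]

end SelOfRel


/-! ### Topology plumbing -/

section TopPlumbing

open TopologicalSpace

variable {X : Type*} [t : TopologicalSpace X]

theorem isOpen_selTop_left (σ : WeakSelection X) (a : X) :
    IsOpen[σ.selTop] {y | σ.lt y a} :=
  TopologicalSpace.GenerateOpen.basic _ ⟨a, Or.inl rfl⟩

theorem isOpen_selTop_right (σ : WeakSelection X) (a : X) :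
    IsOpen[σ.selTop] {y | σ.lt a y} :=
  TopologicalSpace.GenerateOpen.basic _ ⟨a, Or.inr rfl⟩

theorem isOpen_supSelTop_of_mem {Sig : Set (WeakSelection X)} {σ : WeakSelection X}
    (hσ : σ ∈ Sig) {s : Set X} (h : IsOpen[σ.selTop] s) : IsOpen[supSelTop Sig] s :=
  TopologicalSpace.GenerateOpen.basic _ (Set.mem_biUnion hσ h)

theorem t_le_selTop {σ : WeakSelection X} (hσ : σ.Continuous) : t ≤ σ.selTop := by
  apply le_generateFrom
  rintro s ⟨a, rfl | rfl⟩
  · exact σ.isOpen_lt_left hσ a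
  · exact σ.isOpen_lt_right hσ a

theorem t_le_supSelTop {Sig : Set (WeakSelection X)} (hσ : ∀ σ ∈ Sig, σ.Continuous) :
    t ≤ supSelTop Sig := by
  apply le_generateFrom
  intro s hs
  simp only [Set.mem_iUnion] at hs
  obtain ⟨σ, hσ', hs⟩ := hs
  exact IsOpen.mono (show IsOpen[σ.selTop] s from hs) (t_le_selTop (hσ σ hσ'))

theorem supSelTop_le_t {Sig : Set (WeakSelection X)}
    (h : ∀ W : Set X, IsOpen W → IsOpen[supSelTop Sig] W) : supSelTop Sig ≤ t :=
  TopologicalSpace.le_def.2 h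

theorem supSelTop_singleton (σ : WeakSelection X) : supSelTop {σ} = σ.selTop := by
  unfold supSelTop
  rw [Set.biUnion_singleton]
  exact generateFrom_setOf_isOpen σ.selTop

theorem cws_le_of_gen {Sig : Set (WeakSelection X)} (h1 : ∀ σ ∈ Sig, σ.Continuous)
    (h2 : supSelTop Sig = t) : cws X ≤ Cardinal.mk ↥Sig :=
  csInf_le' ⟨Sig, h1, h2, rfl⟩

end TopPlumbing

/-! ### Separation in order topologies -/

theorem orderSep {α : Type*} [LinearOrder α] [TopologicalSpace α] [OrderTopology α]
    {x y : α} (h : x < y) : ∃ U V : Set α, IsOpen U ∧ IsOpen V ∧ x ∈ U ∧ y ∈ V ∧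
      ∀ s ∈ U, ∀ t ∈ V, s < t := by
  by_cases hz : ∃ z, x < z ∧ z < y
  · obtain ⟨z, hz1, hz2⟩ := hz
    exact ⟨Set.Iio z, Set.Ioi z, isOpen_Iio, isOpen_Ioi, hz1, hz2,
      fun s hs u hu => lt_trans hs hu⟩
  · push_neg at hz
    refine ⟨Set.Iio y, Set.Ioi x, isOpen_Iio, isOpen_Ioi, h, h, fun s hs u hu => ?_⟩
    rcases lt_or_ge s u with h' | h'
    · exact h'
    · exact absurd (hz s ((lt_of_lt_of_le hu h'))) (not_le.2 hs)


/-! ### Clopen down-sets in disconnected linear orders -/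

section Split

open Set

variable {α : Type*} [LinearOrder α] [TopologicalSpace α] [OrderTopology α]

theorem exists_ordConnected_nbhd {s : Set α} (hs : IsOpen s) {x : α} (hx : x ∈ s) :
    ∃ I : Set α, IsOpen I ∧ x ∈ I ∧ I ⊆ s ∧ I.OrdConnected := by
  have hb := TopologicalSpace.isTopologicalBasis_of_subbasis
    (OrderTopology.topology_eq_generate_intervals (α := α))
  obtain ⟨I, hI, hxI, hIs⟩ := hb.exists_subset_of_mem_open hx hs
  refine ⟨I, hb.isOpen hI, hxI, hIs, ?_⟩
  obtain ⟨f, ⟨hf_fin, hf_sub⟩, rfl⟩ := hI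
  refine Set.ordConnected_sInter ?_
  intro u hu
  obtain ⟨a, rfl | rfl⟩ := hf_sub hu
  · exact Set.ordConnected_Ioi
  · exact Set.ordConnected_Iio

theorem split_lemma {U : Set α} (hU : IsClopen U) {u v : α} (hu : u ∈ U) (hv : v ∉ U)
    (huv : u < v) : ∃ L : Set α, IsClopen L ∧ u ∈ L ∧ v ∉ L ∧
      (∀ x y : α, y ≤ x → x ∈ L → y ∈ L) := by
  set L : Set α := {x | x ≤ u} ∪ {x | u ≤ x ∧ Icc u x ⊆ U} with hL
  have hdc : ∀ x y : α, y ≤ x → x ∈ L → y ∈ L := by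
    intro x y hyx hx
    rcases le_total y u with h | h
    · exact Or.inl h
    · rcases hx with hx | hx
      · exact Or.inl (hyx.trans hx)
      · exact Or.inr ⟨h, fun z hz => hx.2 ⟨hz.1, hz.2.trans hyx⟩⟩
  have hmem : ∀ x ∈ L, x ≤ u ∨ (u ≤ x ∧ Icc u x ⊆ U) := fun x hx => hx
  have hopen : IsOpen L := by
    rw [isOpen_iff_forall_mem_open]
    intro x hx
    rcases lt_or_ge x u with hxu | hux
    · exact ⟨Iio u, fun y hy => Or.inl (le_of_lt hy), isOpen_Iio, hxu⟩
    · have hx' : u ≤ x ∧ Icc u x ⊆ U := by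
        rcases hmem x hx with h | h
        · have : x = u := le_antisymm h hux
          subst this
          exact ⟨le_rfl, fun z hz => (le_antisymm hz.2 hz.1) ▸ hu⟩
        · exact h
      have hxU : x ∈ U := hx'.2 ⟨hx'.1, le_rfl⟩
      obtain ⟨I, hIo, hxI, hIU, hIc⟩ := exists_ordConnected_nbhd hU.2 hxU
      refine ⟨I, fun y hy => ?_, hIo, hxI⟩
      rcases le_total y u with h | h
      · exact Or.inl h
      · refine Or.inr ⟨h, fun z hz => ?_⟩
        rcases le_total z x with h' | h'
        · exact hx'.2 ⟨hz.1, h'⟩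
        · exact hIU (hIc.out hxI hy ⟨h', hz.2⟩)
  have hclosed : IsClosed L := by
    rw [← isOpen_compl_iff]
    rw [isOpen_iff_forall_mem_open]
    intro x hx
    have hx1 : ¬ x ≤ u := fun h => hx (Or.inl h)
    have hux : u < x := not_le.1 hx1
    have hx2 : ¬ Icc u x ⊆ U := fun h => hx (Or.inr ⟨hux.le, h⟩)
    obtain ⟨w, hw, hwU⟩ := not_subset.1 hx2
    have huw : u < w := lt_of_le_of_ne hw.1 (fun h => hwU (h ▸ hu))
    by_cases hxU : x ∈ U
    · have hwx : w < x := lt_of_le_of_ne hw.2 (fun h => hwU (h ▸ hxU))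
      obtain ⟨I, hIo, hxI, hIU, hIc⟩ := exists_ordConnected_nbhd hU.2 hxU
      refine ⟨I ∩ Ioi w, fun y hy => ?_, hIo.inter isOpen_Ioi, hxI, hwx⟩
      have hwy : w < y := hy.2
      rintro (h | ⟨h1, h2⟩)
      · exact absurd h (not_le.2 (huw.trans hwy))
      · exact hwU (h2 ⟨huw.le, hwy.le⟩)
    · obtain ⟨I, hIo, hxI, hIU, hIc⟩ := exists_ordConnected_nbhd (hU.1.isOpen_compl) hxU
      refine ⟨I ∩ Ioi u, fun y hy => ?_, hIo.inter isOpen_Ioi, hxI, hux⟩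
      rintro (h | ⟨h1, h2⟩)
      · exact absurd h (not_le.2 hy.2)
      · exact hIU hy.1 (h2 ⟨h1, le_rfl⟩)
  exact ⟨L, ⟨hclosed, hopen⟩, Or.inl le_rfl,
    fun h => by
      rcases hmem v h with h' | h'
      · exact absurd h' (not_le.2 huv)
      · exact hv (h'.2 ⟨huv.le, le_rfl⟩),
    hdc⟩

theorem exists_downset (hpc : ¬ PreconnectedSpace α) :
    ∃ L : Set α, IsClopen L ∧ L.Nonempty ∧ Lᶜ.Nonempty ∧ ∀ x ∈ L, ∀ y ∈ Lᶜ, x < y := by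
  have hpre : ¬ IsPreconnected (univ : Set α) := fun h => hpc ⟨h⟩
  unfold IsPreconnected at hpre
  push_neg at hpre
  obtain ⟨p, q, hp, hq, hcov, h1, h2, h3⟩ := hpre
  have hcompl : pᶜ = q := by
    apply Set.eq_of_subset_of_subset
    · intro z hz
      rcases hcov (mem_univ z) with h | h
      · exact absurd h hz
      · exact h
    · intro z hz hzp
      exact eq_empty_iff_forall_notMem.1 h3 z ⟨mem_univ z, hzp, hz⟩
  have hUc : IsClopen p := ⟨isOpen_compl_iff.1 (hcompl ▸ hq), hp⟩
  obtain ⟨a, _, ha⟩ := h1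
  obtain ⟨b, _, hb⟩ := h2
  have hab : b ∉ p := by rw [← hcompl] at hb; exact hb
  have hne : a ≠ b := fun h => hab (h ▸ ha)
  have main : ∀ L : Set α, IsClopen L → (∃ x, x ∈ L) → (∃ y, y ∉ L) →
      (∀ x y : α, y ≤ x → x ∈ L → y ∈ L) →
      ∃ L : Set α, IsClopen L ∧ L.Nonempty ∧ Lᶜ.Nonempty ∧ ∀ x ∈ L, ∀ y ∈ Lᶜ, x < y := by
    rintro L hL ⟨x, hx⟩ ⟨y, hy⟩ hdc
    refine ⟨L, hL, ⟨x, hx⟩, ⟨y, hy⟩, fun s hs w hw => ?_⟩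
    rcases lt_or_ge s w with h | h
    · exact h
    · exact absurd (hdc s w h hs) hw
  rcases lt_or_gt_of_ne hne with h | h
  · obtain ⟨L, hL, h1', h2', hdc⟩ := split_lemma hUc ha hab h
    exact main L hL ⟨a, h1'⟩ ⟨b, h2'⟩ hdc
  · obtain ⟨L, hL, h1', h2', hdc⟩ := split_lemma hUc.compl hab (not_not.2 ha) h
    exact main L hL ⟨b, h1'⟩ ⟨a, h2'⟩ hdc

end Split


/-! ### Ordered clopen pieces -/

section OPieceSec

open Set TopologicalSpace

variable {X : Type*} [t : TopologicalSpace X]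

structure OPiece (X : Type*) [t : TopologicalSpace X] where
  P : Set X
  le : X → X → Prop
  clopen : IsClopen P
  total : ∀ x ∈ P, ∀ y ∈ P, le x y ∨ le y x
  antisymm : ∀ x y : X, le x y → le y x → x = y
  le_mem : ∀ x y : X, le x y → x ∈ P ∧ y ∈ P
  sep : ∀ x ∈ P, ∀ y ∈ P, le x y → x ≠ y → ∃ U V : Set X, IsOpen U ∧ IsOpen V ∧
    x ∈ U ∧ y ∈ V ∧ U ⊆ P ∧ V ⊆ P ∧ ∀ s ∈ U, ∀ u ∈ V, le s u ∧ s ≠ u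
  ioOpen : ∀ a ∈ P, IsOpen {y | le y a ∧ y ≠ a}
  oiOpen : ∀ a ∈ P, IsOpen {y | le a y ∧ y ≠ a}
  gen1 : ∀ (τ : TopologicalSpace X), IsOpen[τ] P →
    (∀ a ∈ P, IsOpen[τ] {y | le y a ∧ y ≠ a}) →
    (∀ a ∈ P, IsOpen[τ] {y | le a y ∧ y ≠ a}) →
    ∀ W : Set X, IsOpen[t] W → IsOpen[τ] (W ∩ P)

variable (A : Set X) (l : LinearOrder ↥A)

/-- The relation on `X` induced by a linear order on a subset. -/
def pieceLe : X → X → Prop := fun x y => ∃ hx : x ∈ A, ∃ hy : y ∈ A, l.le ⟨x, hx⟩ ⟨y, hy⟩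

theorem pieceLe_image_Iio (a : ↥A) :
    Subtype.val '' {x : ↥A | l.lt x a} = {y | pieceLe A l y a.val ∧ y ≠ a.val} := by
  letI := l
  ext w
  constructor
  · rintro ⟨w', hw', rfl⟩
    exact ⟨⟨w'.2, a.2, le_of_lt hw'⟩, fun h => (ne_of_lt hw') (Subtype.ext h)⟩
  · rintro ⟨⟨hw, ha, hle⟩, hne⟩
    exact ⟨⟨w, hw⟩, lt_of_le_of_ne hle (fun h => hne (congrArg Subtype.val h)), rfl⟩

theorem pieceLe_image_Ioi (a : ↥A) :
    Subtype.val '' {x : ↥A | l.lt a x} = {y | pieceLe A l a.val y ∧ y ≠ a.val} := by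
  letI := l
  ext w
  constructor
  · rintro ⟨w', hw', rfl⟩
    exact ⟨⟨a.2, w'.2, le_of_lt hw'⟩, fun h => (ne_of_lt hw') (Subtype.ext h.symm)⟩
  · rintro ⟨⟨ha, hw, hle⟩, hne⟩
    exact ⟨⟨w, hw⟩, lt_of_le_of_ne hle (fun h => hne (congrArg Subtype.val h.symm)), rfl⟩

variable (hA : IsClopen A)
  (hl : (instTopologicalSpaceSubtype : TopologicalSpace ↥A) = TopologicalSpace.generateFrom
    {s : Set ↥A | ∃ a : ↥A, s = {x | l.lt x a} ∨ s = {x | l.lt a x}})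

include hl in
theorem pieceOrderTopology : @OrderTopology ↥A instTopologicalSpaceSubtype l.toPreorder := by
  letI := l
  constructor
  rw [hl]
  congr 1
  ext s
  constructor
  · rintro ⟨a, h | h⟩
    · exact ⟨a, Or.inr h⟩
    · exact ⟨a, Or.inl h⟩
  · rintro ⟨a, h | h⟩
    · exact ⟨a, Or.inr h⟩
    · exact ⟨a, Or.inl h⟩

include hl in
theorem pieceKey (τ : TopologicalSpace X)
    (hio : ∀ a ∈ A, IsOpen[τ] {y | pieceLe A l y a ∧ y ≠ a})
    (hoi : ∀ a ∈ A, IsOpen[τ] {y | pieceLe A l a y ∧ y ≠ a})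
    (hPτ : IsOpen[τ] A) :
    ∀ S : Set ↥A, IsOpen[@instTopologicalSpaceSubtype X (fun x => x ∈ A) t] S →
      IsOpen[τ] (Subtype.val '' S) := by
  intro S hS
  rw [hl] at hS
  induction hS with
  | basic s hs =>
    obtain ⟨a, rfl | rfl⟩ := hs
    · rw [pieceLe_image_Iio]
      exact hio a.val a.2
    · rw [pieceLe_image_Ioi]
      exact hoi a.val a.2
  | univ =>
    rw [Set.image_univ, Subtype.range_val]
    exact hPτ
  | inter s₁ s₂ h₁ h₂ ih₁ ih₂ =>
    rw [Set.image_inter Subtype.val_injective]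
    exact τ.isOpen_inter _ _ ih₁ ih₂
  | sUnion T hT ih =>
    rw [Set.image_sUnion]
    refine τ.isOpen_sUnion _ ?_
    rintro _ ⟨s, hs, rfl⟩
    exact ih s hs

include hA hl in
/-- Build an ordered clopen piece from an orderable clopen subspace. -/
def OPiece.ofOrd : OPiece X where
  P := A
  le := pieceLe A l
  clopen := hA
  total := by
    intro x hx y hy
    rcases l.le_total ⟨x, hx⟩ ⟨y, hy⟩ with h | h
    · exact Or.inl ⟨hx, hy, h⟩
    · exact Or.inr ⟨hy, hx, h⟩
  antisymm := by
    rintro x y ⟨hx, hy, h⟩ ⟨hy', hx', h'⟩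
    exact congrArg Subtype.val (l.le_antisymm _ _ h h')
  le_mem := by
    rintro x y ⟨hx, hy, h⟩
    exact ⟨hx, hy⟩
  sep := by
    letI := l
    haveI := pieceOrderTopology A l hl
    rintro x hx y hy ⟨hx', hy', hle⟩ hne
    have hlt : (⟨x, hx'⟩ : ↥A) < ⟨y, hy'⟩ :=
      lt_of_le_of_ne hle (fun h => hne (congrArg Subtype.val h))
    obtain ⟨U', V', hU', hV', hxU', hyV', hsep⟩ := orderSep hlt
    refine ⟨Subtype.val '' U', Subtype.val '' V',
      hA.2.isOpenMap_subtype_val _ hU', hA.2.isOpenMap_subtype_val _ hV',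
      ⟨⟨x, hx'⟩, hxU', rfl⟩, ⟨⟨y, hy'⟩, hyV', rfl⟩, ?_, ?_, ?_⟩
    · rintro _ ⟨w, _, rfl⟩; exact w.2
    · rintro _ ⟨w, _, rfl⟩; exact w.2
    · rintro _ ⟨s', hs', rfl⟩ _ ⟨u', hu', rfl⟩
      have h := hsep s' hs' u' hu'
      exact ⟨⟨s'.2, u'.2, le_of_lt h⟩, fun hh => (ne_of_lt h) (Subtype.ext hh)⟩
  ioOpen := by
    letI := l
    haveI := pieceOrderTopology A l hl
    intro a ha
    have := hA.2.isOpenMap_subtype_val _ (isOpen_Iio (a := (⟨a, ha⟩ : ↥A)))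
    rwa [show Iio (⟨a, ha⟩ : ↥A) = {x : ↥A | l.lt x ⟨a, ha⟩} from rfl,
      pieceLe_image_Iio] at this
  oiOpen := by
    letI := l
    haveI := pieceOrderTopology A l hl
    intro a ha
    have := hA.2.isOpenMap_subtype_val _ (isOpen_Ioi (a := (⟨a, ha⟩ : ↥A)))
    rwa [show Ioi (⟨a, ha⟩ : ↥A) = {x : ↥A | l.lt ⟨a, ha⟩ x} from rfl,
      pieceLe_image_Ioi] at this
  gen1 := by
    intro τ hPτ hio hoi W hW
    have : W ∩ A = Subtype.val '' (Subtype.val ⁻¹' W : Set ↥A) := by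
      rw [Subtype.image_preimage_val]
      exact Set.inter_comm _ _
    rw [this]
    exact @pieceKey X t A l hl τ hio hoi hPτ _
      (@IsOpen.preimage ↥A X (@instTopologicalSpaceSubtype X (fun x => x ∈ A) t) t
        Subtype.val (@continuous_subtype_val X t (fun x => x ∈ A)) W hW)

end OPieceSec


/-! ### Splitting a disconnected piece -/

section SplitTransfer

open Set TopologicalSpace

variable {X : Type*} [t : TopologicalSpace X] (A : Set X) (l : LinearOrder ↥A)
  (hA : IsClopen A)
  (hl : (instTopologicalSpaceSubtype : TopologicalSpace ↥A) = TopologicalSpace.generateFrom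
    {s : Set ↥A | ∃ a : ↥A, s = {x | l.lt x a} ∨ s = {x | l.lt a x}})

include hA hl in
theorem piece_split (hnc : ¬ IsPreconnected A) :
    ∃ L : Set X, IsClopen L ∧ L ⊆ A ∧ L.Nonempty ∧ (A \ L).Nonempty ∧
      (∀ x ∈ L, ∀ y ∈ A \ L, pieceLe A l x y) := by
  letI := l
  haveI := pieceOrderTopology A l hl
  have hpc : ¬ PreconnectedSpace ↥A := fun h => hnc (isPreconnected_iff_preconnectedSpace.2 h)
  obtain ⟨L', hL', hne1, hne2, hlt⟩ := exists_downset hpc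
  refine ⟨Subtype.val '' L', ⟨?_, ?_⟩, ?_, ?_, ?_, ?_⟩
  · exact hA.1.isClosedMap_subtype_val _ hL'.1
  · exact hA.2.isOpenMap_subtype_val _ hL'.2
  · rintro _ ⟨w, _, rfl⟩; exact w.2
  · obtain ⟨w, hw⟩ := hne1
    exact ⟨w.val, w, hw, rfl⟩
  · obtain ⟨w, hw⟩ := hne2
    refine ⟨w.val, w.2, ?_⟩
    rintro ⟨w', hw', hww⟩
    exact hw (by rwa [show w' = w from Subtype.ext hww] at hw')
  · rintro _ ⟨x', hx', rfl⟩ y ⟨hyA, hyL⟩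
    have hy' : (⟨y, hyA⟩ : ↥A) ∈ L'ᶜ := fun h => hyL ⟨⟨y, hyA⟩, h, rfl⟩
    exact ⟨x'.2, hyA, le_of_lt (hlt x' hx' _ hy')⟩

end SplitTransfer

/-! ### The cross-piece selection -/

section CrossSel

open Set TopologicalSpace

variable {X : Type*} [t : TopologicalSpace X] (pa pb : OPiece X) (L : Set X)

def crossRel : X → X → Prop := fun x y =>
  pa.le x y ∨ pb.le x y ∨ (x ∈ pa.P \ L ∧ y ∈ pb.P) ∨ (x ∈ pb.P ∧ y ∈ L)

variable (hcompl : pb.P = pa.Pᶜ) (hLsub : L ⊆ pa.P)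

include hcompl in
theorem disjAB : ∀ x : X, x ∈ pa.P → x ∈ pb.P → False := by
  intro x h1 h2
  rw [hcompl] at h2
  exact h2 h1

include hcompl in
theorem crossRel_total : ∀ x y : X, crossRel pa pb L x y ∨ crossRel pa pb L y x := by
  intro x y
  by_cases hx : x ∈ pa.P <;> by_cases hy : y ∈ pa.P
  · rcases pa.total x hx y hy with h | h
    · exact Or.inl (Or.inl h)
    · exact Or.inr (Or.inl h)
  · have hy' : y ∈ pb.P := by rw [hcompl]; exact hy
    by_cases hxL : x ∈ L
    · exact Or.inr (Or.inr (Or.inr (Or.inr ⟨hy', hxL⟩)))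
    · exact Or.inl (Or.inr (Or.inr (Or.inl ⟨⟨hx, hxL⟩, hy'⟩)))
  · have hx' : x ∈ pb.P := by rw [hcompl]; exact hx
    by_cases hyL : y ∈ L
    · exact Or.inl (Or.inr (Or.inr (Or.inr ⟨hx', hyL⟩)))
    · exact Or.inr (Or.inr (Or.inr (Or.inl ⟨⟨hy, hyL⟩, hx'⟩)))
  · have hx' : x ∈ pb.P := by rw [hcompl]; exact hx
    have hy' : y ∈ pb.P := by rw [hcompl]; exact hy
    rcases pb.total x hx' y hy' with h | h
    · exact Or.inl (Or.inr (Or.inl h))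
    · exact Or.inr (Or.inr (Or.inl h))

include hcompl hLsub in
theorem crossRel_antisymm : ∀ x y : X, crossRel pa pb L x y → crossRel pa pb L y x → x = y := by
  have hd := disjAB pa pb hcompl
  rintro x y (h | h | ⟨⟨hxA, hxL⟩, hyB⟩ | ⟨hxB, hyL⟩)
    (h' | h' | ⟨⟨hyA, hyL'⟩, hxB'⟩ | ⟨hyB', hxL'⟩)
  · exact pa.antisymm x y h h'
  · exact (hd x (pa.le_mem _ _ h).1 (pb.le_mem _ _ h').2).elim
  · exact (hd x (pa.le_mem _ _ h).1 hxB').elim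
  · exact (hd y (pa.le_mem _ _ h).2 hyB').elim
  · exact (hd x (pa.le_mem _ _ h').2 (pb.le_mem _ _ h).1).elim
  · exact pb.antisymm x y h h'
  · exact (hd y hyA (pb.le_mem _ _ h).2).elim
  · exact (hd x (hLsub hxL') (pb.le_mem _ _ h).1).elim
  · exact (hd y (pa.le_mem _ _ h').1 hyB).elim
  · exact (hd x hxA (pb.le_mem _ _ h').2).elim
  · exact (hd y hyA hyB).elim
  · exact (hxL hxL').elim
  · exact (hd x (pa.le_mem _ _ h').2 hxB).elim
  · exact (hd y (hLsub hyL) (pb.le_mem _ _ h').1).elim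
  · exact (hyL' hyL).elim
  · exact (hd x (hLsub hxL') hxB).elim

end CrossSel


section CrossSel2

open Set TopologicalSpace

variable {X : Type*} [t : TopologicalSpace X] (pa pb : OPiece X) (L : Set X)
  (hcompl : pb.P = pa.Pᶜ) (hLsub : L ⊆ pa.P) (hLclopen : IsClopen L)

noncomputable def crossSel : WeakSelection X :=
  selOfRel (crossRel pa pb L) (crossRel_total pa pb L hcompl)
    (crossRel_antisymm pa pb L hcompl hLsub)

theorem crossSel_lt_iff {x y : X} :
    (crossSel pa pb L hcompl hLsub).lt x y ↔ crossRel pa pb L x y ∧ x ≠ y :=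
  selOfRel_lt_iff

include hLclopen in
theorem crossSel_continuous : (crossSel pa pb L hcompl hLsub).Continuous := by
  have hd := disjAB pa pb hcompl
  intro x y hxy
  rw [crossSel_lt_iff] at hxy
  obtain ⟨h, hne⟩ := hxy
  rcases h with h | h | ⟨⟨hxA, hxL⟩, hyB⟩ | ⟨hxB, hyL⟩
  · obtain ⟨U, V, hU, hV, hxU, hyV, hUP, hVP, hsep⟩ :=
      pa.sep x (pa.le_mem _ _ h).1 y (pa.le_mem _ _ h).2 h hne
    refine ⟨U, V, hU, hV, hxU, hyV, fun s hs u hu => ?_⟩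
    rw [crossSel_lt_iff]
    exact ⟨Or.inl (hsep s hs u hu).1, (hsep s hs u hu).2⟩
  · obtain ⟨U, V, hU, hV, hxU, hyV, hUP, hVP, hsep⟩ :=
      pb.sep x (pb.le_mem _ _ h).1 y (pb.le_mem _ _ h).2 h hne
    refine ⟨U, V, hU, hV, hxU, hyV, fun s hs u hu => ?_⟩
    rw [crossSel_lt_iff]
    exact ⟨Or.inr (Or.inl (hsep s hs u hu).1), (hsep s hs u hu).2⟩
  · refine ⟨pa.P ∩ Lᶜ, pb.P, (pa.clopen.2).inter hLclopen.1.isOpen_compl, pb.clopen.2,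
      ⟨hxA, hxL⟩, hyB, fun s hs u hu => ?_⟩
    rw [crossSel_lt_iff]
    exact ⟨Or.inr (Or.inr (Or.inl ⟨⟨hs.1, hs.2⟩, hu⟩)), fun hh => hd s hs.1 (hh ▸ hu)⟩
  · refine ⟨pb.P, L, pb.clopen.2, hLclopen.2, hxB, hyL, fun s hs u hu => ?_⟩
    rw [crossSel_lt_iff]
    exact ⟨Or.inr (Or.inr (Or.inr ⟨hs, hu⟩)), fun hh => hd s (hLsub (hh ▸ hu)) hs⟩

/-! Interval identities. -/

include hcompl in
theorem crossSel_ioA {a : X} (ha : a ∈ pa.P) :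
    {y | pa.le y a ∧ y ≠ a} = {y | (crossSel pa pb L hcompl hLsub).lt y a} ∩ pa.P := by
  have hd := disjAB pa pb hcompl
  ext y
  simp only [mem_setOf_eq, mem_inter_iff, crossSel_lt_iff]
  constructor
  · rintro ⟨h, hne⟩
    exact ⟨⟨Or.inl h, hne⟩, (pa.le_mem _ _ h).1⟩
  · rintro ⟨⟨h | h | ⟨⟨hyA, hyL⟩, haB⟩ | ⟨hyB, haL⟩, hne⟩, hyA'⟩
    · exact ⟨h, hne⟩
    · exact ((hd y hyA' (pb.le_mem _ _ h).1)).elim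
    · exact (hd a ha haB).elim
    · exact (hd y hyA' hyB).elim

include hcompl in
theorem crossSel_oiA {a : X} (ha : a ∈ pa.P) :
    {y | pa.le a y ∧ y ≠ a} = {y | (crossSel pa pb L hcompl hLsub).lt a y} ∩ pa.P := by
  have hd := disjAB pa pb hcompl
  ext y
  simp only [mem_setOf_eq, mem_inter_iff, crossSel_lt_iff]
  constructor
  · rintro ⟨h, hne⟩
    exact ⟨⟨Or.inl h, fun hh => hne hh.symm⟩, (pa.le_mem _ _ h).2⟩
  · rintro ⟨⟨h | h | ⟨⟨haA, haL⟩, hyB⟩ | ⟨haB, hyL⟩, hne⟩, hyA'⟩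
    · exact ⟨h, fun hh => hne hh.symm⟩
    · exact ((hd a ha (pb.le_mem _ _ h).1)).elim
    · exact (hd y hyA' hyB).elim
    · exact (hd a ha haB).elim

include hcompl in
theorem crossSel_ioB {a : X} (ha : a ∈ pb.P) :
    {y | pb.le y a ∧ y ≠ a} = {y | (crossSel pa pb L hcompl hLsub).lt y a} ∩ pb.P := by
  have hd := disjAB pa pb hcompl
  ext y
  simp only [mem_setOf_eq, mem_inter_iff, crossSel_lt_iff]
  constructor
  · rintro ⟨h, hne⟩
    exact ⟨⟨Or.inr (Or.inl h), hne⟩, (pb.le_mem _ _ h).1⟩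
  · rintro ⟨⟨h | h | ⟨⟨hyA, hyL⟩, haB⟩ | ⟨hyB, haL⟩, hne⟩, hyB'⟩
    · exact (hd y (pa.le_mem _ _ h).1 hyB').elim
    · exact ⟨h, hne⟩
    · exact (hd y hyA hyB').elim
    · exact (hd a (hLsub haL) ha).elim

include hcompl in
theorem crossSel_oiB {a : X} (ha : a ∈ pb.P) :
    {y | pb.le a y ∧ y ≠ a} = {y | (crossSel pa pb L hcompl hLsub).lt a y} ∩ pb.P := by
  have hd := disjAB pa pb hcompl
  ext y
  simp only [mem_setOf_eq, mem_inter_iff, crossSel_lt_iff]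
  constructor
  · rintro ⟨h, hne⟩
    exact ⟨⟨Or.inr (Or.inl h), fun hh => hne hh.symm⟩, (pb.le_mem _ _ h).2⟩
  · rintro ⟨⟨h | h | ⟨⟨haA, haL⟩, hyB⟩ | ⟨haB, hyL⟩, hne⟩, hyB'⟩
    · exact (hd y (pa.le_mem _ _ h).2 hyB').elim
    · exact ⟨h, fun hh => hne hh.symm⟩
    · exact (hd a haA ha).elim
    · exact (hd y (hLsub hyL) hyB').elim

/-- The main generation lemma: if the two pieces are open in `supSelTop Sig`,
then `supSelTop Sig` recovers the original topology. -/
theorem crossSel_gen (Sig : Set (WeakSelection X))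
    (hmem : crossSel pa pb L hcompl hLsub ∈ Sig)
    (hcont : ∀ σ ∈ Sig, σ.Continuous)
    (hAτ : IsOpen[supSelTop Sig] pa.P) (hBτ : IsOpen[supSelTop Sig] pb.P) :
    supSelTop Sig = t := by
  apply le_antisymm
  · apply supSelTop_le_t
    intro W hW
    have hW' : W ∩ pa.P ∪ W ∩ pb.P = W := by
      rw [← Set.inter_union_distrib_left, hcompl, Set.union_compl_self, Set.inter_univ]
    have h1 : IsOpen[supSelTop Sig] (W ∩ pa.P) := by
      apply pa.gen1 (supSelTop Sig) hAτ _ _ W hW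
      · intro a ha
        rw [crossSel_ioA pa pb L hcompl hLsub ha]
        exact (supSelTop Sig).isOpen_inter _ _
          (isOpen_supSelTop_of_mem hmem (isOpen_selTop_left _ a)) hAτ
      · intro a ha
        rw [crossSel_oiA pa pb L hcompl hLsub ha]
        exact (supSelTop Sig).isOpen_inter _ _
          (isOpen_supSelTop_of_mem hmem (isOpen_selTop_right _ a)) hAτ
    have h2 : IsOpen[supSelTop Sig] (W ∩ pb.P) := by
      apply pb.gen1 (supSelTop Sig) hBτ _ _ W hW
      · intro a ha
        rw [crossSel_ioB pa pb L hcompl hLsub ha]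
        exact (supSelTop Sig).isOpen_inter _ _
          (isOpen_supSelTop_of_mem hmem (isOpen_selTop_left _ a)) hBτ
      · intro a ha
        rw [crossSel_oiB pa pb L hcompl hLsub ha]
        exact (supSelTop Sig).isOpen_inter _ _
          (isOpen_supSelTop_of_mem hmem (isOpen_selTop_right _ a)) hBτ
    rw [← hW']
    exact @IsOpen.union X _ _ (supSelTop Sig) h1 h2
  · exact t_le_supSelTop hcont

end CrossSel2


/-! ### The constructions -/

section Constructions

open Set TopologicalSpace

variable {X : Type*} [t : TopologicalSpace X] (pa pb : OPiece X)
  (hcompl : pb.P = pa.Pᶜ)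

include hcompl in
theorem exists_sig_two :
    ∃ Sig : Set (WeakSelection X), (∀ σ ∈ Sig, σ.Continuous) ∧ supSelTop Sig = t ∧
      Cardinal.mk ↥Sig ≤ 2 := by
  have hd := disjAB pa pb hcompl
  have hAuniv : pb.P = ∅ → pa.P = univ := by
    intro h
    have := congrArg compl hcompl
    rw [compl_compl] at this
    rw [← this, h, compl_empty]
  have hBuniv : pa.P = ∅ → pb.P = univ := by
    intro h
    rw [hcompl, h, compl_empty]
  set σ₁ := crossSel pa pb ∅ hcompl (empty_subset _) with hσ₁
  set σ₂ := crossSel pa pb pa.P hcompl (subset_refl _) with hσ₂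
  refine ⟨{σ₁, σ₂}, ?_, ?_, ?_⟩
  · rintro σ (rfl | rfl)
    · exact crossSel_continuous pa pb ∅ hcompl (empty_subset _) isClopen_empty
    · exact crossSel_continuous pa pb pa.P hcompl (subset_refl _) pa.clopen
  · apply crossSel_gen pa pb ∅ hcompl (empty_subset _) _ (mem_insert _ _)
    · rintro σ (rfl | rfl)
      · exact crossSel_continuous pa pb ∅ hcompl (empty_subset _) isClopen_empty
      · exact crossSel_continuous pa pb pa.P hcompl (subset_refl _) pa.clopen
    · -- pa.P is open in the sup topology
      rcases eq_empty_or_nonempty pb.P with hB | ⟨b, hb⟩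
      · have huniv := (supSelTop ({σ₁, σ₂} : Set (WeakSelection X))).isOpen_univ
        rwa [← hAuniv hB] at huniv
      · have hval : pa.P = {y | σ₁.lt y b} ∩ {y | σ₂.lt b y} := by
          ext y
          simp only [mem_inter_iff, mem_setOf_eq, hσ₁, hσ₂, crossSel_lt_iff]
          constructor
          · intro hy
            exact ⟨⟨Or.inr (Or.inr (Or.inl ⟨⟨hy, notMem_empty y⟩, hb⟩)),
                fun hh => hd y hy (hh ▸ hb)⟩,
              ⟨Or.inr (Or.inr (Or.inr ⟨hb, hy⟩)), fun hh => hd y hy (hh ▸ hb)⟩⟩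
          · rintro ⟨⟨h1 | h1 | h1 | h1, hne1⟩, ⟨h2, hne2⟩⟩
            · exact (hd b (pa.le_mem _ _ h1).2 hb).elim
            · -- y ∈ pb.P; derive contradiction from h2
              have hyB : y ∈ pb.P := (pb.le_mem _ _ h1).1
              rcases h2 with h2 | h2 | h2 | h2
              · exact ((hd b (pa.le_mem _ _ h2).1 hb)).elim
              · exact (hne1 (pb.antisymm _ _ h1 h2)).elim
              · exact (hd b h2.1.1 hb).elim
              · exact (hd y h2.2 hyB).elim
            · exact h1.1.1
            · exact (h1.2).elim
        have hint := (supSelTop ({σ₁, σ₂} : Set (WeakSelection X))).isOpen_inter _ _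
          (isOpen_supSelTop_of_mem (mem_insert _ _) (isOpen_selTop_left σ₁ b))
          (isOpen_supSelTop_of_mem (mem_insert_of_mem _ (mem_singleton _))
            (isOpen_selTop_right σ₂ b))
        rwa [← hval] at hint
    · -- pb.P is open in the sup topology
      rcases eq_empty_or_nonempty pa.P with hA | ⟨a, ha⟩
      · have huniv := (supSelTop ({σ₁, σ₂} : Set (WeakSelection X))).isOpen_univ
        rwa [← hBuniv hA] at huniv
      · have hval : pb.P = {y | σ₂.lt y a} ∩ {y | σ₁.lt a y} := by
          ext y
          simp only [mem_inter_iff, mem_setOf_eq, hσ₁, hσ₂, crossSel_lt_iff]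
          constructor
          · intro hy
            exact ⟨⟨Or.inr (Or.inr (Or.inr ⟨hy, ha⟩)), fun hh => hd y (hh ▸ ha) hy⟩,
              ⟨Or.inr (Or.inr (Or.inl ⟨⟨ha, notMem_empty a⟩, hy⟩)),
                fun hh => hd a ha (hh ▸ hy)⟩⟩
          · rintro ⟨⟨h1 | h1 | h1 | h1, hne1⟩, ⟨h2, hne2⟩⟩
            · -- y ∈ pa.P; derive contradiction from h2
              have hyA : y ∈ pa.P := (pa.le_mem _ _ h1).1
              rcases h2 with h2 | h2 | h2 | h2
              · exact (hne2 (pa.antisymm _ _ h2 h1)).elim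
              · exact (hd a ha (pb.le_mem _ _ h2).1).elim
              · exact (hd y hyA h2.2).elim
              · exact (hd a ha h2.1).elim
            · exact (hd a ha (pb.le_mem _ _ h1).2).elim
            · exact (h1.1.2 h1.1.1).elim
            · exact h1.1
        have hint := (supSelTop ({σ₁, σ₂} : Set (WeakSelection X))).isOpen_inter _ _
          (isOpen_supSelTop_of_mem (mem_insert_of_mem _ (mem_singleton _))
            (isOpen_selTop_left σ₂ a))
          (isOpen_supSelTop_of_mem (mem_insert _ _) (isOpen_selTop_right σ₁ a))
        rwa [← hval] at hint
  · apply le_trans Cardinal.mk_insert_le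
    rw [Cardinal.mk_singleton]
    norm_num

include hcompl in
theorem exists_sig_one_empty (h : pa.P = ∅ ∨ pb.P = ∅) :
    ∃ Sig : Set (WeakSelection X), (∀ σ ∈ Sig, σ.Continuous) ∧ supSelTop Sig = t ∧
      Cardinal.mk ↥Sig = 1 := by
  set σ₁ := crossSel pa pb ∅ hcompl (empty_subset _) with hσ₁
  have hcont : ∀ σ ∈ ({σ₁} : Set (WeakSelection X)), σ.Continuous := by
    rintro σ rfl
    exact crossSel_continuous pa pb ∅ hcompl (empty_subset _) isClopen_empty
  refine ⟨{σ₁}, hcont, ?_, Cardinal.mk_singleton _⟩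
  apply crossSel_gen pa pb ∅ hcompl (empty_subset _) _ (mem_singleton _) hcont
  · rcases h with h | h
    · have hemp := @isOpen_empty X (supSelTop ({σ₁} : Set (WeakSelection X)))
      rwa [← h] at hemp
    · have hAuniv : pa.P = univ := by
        have := congrArg compl hcompl
        rw [compl_compl] at this
        rw [← this, h, compl_empty]
      have huniv := (supSelTop ({σ₁} : Set (WeakSelection X))).isOpen_univ
      rwa [← hAuniv] at huniv
  · rcases h with h | h
    · have hBuniv : pb.P = univ := by rw [hcompl, h, compl_empty]
      have huniv := (supSelTop ({σ₁} : Set (WeakSelection X))).isOpen_univ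
      rwa [← hBuniv] at huniv
    · have hemp := @isOpen_empty X (supSelTop ({σ₁} : Set (WeakSelection X)))
      rwa [← h] at hemp

end Constructions


section Construction3

open Set TopologicalSpace

variable {X : Type*} [t : TopologicalSpace X] (pa pb : OPiece X) (L : Set X)
  (hcompl : pb.P = pa.Pᶜ) (hLsub : L ⊆ pa.P) (hLclopen : IsClopen L)
  (hcompat : ∀ x ∈ L, ∀ y ∈ pa.P \ L, pa.le x y)

include hcompl hLsub hLclopen hcompat in
theorem exists_sig_one_split (hLne : L.Nonempty) (hALne : (pa.P \ L).Nonempty)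
    (hBne : pb.P.Nonempty) :
    ∃ Sig : Set (WeakSelection X), (∀ σ ∈ Sig, σ.Continuous) ∧ supSelTop Sig = t ∧
      Cardinal.mk ↥Sig = 1 := by
  have hd := disjAB pa pb hcompl
  obtain ⟨a₁, ha₁⟩ := hLne
  obtain ⟨a₂, ha₂⟩ := hALne
  obtain ⟨b, hb⟩ := hBne
  set σ := crossSel pa pb L hcompl hLsub with hσ
  have hcont : ∀ σ' ∈ ({σ} : Set (WeakSelection X)), σ'.Continuous := by
    rintro σ' rfl
    exact crossSel_continuous pa pb L hcompl hLsub hLclopen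
  refine ⟨{σ}, hcont, ?_, Cardinal.mk_singleton _⟩
  have hLτ : IsOpen[supSelTop ({σ} : Set (WeakSelection X))] L := by
    have hval : L = {y | σ.lt b y} ∩ {y | σ.lt y a₂} := by
      ext y
      simp only [mem_inter_iff, mem_setOf_eq, hσ, crossSel_lt_iff]
      constructor
      · intro hy
        refine ⟨⟨Or.inr (Or.inr (Or.inr ⟨hb, hy⟩)),
            fun hh => hd y (hLsub hy) (by rw [← hh]; exact hb)⟩,
          ⟨Or.inl (hcompat y hy a₂ ha₂), fun hh => ha₂.2 (hh ▸ hy)⟩⟩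
      · rintro ⟨⟨h1 | h1 | h1 | h1, hne1⟩, ⟨h2, hne2⟩⟩
        · exact (hd b (pa.le_mem _ _ h1).1 hb).elim
        · have hyB : y ∈ pb.P := (pb.le_mem _ _ h1).2
          rcases h2 with h2 | h2 | h2 | h2
          · exact (hd y (pa.le_mem _ _ h2).1 hyB).elim
          · exact (hd a₂ ha₂.1 (pb.le_mem _ _ h2).2).elim
          · exact (hd a₂ ha₂.1 h2.2).elim
          · exact (ha₂.2 h2.2).elim
        · exact (hd b h1.1.1 hb).elim
        · exact h1.2
    have hint := (supSelTop ({σ} : Set (WeakSelection X))).isOpen_inter _ _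
      (isOpen_supSelTop_of_mem (mem_singleton _) (isOpen_selTop_right σ b))
      (isOpen_supSelTop_of_mem (mem_singleton _) (isOpen_selTop_left σ a₂))
    rwa [← hval] at hint
  have hALτ : IsOpen[supSelTop ({σ} : Set (WeakSelection X))] (pa.P \ L) := by
    have hval : pa.P \ L = {y | σ.lt a₁ y} ∩ {y | σ.lt y b} := by
      ext y
      simp only [mem_inter_iff, mem_setOf_eq, hσ, crossSel_lt_iff]
      constructor
      · intro hy
        refine ⟨⟨Or.inl (hcompat a₁ ha₁ y hy), fun hh => hy.2 (hh ▸ ha₁)⟩,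
          ⟨Or.inr (Or.inr (Or.inl ⟨hy, hb⟩)), fun hh => hd y hy.1 (by rw [hh]; exact hb)⟩⟩
      · rintro ⟨⟨h1, hne1⟩, ⟨h2 | h2 | h2 | h2, hne2⟩⟩
        · exact (hd b (pa.le_mem _ _ h2).2 hb).elim
        · have hyB : y ∈ pb.P := (pb.le_mem _ _ h2).1
          rcases h1 with h1 | h1 | h1 | h1
          · exact (hd y (pa.le_mem _ _ h1).2 hyB).elim
          · exact (hd a₁ (hLsub ha₁) (pb.le_mem _ _ h1).1).elim
          · exact (h1.1.2 ha₁).elim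
          · exact (hd a₁ (hLsub ha₁) h1.1).elim
        · exact h2.1
        · exact (hd b (hLsub h2.2) hb).elim
    have hint := (supSelTop ({σ} : Set (WeakSelection X))).isOpen_inter _ _
      (isOpen_supSelTop_of_mem (mem_singleton _) (isOpen_selTop_right σ a₁))
      (isOpen_supSelTop_of_mem (mem_singleton _) (isOpen_selTop_left σ b))
    rwa [← hval] at hint
  have hAτ : IsOpen[supSelTop ({σ} : Set (WeakSelection X))] pa.P := by
    have hu := @IsOpen.union X _ _ (supSelTop ({σ} : Set (WeakSelection X))) hLτ hALτ
    rwa [Set.union_diff_cancel hLsub] at hu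
  have hBτ : IsOpen[supSelTop ({σ} : Set (WeakSelection X))] pb.P := by
    have hval : pb.P = {y | σ.lt a₂ y} ∩ {y | σ.lt y a₁} := by
      ext y
      simp only [mem_inter_iff, mem_setOf_eq, hσ, crossSel_lt_iff]
      constructor
      · intro hy
        refine ⟨⟨Or.inr (Or.inr (Or.inl ⟨ha₂, hy⟩)),
            fun hh => hd a₂ ha₂.1 (by rw [hh]; exact hy)⟩,
          ⟨Or.inr (Or.inr (Or.inr ⟨hy, ha₁⟩)),
            fun hh => hd y (by rw [hh]; exact hLsub ha₁) hy⟩⟩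
      · rintro ⟨⟨h1 | h1 | h1 | h1, hne1⟩, ⟨h2, hne2⟩⟩
        · have hyA : y ∈ pa.P := (pa.le_mem _ _ h1).2
          rcases h2 with h2 | h2 | h2 | h2
          · by_cases hyL : y ∈ L
            · exact (hne1 (pa.antisymm _ _ h1 (hcompat y hyL a₂ ha₂))).elim
            · exact (hne2 (pa.antisymm _ _ h2 (hcompat a₁ ha₁ y ⟨hyA, hyL⟩))).elim
          · exact (hd a₁ (hLsub ha₁) (pb.le_mem _ _ h2).2).elim
          · exact (hd a₁ (hLsub ha₁) h2.2).elim
          · exact (hd y hyA h2.1).elim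
        · exact (hd a₂ ha₂.1 (pb.le_mem _ _ h1).1).elim
        · exact h1.2
        · exact (hd a₂ ha₂.1 h1.1).elim
    have hint := (supSelTop ({σ} : Set (WeakSelection X))).isOpen_inter _ _
      (isOpen_supSelTop_of_mem (mem_singleton _) (isOpen_selTop_right σ a₂))
      (isOpen_supSelTop_of_mem (mem_singleton _) (isOpen_selTop_left σ a₁))
    rwa [← hval] at hint
  exact crossSel_gen pa pb L hcompl hLsub _ (mem_singleton _) hcont hAτ hBτ

end Construction3



/-! ### The orderable construction -/

section OrderableConstruction

open Set TopologicalSpace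

variable {X : Type*} [t : TopologicalSpace X]

theorem exists_sig_one_orderable (h : IsOrderableTop X) :
    ∃ Sig : Set (WeakSelection X), (∀ σ ∈ Sig, σ.Continuous) ∧ supSelTop Sig = t ∧
      Cardinal.mk ↥Sig = 1 := by
  obtain ⟨l, hl⟩ := h
  letI := l
  haveI : OrderTopology X := by
    constructor
    rw [hl]
    congr 1
    ext s
    constructor
    · rintro ⟨a, h | h⟩
      · exact ⟨a, Or.inr h⟩
      · exact ⟨a, Or.inl h⟩
    · rintro ⟨a, h | h⟩
      · exact ⟨a, Or.inr h⟩
      · exact ⟨a, Or.inl h⟩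
  set σ := selOfRel (fun x y : X => l.le x y) (fun x y => le_total x y)
    (fun x y h h' => le_antisymm h h') with hσ
  have hlt : ∀ x y : X, σ.lt x y ↔ x < y := by
    intro x y
    rw [hσ, selOfRel_lt_iff]
    exact (lt_iff_le_and_ne).symm
  have hcont : σ.Continuous := by
    intro x y hxy
    rw [hlt] at hxy
    obtain ⟨U, V, hU, hV, hxU, hyV, hsep⟩ := orderSep hxy
    exact ⟨U, V, hU, hV, hxU, hyV, fun s hs u hu => (hlt s u).2 (hsep s hs u hu)⟩
  refine ⟨{σ}, by rintro σ' rfl; exact hcont, ?_, Cardinal.mk_singleton _⟩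
  rw [supSelTop_singleton]
  apply le_antisymm
  · rw [hl]
    apply le_generateFrom
    rintro s ⟨a, rfl | rfl⟩
    · have hset : {x : X | l.lt x a} = {y | σ.lt y a} := by
        ext w
        simp only [mem_setOf_eq]
        rw [hlt]
      rw [hset]
      exact isOpen_selTop_left σ a
    · have hset : {x : X | l.lt a x} = {y | σ.lt a y} := by
        ext w
        simp only [mem_setOf_eq]
        rw [hlt]
      rw [hset]
      exact isOpen_selTop_right σ a
  · exact t_le_selTop hcont

end OrderableConstruction

/-! ### Converse: a single generating selection forces orderability -/

section Converse

open Set TopologicalSpace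

theorem card_le_two_pigeon {α : Type*} (h : Cardinal.mk α ≤ 2) (a b c : α) :
    a = b ∨ a = c ∨ b = c := by
  have h2 : (2 : Cardinal) = Cardinal.mk (ULift.{_} Bool) := by
    simp [Cardinal.mk_fintype]
  rw [h2, Cardinal.le_def] at h
  obtain ⟨e⟩ := h
  have key : (e a).down = (e b).down ∨ (e a).down = (e c).down ∨ (e b).down = (e c).down := by
    rcases (e a).down <;> rcases (e b).down <;> rcases (e c).down <;> simp
  rcases key with hk | hk | hk
  · exact Or.inl (e.injective (ULift.ext _ _ hk))
  · exact Or.inr (Or.inl (e.injective (ULift.ext _ _ hk)))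
  · exact Or.inr (Or.inr (e.injective (ULift.ext _ _ hk)))

variable {X : Type*} [t : TopologicalSpace X]

theorem cc_le_two_of_pieces {A : Set X} (h1 : IsPreconnected A) (h2 : IsPreconnected Aᶜ) :
    Cardinal.mk (ConnectedComponents X) ≤ 2 := by
  classical
  rcases isEmpty_or_nonempty X with hX | ⟨⟨x0⟩⟩
  · haveI : IsEmpty (ConnectedComponents X) := by
      constructor
      intro w
      obtain ⟨x, -⟩ := ConnectedComponents.surjective_coe w
      exact IsEmpty.false x
    rw [Cardinal.mk_eq_zero]
    exact zero_le
  · have hsame : ∀ (S : Set X), IsPreconnected S → ∀ x ∈ S, ∀ y ∈ S,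
        (x : ConnectedComponents X) = (y : ConnectedComponents X) := by
      intro S hS x hx y hy
      rw [ConnectedComponents.coe_eq_coe]
      exact connectedComponent_eq (hS.subset_connectedComponent hx hy)
    set f : ULift.{_} Bool → ConnectedComponents X := fun b =>
      if b.down then
        (if h : ∃ a, a ∈ A then ((h.choose : X) : ConnectedComponents X) else ((x0 : X) : _))
      else
        (if h : ∃ a, a ∈ Aᶜ then ((h.choose : X) : ConnectedComponents X) else ((x0 : X) : _))
      with hf
    have hsurj : Function.Surjective f := by
      intro w
      obtain ⟨x, rfl⟩ := ConnectedComponents.surjective_coe w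
      by_cases hx : x ∈ A
      · refine ⟨ULift.up true, ?_⟩
        have hex : ∃ a, a ∈ A := ⟨x, hx⟩
        simp only [hf, ULift.up_down, if_true, dif_pos hex]
        exact hsame A h1 _ hex.choose_spec x hx
      · refine ⟨ULift.up false, ?_⟩
        have hex : ∃ a, a ∈ Aᶜ := ⟨x, hx⟩
        simp only [hf, ULift.up_down, if_false, dif_pos hex]
        exact hsame Aᶜ h2 _ hex.choose_spec x hx
    have := Cardinal.mk_le_of_surjective hsurj
    have hbool : Cardinal.mk (ULift.{_} Bool) = 2 := by simp [Cardinal.mk_fintype]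
    rw [hbool] at this
    exact this

theorem orderable_of_selTop (σ : WeakSelection X) (hcont : σ.Continuous)
    (hst : σ.selTop = t) (hcc : Cardinal.mk (ConnectedComponents X) ≤ 2) :
    IsOrderableTop X := by
  have aux : ∀ x y z : X, σ.lt x y → σ.lt y z → σ.lt z x →
      connectedComponent x = connectedComponent y → False := by
    intro x y z h1 h2 h3 hxy
    by_cases e2 : connectedComponent z = connectedComponent x
    · refine σ.no_cycle hcont (isPreconnected_connectedComponent (x := x)) ?_ ?_ ?_ h1 h2 h3
      · exact mem_connectedComponent
      · rw [hxy]; exact mem_connectedComponent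
      · rw [← e2]; exact mem_connectedComponent
    · have hdisj : ∀ c ∈ connectedComponent x, ∀ d ∈ connectedComponent z, c ≠ d := by
        intro c hc d hd hcd
        have hcx : connectedComponent x = connectedComponent c := connectedComponent_eq hc
        have hdz : connectedComponent z = connectedComponent d := connectedComponent_eq hd
        exact e2 (by rw [hdz, ← hcd, ← hcx])
      have hall := σ.cross_const hcont isPreconnected_connectedComponent
        isPreconnected_connectedComponent hdisj
        (show y ∈ connectedComponent x by rw [hxy]; exact mem_connectedComponent)
        (mem_connectedComponent (x := z)) h2
      exact WeakSelection.lt_asymm'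
        (hall x mem_connectedComponent z mem_connectedComponent) h3
  have hnc : ∀ x y z : X, σ.lt x y → σ.lt y z → σ.lt z x → False := by
    intro x y z h1 h2 h3
    have htri := card_le_two_pigeon hcc (x : ConnectedComponents X) y z
    simp only [ConnectedComponents.coe_eq_coe] at htri
    rcases htri with he | he | he
    · exact aux x y z h1 h2 h3 he
    · exact aux z x y h3 h1 h2 he.symm
    · exact aux y z x h2 h3 h1 he
  have htrans : ∀ a b c : X, σ.le a b → σ.le b c → σ.le a c := by
    intro a b c hab hbc
    by_cases e1 : a = b
    · rwa [e1]
    by_cases e2 : b = c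
    · rwa [← e2]
    by_cases e3 : a = c
    · rw [e3]; exact σ.le_self c
    by_contra hac
    have hca : σ.le c a := (σ.le_total' a c).resolve_left hac
    exact hnc a b c ⟨hab, e1⟩ ⟨hbc, e2⟩ ⟨hca, fun h => e3 h.symm⟩
  classical
  let lin : LinearOrder X :=
    { le := σ.le
      lt := σ.lt
      le_refl := σ.le_self
      le_trans := htrans
      le_antisymm := fun a b h h' => WeakSelection.eq_of_le_le h h'
      le_total := σ.le_total'
      lt_iff_le_not_ge := by
        intro a b
        constructor
        · intro h
          exact ⟨h.1, fun h' => h.2 (WeakSelection.eq_of_le_le h.1 h')⟩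
        · rintro ⟨h, h'⟩
          exact ⟨h, fun e => h' (e ▸ σ.le_self a)⟩
      toDecidableLE := Classical.decRel _ }
  exact ⟨lin, hst ▸ rfl⟩

theorem subsingleton_orderable [Subsingleton X] : IsOrderableTop X := by
  classical
  let lin : LinearOrder X :=
    { le := fun _ _ => True
      lt := fun _ _ => False
      le_refl := fun _ => trivial
      le_trans := fun _ _ _ _ _ => trivial
      le_antisymm := fun a b _ _ => Subsingleton.elim a b
      le_total := fun _ _ => Or.inl trivial
      lt_iff_le_not_ge := by simp
      toDecidableLE := fun _ _ => isTrue trivial }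
  refine ⟨lin, ?_⟩
  apply le_antisymm
  · apply le_generateFrom
    rintro s ⟨a, rfl | rfl⟩ <;> exact isOpen_empty
  · rw [TopologicalSpace.le_def]
    intro U hU
    rcases U.eq_empty_or_nonempty with rfl | ⟨x, hx⟩
    · exact @isOpen_empty X (TopologicalSpace.generateFrom _)
    · have : U = univ := eq_univ_of_forall (fun y => Subsingleton.elim x y ▸ hx)
      rw [this]
      exact @isOpen_univ X (TopologicalSpace.generateFrom _)

theorem subsingleton_of_empty_sig [T2Space X]
    (h : supSelTop (∅ : Set (WeakSelection X)) = t) : Subsingleton X := by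
  have hgen : supSelTop (∅ : Set (WeakSelection X)) =
      TopologicalSpace.generateFrom (∅ : Set (Set X)) := by
    unfold supSelTop
    congr 1
    simp
  have htrivial : ∀ s : Set X, IsOpen[TopologicalSpace.generateFrom ∅] s →
      s = ∅ ∨ s = univ := by
    intro s hs
    induction hs with
    | basic u hu => exact hu.elim
    | univ => exact Or.inr rfl
    | inter u v hu hv ihu ihv =>
      rcases ihu with rfl | rfl
      · exact Or.inl (empty_inter _)
      · rcases ihv with rfl | rfl
        · exact Or.inl (inter_empty _)
        · exact Or.inr (univ_inter _)
    | sUnion T hT ih =>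
      by_cases huniv : univ ∈ T
      · exact Or.inr (Subset.antisymm (subset_univ _) (fun x _ => ⟨univ, huniv, trivial⟩))
      · refine Or.inl (eq_empty_iff_forall_notMem.2 ?_)
        rintro x ⟨u, hu, hxu⟩
        rcases ih u hu with rfl | rfl
        · exact hxu
        · exact huniv hu
  constructor
  intro x y
  by_contra hne
  obtain ⟨U, V, hU, hV, hxU, hyV, hUV⟩ := t2_separation hne
  have hU' : IsOpen[TopologicalSpace.generateFrom (∅ : Set (Set X))] U := by
    rw [← hgen, h]
    exact hU
  rcases htrivial U hU' with rfl | rfl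
  · exact hxU
  · exact (disjoint_left.1 hUV (mem_univ y) hyV).elim

end Converse


/-! ### Main theorem -/

/-- If `X` is a semi-orderable Hausdorff space, then `cws X ≤ 2`; moreover
`cws X = 2` iff `X` is not orderable and has at most two connected components. -/
theorem stmt0 {X : Type*} [t : TopologicalSpace X] [T2Space X]
    (hX : SemiOrderable X) :
    cws X ≤ 2 ∧
      (cws X = 2 ↔ ¬ IsOrderableTop X ∧ Cardinal.mk (ConnectedComponents X) ≤ 2) := by
  obtain ⟨A, hA, hOA, hOB⟩ := hX
  obtain ⟨lA, hlA⟩ := hOA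
  obtain ⟨lB, hlB⟩ := hOB
  set pa := OPiece.ofOrd A lA hA hlA with hpa
  set pb := OPiece.ofOrd Aᶜ lB hA.compl hlB with hpb
  have hcompl : pb.P = pa.Pᶜ := rfl
  have part1 : cws X ≤ 2 := by
    obtain ⟨Sig, h1, h2, h3⟩ := exists_sig_two pa pb hcompl
    exact (cws_le_of_gen h1 h2).trans h3
  have hwit : {c : Cardinal | ∃ Sig : Set (WeakSelection X),
      (∀ σ ∈ Sig, σ.Continuous) ∧ supSelTop Sig = t ∧ Cardinal.mk ↥Sig = c}.Nonempty := by
    obtain ⟨Sig, h1, h2, h3⟩ := exists_sig_two pa pb hcompl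
    exact ⟨_, Sig, h1, h2, rfl⟩
  have hord_le : IsOrderableTop X → cws X ≤ 1 := by
    intro h
    obtain ⟨Sig, h1, h2, h3⟩ := exists_sig_one_orderable h
    exact (cws_le_of_gen h1 h2).trans h3.le
  have hcc_le : ¬ (Cardinal.mk (ConnectedComponents X) ≤ 2) → cws X ≤ 1 := by
    intro hcc
    have hsplit : ¬ IsPreconnected A ∨ ¬ IsPreconnected (Aᶜ) := by
      by_contra hcon
      rw [not_or, not_not, not_not] at hcon
      exact hcc (cc_le_two_of_pieces hcon.1 hcon.2)
    rcases hsplit with hnc | hnc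
    · obtain ⟨L, hLclopen, hLsub, hLne, hALne, hcompat⟩ := piece_split A lA hA hlA hnc
      rcases Set.eq_empty_or_nonempty (Aᶜ) with hB | hBne
      · obtain ⟨Sig, h1, h2, h3⟩ := exists_sig_one_empty pa pb hcompl (Or.inr hB)
        exact (cws_le_of_gen h1 h2).trans h3.le
      · obtain ⟨Sig, h1, h2, h3⟩ := exists_sig_one_split pa pb L hcompl hLsub hLclopen
          hcompat hLne hALne hBne
        exact (cws_le_of_gen h1 h2).trans h3.le
    · obtain ⟨L, hLclopen, hLsub, hLne, hALne, hcompat⟩ :=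
        piece_split (Aᶜ) lB hA.compl hlB hnc
      have hcompl' : pa.P = pb.Pᶜ := (compl_compl A).symm
      rcases Set.eq_empty_or_nonempty A with hAe | hAne
      · obtain ⟨Sig, h1, h2, h3⟩ := exists_sig_one_empty pb pa hcompl' (Or.inr hAe)
        exact (cws_le_of_gen h1 h2).trans h3.le
      · obtain ⟨Sig, h1, h2, h3⟩ := exists_sig_one_split pb pa L hcompl' hLsub hLclopen
          hcompat hLne hALne hAne
        exact (cws_le_of_gen h1 h2).trans h3.le
  have h21 : ¬ ((2 : Cardinal) ≤ 1) := by norm_num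
  refine ⟨part1, ?_, ?_⟩
  · intro h2
    constructor
    · intro hord
      have hle := hord_le hord
      rw [h2] at hle
      exact absurd hle h21
    · by_contra hcc
      have hle := hcc_le hcc
      rw [h2] at hle
      exact absurd hle h21
  · rintro ⟨hno, hcc⟩
    refine le_antisymm part1 ?_
    apply le_csInf hwit
    rintro c ⟨Sig, hcont, hsup, rfl⟩
    by_contra hlt
    have hss : Sig.Subsingleton := by
      by_contra hns
      rw [Set.not_subsingleton_iff] at hns
      obtain ⟨σ₁, hσ₁, σ₂, hσ₂, hne⟩ := hns
      exact hlt (Cardinal.two_le_iff.2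
        ⟨⟨σ₁, hσ₁⟩, ⟨σ₂, hσ₂⟩, fun h => hne (congrArg Subtype.val h)⟩)
    rcases hss.eq_empty_or_singleton with rfl | ⟨σ, rfl⟩
    · haveI := subsingleton_of_empty_sig hsup
      exact hno subsingleton_orderable
    · have hst : σ.selTop = t := by rw [← supSelTop_singleton]; exact hsup
      exact hno (orderable_of_selTop σ (hcont σ rfl) hst hcc)
end

section
/- Let P be a partition of a set X, let Q ⊆ P be a three-element subfamily, and let σ be a weak selection for P such that Q is σ-circular (i.e., Q = {Q,R,S} with Q <_σ R <_σ S <_σ Q) and, for every P ∈ P with P ∉ Q, either P <_σ Q' for all Q' ∈ Q or Q' <_σ P for all Q' ∈ Q. Then for any choice of weak selections h_P for each P ∈ P, the following sets are open in the selection topology T_{σ*h} on X: the set ⋃{P ∈ P : P <_σ Q' for all Q' ∈ Q}, every member of Q, and the set ⋃{P ∈ P : Q' <_σ P for all Q' ∈ Q}. -/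
open Topology

/-- `A <_g B` for subsets: `a <_g b` for all `a ∈ A`, `b ∈ B`. -/
def setLT {X : Type*} (g : WeakSelection X) (A B : Set X) : Prop :=
  ∀ a ∈ A, ∀ b ∈ B, g.lt a b

/-- `g` is the `P`-invariant weak selection `σ * h` determined by a weak
selection `σ` for the partition `P` (with block map `blk`) and weak selections
`h p` for each block `p ∈ P`: on points of distinct blocks `g` is governed by
`σ`, and within a block `p` it agrees with `h p`. -/
def IsStar {X : Type*} (P : Set (Set X)) (blk : X → Set X) (hblk : ∀ x, blk x ∈ P)
    (σ : WeakSelection ↥P) (h : ∀ p : ↥P, WeakSelection ↥(p : Set X))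
    (g : WeakSelection X) : Prop :=
  (∀ x y : X, blk x ≠ blk y →
      (g.lt x y ↔ σ.lt ⟨blk x, hblk x⟩ ⟨blk y, hblk y⟩)) ∧
  (∀ (p : ↥P) (x y : ↥(p : Set X)), blk ↑x = ↑p → blk ↑y = ↑p →
      g.toFun ↑x ↑y = ↑((h p).toFun x y))

/-- Proposition 2.2: if `Q ⊆ P` is a `σ`-circular triple and every other member
of `P` lies entirely `σ`-below or `σ`-above `Q`, then for any choice of weak
selections `h p` on the blocks, the union of the blocks `σ`-below `Q`, each
member of `Q`, and the union of the blocks `σ`-above `Q` are open in the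
selection topology of `σ * h`. -/
theorem stmt1 {X : Type*} (P : Set (Set X)) (blk : X → Set X)
    (hmem : ∀ x : X, x ∈ blk x) (hblk : ∀ x, blk x ∈ P)
    (huniq : ∀ x : X, ∀ p ∈ P, x ∈ p → p = blk x)
    (hne : ∀ p ∈ P, Set.Nonempty p)
    (Q : Set (Set X)) (hQP : Q ⊆ P)
    (A B C : Set X) (hA : A ∈ P) (hB : B ∈ P) (hC : C ∈ P)
    (hQeq : Q = {A, B, C}) (hAB : A ≠ B) (hAC : A ≠ C) (hBC : B ≠ C)
    (σ : WeakSelection ↥P)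
    (hcirc : σ.lt ⟨A, hA⟩ ⟨B, hB⟩ ∧ σ.lt ⟨B, hB⟩ ⟨C, hC⟩ ∧ σ.lt ⟨C, hC⟩ ⟨A, hA⟩)
    (hdec : ∀ p (hp : p ∈ P), p ∉ Q →
      (∀ q (hq : q ∈ Q), σ.lt ⟨p, hp⟩ ⟨q, hQP hq⟩) ∨
      (∀ q (hq : q ∈ Q), σ.lt ⟨q, hQP hq⟩ ⟨p, hp⟩))
    (h : ∀ p : ↥P, WeakSelection ↥(p : Set X))
    (g : WeakSelection X) (hg : IsStar P blk hblk σ h g) :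
    IsOpen[g.selTop]
      (⋃₀ {p | ∃ hp : p ∈ P, ∀ q (hq : q ∈ Q), σ.lt ⟨p, hp⟩ ⟨q, hQP hq⟩}) ∧
    (∀ q ∈ Q, IsOpen[g.selTop] q) ∧
    IsOpen[g.selTop]
      (⋃₀ {p | ∃ hp : p ∈ P, ∀ q (hq : q ∈ Q), σ.lt ⟨q, hQP hq⟩ ⟨p, hp⟩}) := by
  obtain ⟨a, haA⟩ := hne A hA
  obtain ⟨b, hbB⟩ := hne B hB
  obtain ⟨c, hcC⟩ := hne C hC
  have hba : blk a = A := (huniq a A hA haA).symm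
  have hbb : blk b = B := (huniq b B hB hbB).symm
  have hbc : blk c = C := (huniq c C hC hcC).symm
  have hAQ : A ∈ Q := by rw [hQeq]; exact Or.inl rfl
  have hBQ : B ∈ Q := by rw [hQeq]; exact Or.inr (Or.inl rfl)
  have hCQ : C ∈ Q := by rw [hQeq]; exact Or.inr (Or.inr rfl)
  obtain ⟨hltAB, hltBC, hltCA⟩ := hcirc
  have asym : ∀ u v : ↥P, σ.lt u v → ¬ σ.lt v u := by
    rintro u v ⟨h1, hne1⟩ ⟨h2, -⟩
    exact hne1 (h1.symm.trans ((σ.comm u v).trans h2))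
  have ltne : ∀ {p q : Set X} {hp : p ∈ P} {hq : q ∈ P},
      σ.lt ⟨p, hp⟩ ⟨q, hq⟩ → p ≠ q := fun h' hpq => h'.2 (Subtype.ext hpq)
  have memlt : ∀ (y z : X) (Zy Zz : Set X) (hZy : Zy ∈ P) (hZz : Zz ∈ P),
      blk y = Zy → blk z = Zz → Zy ≠ Zz →
      (g.lt y z ↔ σ.lt ⟨Zy, hZy⟩ ⟨Zz, hZz⟩) := by
    intro y z Zy Zz hZy hZz ey ez hne'
    have h' := hg.1 y z (by rw [ey, ez]; exact hne')
    rwa [show (⟨blk y, hblk y⟩ : ↥P) = ⟨Zy, hZy⟩ from Subtype.ext ey,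
      show (⟨blk z, hblk z⟩ : ↥P) = ⟨Zz, hZz⟩ from Subtype.ext ez] at h'
  have openlt : ∀ z : X, IsOpen[g.selTop] {y | g.lt y z} :=
    fun z => TopologicalSpace.GenerateOpen.basic _ ⟨z, Or.inl rfl⟩
  have opengt : ∀ z : X, IsOpen[g.selTop] {y | g.lt z y} :=
    fun z => TopologicalSpace.GenerateOpen.basic _ ⟨z, Or.inr rfl⟩
  have openinter : ∀ s t : Set X, IsOpen[g.selTop] s → IsOpen[g.selTop] t →
      IsOpen[g.selTop] (s ∩ t) := fun s t hs ht =>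
    TopologicalSpace.GenerateOpen.inter s t hs ht
  refine ⟨?_, ?_, ?_⟩
  · -- the union of blocks below Q
    have heq : (⋃₀ {p | ∃ hp : p ∈ P, ∀ q (hq : q ∈ Q), σ.lt ⟨p, hp⟩ ⟨q, hQP hq⟩}) =
        ({y | g.lt y a} ∩ {y | g.lt y b}) ∩ {y | g.lt y c} := by
      ext y
      simp only [Set.mem_sUnion, Set.mem_setOf_eq, Set.mem_inter_iff]
      constructor
      · rintro ⟨p, ⟨hp, hlt⟩, hyp⟩
        have hpy : blk y = p := (huniq y p hp hyp).symm
        have hrw : (⟨blk y, hblk y⟩ : ↥P) = ⟨p, hp⟩ := Subtype.ext hpy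
        have h1 : σ.lt ⟨blk y, hblk y⟩ ⟨A, hA⟩ := by rw [hrw]; exact hlt A hAQ
        have h2 : σ.lt ⟨blk y, hblk y⟩ ⟨B, hB⟩ := by rw [hrw]; exact hlt B hBQ
        have h3 : σ.lt ⟨blk y, hblk y⟩ ⟨C, hC⟩ := by rw [hrw]; exact hlt C hCQ
        exact ⟨⟨(memlt y a _ A (hblk y) hA rfl hba (ltne h1)).mpr h1,
          (memlt y b _ B (hblk y) hB rfl hbb (ltne h2)).mpr h2⟩,
          (memlt y c _ C (hblk y) hC rfl hbc (ltne h3)).mpr h3⟩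
      · rintro ⟨⟨h1, h2⟩, h3⟩
        by_cases hpQ : blk y ∈ Q
        · exfalso
          rw [hQeq] at hpQ
          rcases hpQ with hp | hp | hp
          · exact asym _ _ hltCA ((memlt y c A C hA hC hp hbc hAC).mp h3)
          · exact asym _ _ hltAB ((memlt y a B A hB hA hp hba (Ne.symm hAB)).mp h1)
          · exact asym _ _ hltBC ((memlt y b C B hC hB hp hbb (Ne.symm hBC)).mp h2)
        · rcases hdec (blk y) (hblk y) hpQ with hlow | hhigh
          · exact ⟨blk y, ⟨hblk y, hlow⟩, hmem y⟩
          · exfalso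
            have hσ := hhigh A hAQ
            exact asym _ _ hσ
              ((memlt y a _ A (hblk y) hA rfl hba (Ne.symm (ltne hσ))).mp h1)
    rw [heq]
    exact openinter _ _ (openinter _ _ (openlt a) (openlt b)) (openlt c)
  · -- each member of Q
    intro q hq
    rw [hQeq] at hq
    simp only [Set.mem_insert_iff, Set.mem_singleton_iff] at hq
    rcases hq with rfl | rfl | rfl
    · have heq : q = {y | g.lt c y} ∩ {y | g.lt y b} := by
        ext y
        simp only [Set.mem_inter_iff, Set.mem_setOf_eq]
        constructor
        · intro hy
          have e : blk y = q := (huniq y q hA hy).symm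
          exact ⟨(memlt c y C q hC hA hbc e (Ne.symm hAC)).mpr hltCA,
            (memlt y b q B hA hB e hbb hAB).mpr hltAB⟩
        · rintro ⟨h1, h2⟩
          have e : blk y = q := by
            by_cases hpQ : blk y ∈ Q
            · rw [hQeq] at hpQ
              rcases hpQ with hp | hp | hp
              · exact hp
              · exact absurd ((memlt c y C B hC hB hbc hp (Ne.symm hBC)).mp h1)
                  (asym _ _ hltBC)
              · exact absurd ((memlt y b C B hC hB hp hbb (Ne.symm hBC)).mp h2)
                  (asym _ _ hltBC)
            · rcases hdec (blk y) (hblk y) hpQ with hlow | hhigh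
              · have hσ := hlow C hCQ
                exact absurd
                  ((memlt c y C _ hC (hblk y) hbc rfl (Ne.symm (ltne hσ))).mp h1)
                  (asym _ _ hσ)
              · have hσ := hhigh B hBQ
                exact absurd
                  ((memlt y b _ B (hblk y) hB rfl hbb (Ne.symm (ltne hσ))).mp h2)
                  (asym _ _ hσ)
          rw [← e]; exact hmem y
      rw [heq]
      exact openinter _ _ (opengt c) (openlt b)
    · have heq : q = {y | g.lt a y} ∩ {y | g.lt y c} := by
        ext y
        simp only [Set.mem_inter_iff, Set.mem_setOf_eq]
        constructor
        · intro hy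
          have e : blk y = q := (huniq y q hB hy).symm
          exact ⟨(memlt a y A q hA hB hba e hAB).mpr hltAB,
            (memlt y c q C hB hC e hbc hBC).mpr hltBC⟩
        · rintro ⟨h1, h2⟩
          have e : blk y = q := by
            by_cases hpQ : blk y ∈ Q
            · rw [hQeq] at hpQ
              rcases hpQ with hp | hp | hp
              · exact absurd ((memlt y c A C hA hC hp hbc hAC).mp h2)
                  (asym _ _ hltCA)
              · exact hp
              · exact absurd ((memlt a y A C hA hC hba hp hAC).mp h1)
                  (asym _ _ hltCA)
            · rcases hdec (blk y) (hblk y) hpQ with hlow | hhigh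
              · have hσ := hlow A hAQ
                exact absurd
                  ((memlt a y A _ hA (hblk y) hba rfl (Ne.symm (ltne hσ))).mp h1)
                  (asym _ _ hσ)
              · have hσ := hhigh C hCQ
                exact absurd
                  ((memlt y c _ C (hblk y) hC rfl hbc (Ne.symm (ltne hσ))).mp h2)
                  (asym _ _ hσ)
          rw [← e]; exact hmem y
      rw [heq]
      exact openinter _ _ (opengt a) (openlt c)
    · have heq : q = {y | g.lt b y} ∩ {y | g.lt y a} := by
        ext y
        simp only [Set.mem_inter_iff, Set.mem_setOf_eq]
        constructor
        · intro hy
          have e : blk y = q := (huniq y q hC hy).symm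
          exact ⟨(memlt b y B q hB hC hbb e hBC).mpr hltBC,
            (memlt y a q A hC hA e hba (Ne.symm hAC)).mpr hltCA⟩
        · rintro ⟨h1, h2⟩
          have e : blk y = q := by
            by_cases hpQ : blk y ∈ Q
            · rw [hQeq] at hpQ
              rcases hpQ with hp | hp | hp
              · exact absurd ((memlt b y B A hB hA hbb hp (Ne.symm hAB)).mp h1)
                  (asym _ _ hltAB)
              · exact absurd ((memlt y a B A hB hA hp hba (Ne.symm hAB)).mp h2)
                  (asym _ _ hltAB)
              · exact hp
            · rcases hdec (blk y) (hblk y) hpQ with hlow | hhigh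
              · have hσ := hlow B hBQ
                exact absurd
                  ((memlt b y B _ hB (hblk y) hbb rfl (Ne.symm (ltne hσ))).mp h1)
                  (asym _ _ hσ)
              · have hσ := hhigh A hAQ
                exact absurd
                  ((memlt y a _ A (hblk y) hA rfl hba (Ne.symm (ltne hσ))).mp h2)
                  (asym _ _ hσ)
          rw [← e]; exact hmem y
      rw [heq]
      exact openinter _ _ (opengt b) (openlt a)
  · -- the union of blocks above Q
    have heq : (⋃₀ {p | ∃ hp : p ∈ P, ∀ q (hq : q ∈ Q), σ.lt ⟨q, hQP hq⟩ ⟨p, hp⟩}) =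
        ({y | g.lt a y} ∩ {y | g.lt b y}) ∩ {y | g.lt c y} := by
      ext y
      simp only [Set.mem_sUnion, Set.mem_setOf_eq, Set.mem_inter_iff]
      constructor
      · rintro ⟨p, ⟨hp, hlt⟩, hyp⟩
        have hpy : blk y = p := (huniq y p hp hyp).symm
        have hrw : (⟨blk y, hblk y⟩ : ↥P) = ⟨p, hp⟩ := Subtype.ext hpy
        have h1 : σ.lt ⟨A, hA⟩ ⟨blk y, hblk y⟩ := by rw [hrw]; exact hlt A hAQ
        have h2 : σ.lt ⟨B, hB⟩ ⟨blk y, hblk y⟩ := by rw [hrw]; exact hlt B hBQ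
        have h3 : σ.lt ⟨C, hC⟩ ⟨blk y, hblk y⟩ := by rw [hrw]; exact hlt C hCQ
        exact ⟨⟨(memlt a y A _ hA (hblk y) hba rfl (ltne h1)).mpr h1,
          (memlt b y B _ hB (hblk y) hbb rfl (ltne h2)).mpr h2⟩,
          (memlt c y C _ hC (hblk y) hbc rfl (ltne h3)).mpr h3⟩
      · rintro ⟨⟨h1, h2⟩, h3⟩
        by_cases hpQ : blk y ∈ Q
        · exfalso
          rw [hQeq] at hpQ
          rcases hpQ with hp | hp | hp
          · exact asym _ _ hltAB ((memlt b y B A hB hA hbb hp (Ne.symm hAB)).mp h2)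
          · exact asym _ _ hltBC ((memlt c y C B hC hB hbc hp (Ne.symm hBC)).mp h3)
          · exact asym _ _ hltCA ((memlt a y A C hA hC hba hp hAC).mp h1)
        · rcases hdec (blk y) (hblk y) hpQ with hlow | hhigh
          · exfalso
            have hσ := hlow A hAQ
            exact asym _ _ hσ
              ((memlt a y A _ hA (hblk y) hba rfl (Ne.symm (ltne hσ))).mp h1)
          · exact ⟨blk y, ⟨hblk y, hhigh⟩, hmem y⟩
    rw [heq]
    exact openinter _ _ (openinter _ _ (opengt a) (opengt b)) (opengt c)
end

section
/- If P is a partition of a set X with |P| ≠ 2, then there is a weak selection σ for P such that for every choice of weak selections h_P for each P ∈ P, every member of P is open in the selection topology T_{σ*h} on X. Moreover, if X is a Hausdorff space, P is an open partition of X, and each weak selection h_P is continuous, then σ*h is a continuous weak selection for X. -/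
open Topology

section TourDefs

/-- A tournament on `α`. -/
structure Tour (α : Type*) where
  r : α → α → Prop
  asymm : ∀ x y, r x y → ¬ r y x
  total : ∀ x y, x ≠ y → r x y ∨ r y x

namespace Tour

variable {α β : Type*}

theorem irrefl (t : Tour α) (x : α) : ¬ t.r x x := fun h => t.asymm x x h h

theorem ne_of_r (t : Tour α) {x y : α} (h : t.r x y) : x ≠ y := by
  rintro rfl; exact t.irrefl x h

/-- block `r` is excluded by one of the constraints. -/
def killed (t : Tour α) (L U : Finset α) (x : α) : Prop :=
  (∃ s ∈ L, s ≠ x ∧ t.r s x) ∨ (∃ s ∈ U, s ≠ x ∧ t.r x s)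

def Good (t : Tour α) : Prop :=
  ∀ p : α, ∃ L U : Finset α, (∀ s ∈ L, t.r p s) ∧ (∀ s ∈ U, t.r s p) ∧
    ∀ x : α, x ≠ p → t.killed L U x

def GoodL (t : Tour α) : Prop :=
  ∀ p : α, ∃ L U : Finset α, L.Nonempty ∧ (∀ s ∈ L, t.r p s) ∧ (∀ s ∈ U, t.r s p) ∧
    ∀ x : α, x ≠ p → t.killed L U x

def GoodU (t : Tour α) : Prop :=
  ∀ p : α, ∃ L U : Finset α, U.Nonempty ∧ (∀ s ∈ L, t.r p s) ∧ (∀ s ∈ U, t.r s p) ∧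
    ∀ x : α, x ≠ p → t.killed L U x

theorem GoodL.good {t : Tour α} (h : t.GoodL) : t.Good := by
  intro p; obtain ⟨L, U, _, h1, h2, h3⟩ := h p; exact ⟨L, U, h1, h2, h3⟩

/-- transfer along an equivalence -/
def map (e : α ≃ β) (t : Tour α) : Tour β where
  r x y := t.r (e.symm x) (e.symm y)
  asymm x y h := t.asymm _ _ h
  total x y hxy := t.total _ _ (fun h => hxy (e.symm.injective h))

theorem Good.map {t : Tour α} (ht : t.Good) (e : α ≃ β) : (t.map e).Good := by
  classical
  intro p
  obtain ⟨L, U, h1, h2, h3⟩ := ht (e.symm p)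
  refine ⟨L.image e, U.image e, ?_, ?_, ?_⟩
  · rintro s hs
    obtain ⟨s0, hs0, rfl⟩ := Finset.mem_image.mp hs
    show t.r (e.symm p) (e.symm (e s0))
    simpa using h1 s0 hs0
  · rintro s hs
    obtain ⟨s0, hs0, rfl⟩ := Finset.mem_image.mp hs
    show t.r (e.symm (e s0)) (e.symm p)
    simpa using h2 s0 hs0
  · intro x hx
    have hx' : e.symm x ≠ e.symm p := fun h => hx (e.symm.injective h)
    rcases h3 (e.symm x) hx' with ⟨s, hs, hne, hr⟩ | ⟨s, hs, hne, hr⟩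
    · refine Or.inl ⟨e s, Finset.mem_image_of_mem e hs, ?_, ?_⟩
      · rintro rfl; exact hne (by simp)
      · show t.r (e.symm (e s)) (e.symm x); simpa using hr
    · refine Or.inr ⟨e s, Finset.mem_image_of_mem e hs, ?_, ?_⟩
      · rintro rfl; exact hne (by simp)
      · show t.r (e.symm x) (e.symm (e s)); simpa using hr

/-- disjoint sum,左 beats 右. -/
def sum (t : Tour α) (u : Tour β) : Tour (α ⊕ β) where
  r x y :=
    match x, y with
    | .inl a, .inl b => t.r a b
    | .inl _, .inr _ => True
    | .inr _, .inl _ => False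
    | .inr a, .inr b => u.r a b
  asymm := by
    rintro (a | a) (b | b) h h' <;> simp_all
    · exact t.asymm _ _ h h'
    · exact u.asymm _ _ h h'
  total := by
    rintro (a | a) (b | b) h <;> simp_all
    · exact t.total _ _ (by simpa [Sum.inl.injEq] using h)
    · exact u.total _ _ (by simpa [Sum.inr.injEq] using h)

theorem sum_good {t : Tour α} {u : Tour β} (ht : t.GoodL) (hu : u.GoodU) :
    (t.sum u).Good := by
  classical
  rintro (a | a)
  · obtain ⟨L, U, hLne, h1, h2, h3⟩ := ht a
    refine ⟨L.map ⟨Sum.inl, Sum.inl_injective⟩, U.map ⟨Sum.inl, Sum.inl_injective⟩, ?_, ?_, ?_⟩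
    · rintro s hs
      obtain ⟨s0, hs0, rfl⟩ := Finset.mem_map.mp hs
      exact h1 s0 hs0
    · rintro s hs
      obtain ⟨s0, hs0, rfl⟩ := Finset.mem_map.mp hs
      exact h2 s0 hs0
    · rintro (b | b) hb
      · have hb' : b ≠ a := fun h => hb (by rw [h])
        rcases h3 b hb' with ⟨s, hs, hne, hr⟩ | ⟨s, hs, hne, hr⟩
        · exact Or.inl ⟨Sum.inl s, Finset.mem_map_of_mem _ hs, fun h => hne (Sum.inl_injective h), hr⟩
        · exact Or.inr ⟨Sum.inl s, Finset.mem_map_of_mem _ hs, fun h => hne (Sum.inl_injective h), hr⟩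
      · obtain ⟨s0, hs0⟩ := hLne
        exact Or.inl ⟨Sum.inl s0, Finset.mem_map_of_mem _ hs0, fun h => Sum.inl_ne_inr h, trivial⟩
  · obtain ⟨L, U, hUne, h1, h2, h3⟩ := hu a
    refine ⟨L.map ⟨Sum.inr, Sum.inr_injective⟩, U.map ⟨Sum.inr, Sum.inr_injective⟩, ?_, ?_, ?_⟩
    · rintro s hs
      obtain ⟨s0, hs0, rfl⟩ := Finset.mem_map.mp hs
      exact h1 s0 hs0
    · rintro s hs
      obtain ⟨s0, hs0, rfl⟩ := Finset.mem_map.mp hs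
      exact h2 s0 hs0
    · rintro (b | b) hb
      · obtain ⟨s0, hs0⟩ := hUne
        exact Or.inr ⟨Sum.inr s0, Finset.mem_map_of_mem _ hs0, fun h => Sum.inr_ne_inl h, trivial⟩
      · have hb' : b ≠ a := fun h => hb (by rw [h])
        rcases h3 b hb' with ⟨s, hs, hne, hr⟩ | ⟨s, hs, hne, hr⟩
        · exact Or.inl ⟨Sum.inr s, Finset.mem_map_of_mem _ hs, fun h => hne (Sum.inr_injective h), hr⟩
        · exact Or.inr ⟨Sum.inr s, Finset.mem_map_of_mem _ hs, fun h => hne (Sum.inr_injective h), hr⟩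

/-- tournament from a linear order -/
def ofLT (β : Type*) [LinearOrder β] : Tour β where
  r x y := x < y
  asymm _ _ h h' := absurd h' (lt_asymm h)
  total _ _ h := h.lt_or_gt

private lemma f3a : ∀ i j : Fin 3, j = i + 1 → i = j + 1 → False := by decide
private lemma f3b : ∀ i j : Fin 3, i ≠ j → j = i + 1 ∨ i = j + 1 := by decide
private lemma f3c : ∀ i : Fin 3, i + 2 = i + 1 + 1 := by decide
private lemma f3d : ∀ i : Fin 3, i = i + 2 + 1 := by decide
private lemma f3e : ∀ i : Fin 3, i + 2 ≠ i + 1 := by decide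
private lemma f3f : ∀ i j : Fin 3, i = j + 1 → i + 1 ≠ j := by decide
private lemma f3g : ∀ i j : Fin 3, i = j + 1 → j = i + 1 + 1 := by decide

open scoped Classical in
/-- the triple relation -/
def tripleRel (u : Tour β) (x y : β × Fin 3) : Prop :=
  if x.1 = y.1 then y.2 = x.2 + 1 else u.r x.1 y.1

open scoped Classical in
theorem tripleRel_iff (u : Tour β) (a b : β) (i j : Fin 3) :
    tripleRel u (a, i) (b, j) ↔ if a = b then j = i + 1 else u.r a b := Iff.rfl

open scoped Classical in
/-- triples: cyclic inside a fiber, base tournament across fibers -/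
def triple (u : Tour β) : Tour (β × Fin 3) where
  r := tripleRel u
  asymm := by
    rintro ⟨a, i⟩ ⟨b, j⟩ h h'
    rw [tripleRel_iff] at h h'
    by_cases hab : a = b
    · subst hab
      rw [if_pos rfl] at h h'
      exact f3a i j h h'
    · rw [if_neg hab] at h
      rw [if_neg (Ne.symm hab)] at h'
      exact u.asymm _ _ h h'
  total := by
    rintro ⟨a, i⟩ ⟨b, j⟩ h
    rw [tripleRel_iff, tripleRel_iff]
    by_cases hab : a = b
    · subst hab
      have hij : i ≠ j := fun hh => h (by rw [hh])
      rw [if_pos rfl, if_pos rfl]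
      exact f3b i j hij
    · rw [if_neg hab, if_neg (Ne.symm hab)]
      exact u.total _ _ hab

open scoped Classical in
theorem triple_r_iff (u : Tour β) (a b : β) (i j : Fin 3) :
    (triple u).r (a, i) (b, j) ↔ if a = b then j = i + 1 else u.r a b := Iff.rfl

open scoped Classical in
theorem triple_goodL (u : Tour β) : (triple u).GoodL := by
  rintro ⟨a, i⟩
  refine ⟨{(a, i + 1)}, {(a, i + 2)}, ⟨_, Finset.mem_singleton_self _⟩, ?_, ?_, ?_⟩
  · intro s hs
    rw [Finset.mem_singleton] at hs; subst hs
    rw [triple_r_iff, if_pos rfl]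
  · intro s hs
    rw [Finset.mem_singleton] at hs; subst hs
    rw [triple_r_iff, if_pos rfl]
    exact f3d i
  · rintro ⟨b, j⟩ hb
    by_cases hab : b = a
    · subst hab
      have hij : j ≠ i := fun hh => hb (by rw [hh])
      rcases f3b i j hij.symm with h3 | h3
      · subst h3
        refine Or.inr ⟨(b, i + 2), Finset.mem_singleton_self _, ?_, ?_⟩
        · intro hh
          exact f3e i (congrArg Prod.snd hh)
        · rw [triple_r_iff, if_pos rfl]
          exact f3c i
      · refine Or.inl ⟨(b, i + 1), Finset.mem_singleton_self _, ?_, ?_⟩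
        · intro hh
          exact f3f i j h3 (congrArg Prod.snd hh)
        · rw [triple_r_iff, if_pos rfl]
          exact f3g i j h3
    · rcases u.total b a hab with hr | hr
      · refine Or.inr ⟨(a, i + 2), Finset.mem_singleton_self _, ?_, ?_⟩
        · intro hh
          exact hab (congrArg Prod.fst hh).symm
        · rw [triple_r_iff, if_neg hab]
          exact hr
      · refine Or.inl ⟨(a, i + 1), Finset.mem_singleton_self _, ?_, ?_⟩
        · intro hh
          exact hab (congrArg Prod.fst hh).symm
        · rw [triple_r_iff, if_neg (Ne.symm hab)]
          exact hr

end Tour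

/-- the gadget on 4 elements -/
def tourFour : Tour (Fin 4) where
  r i j := [(1, 0), (1, 3), (2, 0), (2, 1), (3, 0), (3, 2)].contains (i.val, j.val) = true
  asymm := by decide
  total := by decide

set_option synthInstance.maxHeartbeats 400000 in
set_option synthInstance.maxSize 4096 in
theorem tourFour_goodU : tourFour.GoodU := by unfold Tour.GoodU Tour.killed tourFour; decide

/-- the gadget on 5 elements -/
def tourFive : Tour (Fin 5) where
  r i j := [(0, 4), (1, 0), (2, 0), (2, 1), (2, 4), (3, 0), (3, 1), (3, 2), (4, 1),
    (4, 3)].contains (i.val, j.val) = true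
  asymm := by decide
  total := by decide

set_option synthInstance.maxHeartbeats 400000 in
set_option synthInstance.maxSize 4096 in
theorem tourFive_goodU : tourFive.GoodU := by unfold Tour.GoodU Tour.killed tourFive; decide

def tourZero : Tour (Fin 0) where
  r _ _ := False
  asymm x := x.elim0
  total x := x.elim0

theorem tourZero_goodU : tourZero.GoodU := fun p => p.elim0

end TourDefs

namespace Tour

variable {α : Type*}

open scoped Classical in
/-- The weak selection determined by a tournament. -/
noncomputable def sel (t : Tour α) : WeakSelection α where
  toFun x y := if t.r x y then x else y
  mem_pair x y := by
    by_cases h : t.r x y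
    · exact Or.inl (if_pos h)
    · exact Or.inr (if_neg h)
  comm x y := by
    show (if t.r x y then x else y) = (if t.r y x then y else x)
    by_cases h1 : t.r x y <;> by_cases h2 : t.r y x
    · exact absurd h2 (t.asymm _ _ h1)
    · rw [if_pos h1, if_neg h2]
    · rw [if_neg h1, if_pos h2]
    · have hxy : x = y := by
        by_contra hxy
        rcases t.total x y hxy with h | h
        exacts [h1 h, h2 h]
      rw [hxy]

theorem sel_lt_iff (t : Tour α) (x y : α) : (t.sel).lt x y ↔ t.r x y := by
  classical
  constructor
  · rintro ⟨hle, hne⟩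
    by_cases h : t.r x y
    · exact h
    · have : (t.sel).toFun x y = y := if_neg h
      rw [WeakSelection.le, this] at hle
      exact absurd hle.symm hne
  · intro h
    exact ⟨if_pos h, t.ne_of_r h⟩

end Tour

/-- Any type has a tournament. -/
noncomputable def anyTour (α : Type*) : Tour α :=
  letI : LinearOrder α := IsWellOrder.linearOrder WellOrderingRel
  Tour.ofLT α

/-- Existence of a good tournament on every type whose cardinality differs from 2
and is at least 2. -/
theorem exists_good_tour (α : Type*) (hnt : Nontrivial α)
    (hcard : Cardinal.mk α ≠ 2) : ∃ t : Tour α, t.Good := by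
  cases finite_or_infinite α with
  | inl hfin =>
    haveI := Fintype.ofFinite α
    obtain ⟨e⟩ : Nonempty (α ≃ Fin (Fintype.card α)) := ⟨Fintype.equivFin α⟩
    set n := Fintype.card α with hn
    have hmk : Cardinal.mk α = n := Cardinal.mk_fintype α
    have hn2 : n ≠ 2 := by
      intro h2
      rw [h2] at hmk
      exact hcard (by rw [hmk]; norm_num)
    have h1n : 1 < n := Fintype.one_lt_card_iff_nontrivial.mpr hnt
    have hn3 : 3 ≤ n := by omega
    obtain ⟨k, m, hm, hkm⟩ : ∃ k m, (m = 0 ∨ m = 4 ∨ m = 5) ∧ k * 3 + m = n := by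
      have h3 : n % 3 = 0 ∨ n % 3 = 1 ∨ n % 3 = 2 := by omega
      rcases h3 with h | h | h
      · exact ⟨n / 3, 0, Or.inl rfl, by omega⟩
      · exact ⟨(n - 4) / 3, 4, Or.inr (Or.inl rfl), by omega⟩
      · exact ⟨(n - 5) / 3, 5, Or.inr (Or.inr rfl), by omega⟩
    obtain ⟨u, hu⟩ : ∃ u : Tour (Fin m), u.GoodU := by
      rcases hm with rfl | rfl | rfl
      exacts [⟨tourZero, tourZero_goodU⟩, ⟨tourFour, tourFour_goodU⟩, ⟨tourFive, tourFive_goodU⟩]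
    let e2 : (Fin k × Fin 3) ⊕ Fin m ≃ Fin n :=
      (Equiv.sumCongr finProdFinEquiv (Equiv.refl (Fin m))).trans
        (finSumFinEquiv.trans (finCongr hkm))
    exact ⟨_, (Tour.sum_good (Tour.triple_goodL (Tour.ofLT (Fin k))) hu).map (e2.trans e.symm)⟩
  | inr hinf =>
    have haleph : Cardinal.aleph0 ≤ Cardinal.mk α := Cardinal.infinite_iff.mp hinf
    have hc : Cardinal.mk (α × Fin 3) = Cardinal.mk α := by
      rw [Cardinal.mk_prod, Cardinal.lift_uzero, Cardinal.mk_fin, Cardinal.lift_natCast]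
      exact Cardinal.mul_eq_left haleph ((Cardinal.nat_lt_aleph0 3).le.trans haleph)
        (Nat.cast_ne_zero.mpr (by norm_num))
    obtain ⟨e⟩ := Cardinal.eq.mp hc
    exact ⟨_, ((Tour.triple_goodL (anyTour α)).good).map e⟩

/-- Totality of a weak selection. -/
theorem WeakSelection.lt_total {X : Type*} (g : WeakSelection X) {x y : X} (h : x ≠ y) :
    g.lt x y ∨ g.lt y x := by
  rcases g.mem_pair x y with h1 | h1
  · exact Or.inl ⟨h1, h⟩
  · exact Or.inr ⟨(g.comm y x).trans h1, h.symm⟩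


/-- The continuity part, which holds for any `σ`. -/
theorem cont_aux {X : Type*} [TopologicalSpace X]
    (P : Set (Set X)) (blk : X → Set X)
    (hmem : ∀ x : X, x ∈ blk x) (hblk : ∀ x, blk x ∈ P)
    (huniq : ∀ x : X, ∀ p ∈ P, x ∈ p → p = blk x)
    (σ : WeakSelection ↥P) (h : ∀ p : ↥P, WeakSelection ↥(p : Set X))
    (g : WeakSelection X) (hstar : IsStar P blk hblk σ h g)
    (hopen : ∀ p ∈ P, IsOpen p) (hcont : ∀ p : ↥P, (h p).Continuous) :
    g.Continuous := by
  have blockEq : ∀ {y : X} {p : Set X}, p ∈ P → y ∈ p → blk y = p :=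
    fun {y p} hp hyp => (huniq y p hp hyp).symm
  intro x y hxy
  by_cases hbb : blk x = blk y
  · set pb : ↥P := ⟨blk x, hblk x⟩ with hpb
    set x' : ↥(blk x) := ⟨x, hmem x⟩ with hx'
    have hyblk : y ∈ blk x := by rw [hbb]; exact hmem y
    set y' : ↥(blk x) := ⟨y, hyblk⟩ with hy'
    have hsame := hstar.2 pb x' y' rfl hbb.symm
    have hlt' : (h pb).lt x' y' := by
      constructor
      · apply Subtype.coe_injective
        show ((h pb).toFun x' y' : X) = (x' : X)
        rw [← hsame]
        exact hxy.1
      · intro he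
        exact hxy.2 (congrArg Subtype.val he)
    obtain ⟨U, V, hUo, hVo, hxU, hyV, hUV⟩ := hcont pb x' y' hlt'
    have hpo : IsOpen (blk x) := hopen _ (hblk x)
    refine ⟨Subtype.val '' U, Subtype.val '' V, hpo.isOpenMap_subtype_val U hUo,
      hpo.isOpenMap_subtype_val V hVo, ⟨x', hxU, rfl⟩, ⟨y', hyV, rfl⟩, ?_⟩
    rintro s ⟨s', hs', rfl⟩ t ⟨t', ht', rfl⟩
    have hst := hUV s' hs' t' ht'
    have hsame' := hstar.2 pb s' t' (blockEq (hblk x) s'.2) (blockEq (hblk x) t'.2)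
    constructor
    · show g.toFun ↑s' ↑t' = ↑s'
      rw [hsame', show (h pb).toFun s' t' = s' from hst.1]
    · intro he
      exact hst.2 (Subtype.coe_injective he)
  · refine ⟨blk x, blk y, hopen _ (hblk x), hopen _ (hblk y), hmem x, hmem y, ?_⟩
    intro s hs t ht
    have hbs : blk s = blk x := blockEq (hblk x) hs
    have hbt : blk t = blk y := blockEq (hblk y) ht
    have hne : blk s ≠ blk t := by rw [hbs, hbt]; exact hbb
    rw [hstar.1 s t hne]
    have hσ := (hstar.1 x y hbb).mp hxy
    have e1 : (⟨blk s, hblk s⟩ : ↥P) = ⟨blk x, hblk x⟩ := Subtype.ext hbs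
    have e2 : (⟨blk t, hblk t⟩ : ↥P) = ⟨blk y, hblk y⟩ := Subtype.ext hbt
    rw [e1, e2]
    exact hσ


/-- Lemma 2.3: if `P` is a partition of `X` with `|P| ≠ 2`, then `P` has a weak
selection `σ` such that every member of `P` is open in the selection topology
of `σ * h`, for every choice of weak selections `h p` on the blocks; moreover,
if `P` is an open partition of the (Hausdorff) space `X` and each `h p` is
continuous, then `σ * h` is continuous. -/
theorem stmt2 {X : Type*} [TopologicalSpace X] [T2Space X]
    (P : Set (Set X)) (blk : X → Set X)
    (hmem : ∀ x : X, x ∈ blk x) (hblk : ∀ x, blk x ∈ P)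
    (huniq : ∀ x : X, ∀ p ∈ P, x ∈ p → p = blk x)
    (hne : ∀ p ∈ P, Set.Nonempty p)
    (hcard : Cardinal.mk ↥P ≠ 2) :
    ∃ σ : WeakSelection ↥P,
      ∀ (h : ∀ p : ↥P, WeakSelection ↥(p : Set X)) (g : WeakSelection X),
        IsStar P blk hblk σ h g →
          (∀ p ∈ P, IsOpen[g.selTop] p) ∧
          ((∀ p ∈ P, IsOpen p) → (∀ p : ↥P, (h p).Continuous) → g.Continuous) := by
  classical
  have blockEq : ∀ {y : X} {p : Set X}, p ∈ P → y ∈ p → blk y = p :=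
    fun {y p} hp hyp => (huniq y p hp hyp).symm
  obtain ⟨t, ht⟩ : ∃ t : Tour ↥P, Subsingleton ↥P ∨ t.Good := by
    by_cases hs : Subsingleton ↥P
    · exact ⟨anyTour ↥P, Or.inl hs⟩
    · obtain ⟨t, ht⟩ := exists_good_tour ↥P (not_subsingleton_iff_nontrivial.mp hs) hcard
      exact ⟨t, Or.inr ht⟩
  refine ⟨t.sel, fun h g hstar => ⟨?_, ?_⟩⟩
  · -- openness of each block
    intro p hp
    rcases ht with hsub | hgood
    · have : p = Set.univ := by
        ext y
        simp only [Set.mem_univ, iff_true]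
        have : (⟨p, hp⟩ : ↥P) = ⟨blk y, hblk y⟩ := Subsingleton.elim _ _
        have hpy : p = blk y := congrArg Subtype.val this
        rw [hpy]
        exact hmem y
      rw [this]
      exact @isOpen_univ X g.selTop
    · -- the cross-block description of g
      have cross : ∀ (y z : X) (qy qz : ↥P), blk y = ↑qy → blk z = ↑qz → qy ≠ qz →
          (g.lt y z ↔ t.r qy qz) := by
        intro y z qy qz hy hz hqne
        have hbne : blk y ≠ blk z := by
          rw [hy, hz]
          exact fun hh => hqne (Subtype.coe_injective hh)
        rw [hstar.1 y z hbne]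
        have e1 : (⟨blk y, hblk y⟩ : ↥P) = qy := Subtype.ext hy
        have e2 : (⟨blk z, hblk z⟩ : ↥P) = qz := Subtype.ext hz
        rw [e1, e2]
        exact t.sel_lt_iff qy qz
      obtain ⟨L, U, hL, hU, hkill⟩ := hgood ⟨p, hp⟩
      -- a point in each block
      have ha : ∀ s : ↥P, (hne s.1 s.2).choose ∈ s.1 := fun s => (hne s.1 s.2).choose_spec
      set a : ↥P → X := fun s => (hne s.1 s.2).choose with haf
      have hba : ∀ s : ↥P, blk (a s) = s.1 := fun s => blockEq s.2 (ha s)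
      have key : p = (⋂ s ∈ L, {y | g.lt y (a s)}) ∩ (⋂ s ∈ U, {y | g.lt (a s) y}) := by
        ext y
        simp only [Set.mem_inter_iff, Set.mem_iInter, Set.mem_setOf_eq]
        constructor
        · intro hyp
          have hby : blk y = p := blockEq hp hyp
          constructor
          · intro s hs
            exact (cross y (a s) ⟨p, hp⟩ s hby (hba s) (t.ne_of_r (hL s hs))).mpr (hL s hs)
          · intro s hs
            exact (cross (a s) y s ⟨p, hp⟩ (hba s) hby (t.ne_of_r (hU s hs))).mpr (hU s hs)
        · rintro ⟨h1, h2⟩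
          set qy : ↥P := ⟨blk y, hblk y⟩ with hqy
          by_cases hq : qy = ⟨p, hp⟩
          · have : blk y = p := congrArg Subtype.val hq
            rw [← this]
            exact hmem y
          · rcases hkill qy hq with ⟨s, hs, hsne, hr⟩ | ⟨s, hs, hsne, hr⟩
            · have := (cross y (a s) qy s rfl (hba s) (Ne.symm hsne)).mp (h1 s hs)
              exact absurd this (t.asymm _ _ hr)
            · have := (cross (a s) y s qy (hba s) rfl hsne).mp (h2 s hs)
              exact absurd hr (t.asymm _ _ this)
      rw [key]
      letI : TopologicalSpace X := g.selTop
      apply IsOpen.inter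
      · apply isOpen_biInter_finset
        intro s _
        exact TopologicalSpace.isOpen_generateFrom_of_mem ⟨a s, Or.inl rfl⟩
      · apply isOpen_biInter_finset
        intro s _
        exact TopologicalSpace.isOpen_generateFrom_of_mem ⟨a s, Or.inr rfl⟩
  · -- continuity
    intro hopen hcont
    exact cont_aux P blk hmem hblk huniq t.sel h g hstar hopen hcont
end

section
/- Let P be a partition of a set X with |P| ≥ 7, and let S ∈ P be a fixed element. Then there is a weak selection σ for P such that S is the ≤_σ-maximal element of P (i.e., P ≤_σ S for every P ∈ P) and, for every choice of weak selections h_P for each P ∈ P, every member of P is open in the selection topology T_{σ*h} on X. -/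
open Topology

/-! ### Auxiliary machinery for Lemma 2.4 -/

namespace StmtAux

universe u v

open scoped Classical in
/-- Build a weak selection from a total asymmetric relation. -/
noncomputable def ofRel {T : Type*} (R : T → T → Prop)
    (htot : ∀ x y, x ≠ y → R x y ∨ R y x) (hasym : ∀ x y, R x y → ¬ R y x) :
    WeakSelection T where
  toFun x y := if R x y then x else y
  mem_pair x y := by
    by_cases h : R x y
    · exact Or.inl (if_pos h)
    · exact Or.inr (if_neg h)
  comm x y := by
    by_cases hxy : x = y
    · subst hxy; rfl
    · show (if R x y then x else y) = (if R y x then y else x)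
      rcases htot x y hxy with h | h
      · rw [if_pos h, if_neg (hasym x y h)]
      · rw [if_neg (hasym y x h), if_pos h]

theorem lt_ofRel {T : Type*} (R : T → T → Prop)
    (htot : ∀ x y, x ≠ y → R x y ∨ R y x) (hasym : ∀ x y, R x y → ¬ R y x)
    (x y : T) : (ofRel R htot hasym).lt x y ↔ R x y := by
  classical
  constructor
  · rintro ⟨hle, hne⟩
    by_cases h : R x y
    · exact h
    · have h2 : (ofRel R htot hasym).toFun x y = y := if_neg h
      exact absurd (hle.symm.trans h2) hne
  · intro h
    refine ⟨?_, fun hxy => hasym x x (hxy ▸ h) (hxy ▸ h)⟩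
    show (ofRel R htot hasym).toFun x y = x
    exact if_pos h

theorem le_refl {T : Type*} (σ : WeakSelection T) (x : T) : σ.le x x :=
  (σ.mem_pair x x).elim id id

/-- Transport a suitable tournament on a code type `C` along an equivalence,
obtaining a weak selection for which `s₀` is maximal and every point is
"isolated" by finitely many strict comparisons, each failure being witnessed by
a *different* point. -/
theorem exists_sigma {T : Type*} {C : Type*} (s₀ : T) (R : C → C → Prop) (e : T ≃ C) (top : C)
    (hes : e s₀ = top)
    (htot : ∀ x y : C, x ≠ y → R x y ∨ R y x)
    (hasym : ∀ x y : C, R x y → ¬ R y x)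
    (htop : ∀ c : C, c ≠ top → R c top)
    (hiso : ∀ q : C, ∃ F G : Finset C, (∀ a ∈ F, R a q) ∧ (∀ b ∈ G, R q b) ∧
      ∀ r : C, r ≠ q → (∃ a ∈ F, a ≠ r ∧ ¬ R a r) ∨ (∃ b ∈ G, b ≠ r ∧ ¬ R r b)) :
    ∃ σ : WeakSelection T, (∀ p : T, σ.le p s₀) ∧
      ∀ q : T, ∃ F G : Finset T, (∀ a ∈ F, σ.lt a q) ∧ (∀ b ∈ G, σ.lt q b) ∧
        ∀ r : T, r ≠ q → (∃ a ∈ F, a ≠ r ∧ ¬ σ.lt a r) ∨ (∃ b ∈ G, b ≠ r ∧ ¬ σ.lt r b) := by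
  classical
  set R' : T → T → Prop := fun x y => R (e x) (e y) with hR'
  have htot' : ∀ x y : T, x ≠ y → R' x y ∨ R' y x :=
    fun x y hxy => htot _ _ fun hh => hxy (e.injective hh)
  have hasym' : ∀ x y : T, R' x y → ¬ R' y x := fun x y => hasym _ _
  set σ := ofRel R' htot' hasym' with hσ
  have hlt : ∀ x y : T, σ.lt x y ↔ R (e x) (e y) := fun x y => lt_ofRel R' htot' hasym' x y
  refine ⟨σ, ?_, ?_⟩
  · intro p
    by_cases hp : p = s₀
    · subst hp; exact le_refl σ p
    · exact ((hlt p s₀).2 (by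
        rw [hes]; exact htop _ fun hh => hp (e.injective (hh.trans hes.symm)))).1
  · intro q
    obtain ⟨F, G, hF, hG, hk⟩ := hiso (e q)
    refine ⟨F.image e.symm, G.image e.symm, ?_, ?_, ?_⟩
    · intro a ha
      obtain ⟨c, hc, rfl⟩ := Finset.mem_image.1 ha
      rw [hlt, Equiv.apply_symm_apply]
      exact hF c hc
    · intro b hb
      obtain ⟨c, hc, rfl⟩ := Finset.mem_image.1 hb
      rw [hlt, Equiv.apply_symm_apply]
      exact hG c hc
    · intro r hr
      rcases hk (e r) (fun hh => hr (e.injective hh)) with ⟨c, hc, hcne, hcR⟩ | ⟨c, hc, hcne, hcR⟩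
      · refine Or.inl ⟨e.symm c, Finset.mem_image_of_mem _ hc,
          fun hh => hcne (by rw [← hh, Equiv.apply_symm_apply]), ?_⟩
        rw [hlt, Equiv.apply_symm_apply]; exact hcR
      · refine Or.inr ⟨e.symm c, Finset.mem_image_of_mem _ hc,
          fun hh => hcne (by rw [← hh, Equiv.apply_symm_apply]), ?_⟩
        rw [hlt, Equiv.apply_symm_apply]; exact hcR

/-- The key topological step: if `σ` isolates every block (with all failures
witnessed by other blocks), then every block is open in the selection topology
of any star product `σ * h`. -/
theorem master {X : Type*} (P : Set (Set X)) (blk : X → Set X)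
    (hmem : ∀ x : X, x ∈ blk x) (hblk : ∀ x, blk x ∈ P)
    (huniq : ∀ x : X, ∀ p ∈ P, x ∈ p → p = blk x)
    (hne : ∀ p ∈ P, Set.Nonempty p)
    (σ : WeakSelection ↥P)
    (hiso : ∀ q : ↥P, ∃ F G : Finset ↥P, (∀ a ∈ F, σ.lt a q) ∧ (∀ b ∈ G, σ.lt q b) ∧
      ∀ r : ↥P, r ≠ q → (∃ a ∈ F, a ≠ r ∧ ¬ σ.lt a r) ∨ (∃ b ∈ G, b ≠ r ∧ ¬ σ.lt r b))
    (h : ∀ p : ↥P, WeakSelection ↥(p : Set X)) (g : WeakSelection X)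
    (hg : IsStar P blk hblk σ h g) : ∀ p ∈ P, IsOpen[g.selTop] p := by
  classical
  intro p hp
  choose w hw using fun a : ↥P => hne a a.2
  have hbw : ∀ a : ↥P, blk (w a) = (a : Set X) := fun a => (huniq (w a) a a.2 (hw a)).symm
  set q : ↥P := ⟨p, hp⟩ with hq
  obtain ⟨F, G, hF, hG, hkill⟩ := hiso q
  have key : ∀ (a : ↥P) (y : X), (a : Set X) ≠ blk y →
      (g.lt (w a) y ↔ σ.lt a ⟨blk y, hblk y⟩) := by
    intro a y hxy
    have h1 := hg.1 (w a) y (by rw [hbw a]; exact hxy)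
    rwa [show (⟨blk (w a), hblk (w a)⟩ : ↥P) = a from Subtype.ext (hbw a)] at h1
  have key2 : ∀ (b : ↥P) (y : X), (b : Set X) ≠ blk y →
      (g.lt y (w b) ↔ σ.lt ⟨blk y, hblk y⟩ b) := by
    intro b y hxy
    have h1 := hg.1 y (w b) (by rw [hbw b]; exact fun hh => hxy hh.symm)
    rwa [show (⟨blk (w b), hblk (w b)⟩ : ↥P) = b from Subtype.ext (hbw b)] at h1
  letI := g.selTop
  have hopen : IsOpen ((⋂ a ∈ F, {y | g.lt (w a) y}) ∩ ⋂ b ∈ G, {y | g.lt y (w b)}) := by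
    apply IsOpen.inter
    · exact isOpen_biInter_finset fun a _ =>
        TopologicalSpace.GenerateOpen.basic _ ⟨w a, Or.inr rfl⟩
    · exact isOpen_biInter_finset fun b _ =>
        TopologicalSpace.GenerateOpen.basic _ ⟨w b, Or.inl rfl⟩
  have hpu : p = ((⋂ a ∈ F, {y | g.lt (w a) y}) ∩ ⋂ b ∈ G, {y | g.lt y (w b)}) := by
    ext y
    constructor
    · intro hy
      have hby : blk y = p := (huniq y p hp hy).symm
      have hqr : (⟨blk y, hblk y⟩ : ↥P) = q := Subtype.ext hby
      constructor
      · refine Set.mem_iInter₂.2 fun a ha => ?_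
        have hlt := hF a ha
        have hane : (a : Set X) ≠ blk y := by
          rw [hby]; exact fun hh => hlt.2 (Subtype.ext hh)
        exact (key a y hane).2 (by rw [hqr]; exact hlt)
      · refine Set.mem_iInter₂.2 fun b hb => ?_
        have hlt := hG b hb
        have hbne : (b : Set X) ≠ blk y := by
          rw [hby]; exact fun hh => hlt.2 (Subtype.ext hh.symm)
        exact (key2 b y hbne).2 (by rw [hqr]; exact hlt)
    · intro hy
      set r : ↥P := ⟨blk y, hblk y⟩ with hr
      by_cases hrq : r = q
      · have : blk y = p := congrArg Subtype.val hrq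
        rw [← this]; exact hmem y
      · exfalso
        rcases hkill r hrq with ⟨a, haF, har, hnlt⟩ | ⟨b, hbG, hbr, hnlt⟩
        · have hgy : g.lt (w a) y := Set.mem_iInter₂.1 hy.1 a haF
          exact hnlt ((key a y fun hh => har (Subtype.ext hh)).1 hgy)
        · have hgy : g.lt y (w b) := Set.mem_iInter₂.1 hy.2 b hbG
          exact hnlt ((key2 b y fun hh => hbr (Subtype.ext hh)).1 hgy)
  rw [hpu]
  exact hopen

/-! #### The infinite code tournament -/

/-- Tournament on `Option (I × Bool)`; `some (i, false)` plays the role of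
`aᵢ`, `some (i, true)` of `bᵢ`, and `none` is the top element. -/
def Rcode {I : Type*} [LT I] : Option (I × Bool) → Option (I × Bool) → Prop
  | none, _ => False
  | some _, none => True
  | some (i, false), some (j, false) => j < i
  | some (i, false), some (j, true) => i = j
  | some (i, true), some (j, false) => i ≠ j
  | some (i, true), some (j, true) => i < j

theorem Rcode_total {I : Type*} [LinearOrder I] :
    ∀ x y : Option (I × Bool), x ≠ y → Rcode x y ∨ Rcode y x := by
  rintro (_ | ⟨i, _ | _⟩) (_ | ⟨j, _ | _⟩) hne
  · exact absurd rfl hne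
  · exact Or.inr trivial
  · exact Or.inr trivial
  · exact Or.inl trivial
  · rcases lt_trichotomy i j with h | h | h
    · exact Or.inr h
    · exact absurd (by rw [h]) hne
    · exact Or.inl h
  · by_cases h : i = j
    · exact Or.inl h
    · exact Or.inr fun hh => h hh.symm
  · exact Or.inl trivial
  · by_cases h : i = j
    · exact Or.inr h.symm
    · exact Or.inl h
  · rcases lt_trichotomy i j with h | h | h
    · exact Or.inl h
    · exact absurd (by rw [h]) hne
    · exact Or.inr h

theorem Rcode_asym {I : Type*} [LinearOrder I] :
    ∀ x y : Option (I × Bool), Rcode x y → ¬ Rcode y x := by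
  rintro (_ | ⟨i, _ | _⟩) (_ | ⟨j, _ | _⟩) h1 h2
  · exact h1
  · exact h1
  · exact h1
  · exact h2
  · exact absurd h1 (not_lt_of_gt h2)
  · exact (show j ≠ i from h2) (show i = j from h1).symm
  · exact h2
  · exact (show i ≠ j from h1) (show j = i from h2).symm
  · exact absurd h1 (not_lt_of_gt h2)

theorem Rcode_top {I : Type*} [LT I] :
    ∀ c : Option (I × Bool), c ≠ none → Rcode c none := by
  rintro (_ | ⟨i, _ | _⟩) h
  · exact absurd rfl h
  · exact trivial
  · exact trivial

theorem Rcode_iso {I : Type*} [LinearOrder I] (i₀ : I) (hmin : ∀ m : I, ¬ m < i₀)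
    (hsucc : ∀ i : I, ∃ j, i < j) (q : Option (I × Bool)) :
    ∃ F G : Finset (Option (I × Bool)),
      (∀ a ∈ F, Rcode a q) ∧ (∀ b ∈ G, Rcode q b) ∧
      ∀ r, r ≠ q → (∃ a ∈ F, a ≠ r ∧ ¬ Rcode a r) ∨ (∃ b ∈ G, b ≠ r ∧ ¬ Rcode r b) := by
  classical
  match q with
  | none =>
    obtain ⟨j₀, hj₀⟩ := hsucc i₀
    refine ⟨{some (i₀, false), some (j₀, false), some (i₀, true)}, ∅, ?_, ?_, ?_⟩
    · intro a ha
      simp only [Finset.mem_insert, Finset.mem_singleton] at ha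
      rcases ha with rfl | rfl | rfl <;> exact trivial
    · simp
    · rintro (_ | ⟨m, _ | _⟩) hr
      · exact absurd rfl hr
      · by_cases hm : m = i₀
        · subst hm
          refine Or.inl ⟨some (m, true), by simp, by simp, ?_⟩
          exact fun hh => (show m ≠ m from hh) rfl
        · refine Or.inl ⟨some (i₀, false), by simp, by simp [Ne.symm hm], ?_⟩
          exact hmin m
      · by_cases hm : m = i₀
        · subst hm
          refine Or.inl ⟨some (j₀, false), by simp, by simp, ?_⟩
          exact fun hh => hj₀.ne' (show j₀ = m from hh)
        · refine Or.inl ⟨some (i₀, false), by simp, by simp, ?_⟩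
          exact fun hh => hm (show i₀ = m from hh).symm
  | some (i, true) =>
    obtain ⟨j, hj⟩ := hsucc i
    refine ⟨{some (i, false)}, {some (j, false)}, ?_, ?_, ?_⟩
    · intro a ha
      simp only [Finset.mem_singleton] at ha
      subst ha; exact rfl
    · intro b hb
      simp only [Finset.mem_singleton] at hb
      subst hb; exact hj.ne
    · rintro (_ | ⟨m, _ | _⟩) hr
      · exact Or.inr ⟨some (j, false), by simp, by simp, fun hh => hh⟩
      · by_cases h1 : m = i
        · subst h1
          refine Or.inr ⟨some (j, false), by simp, by simp [hj.ne'], ?_⟩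
          exact fun hh => hj.asymm (show j < m from hh)
        · by_cases h2 : m = j
          · subst h2
            refine Or.inl ⟨some (i, false), by simp, by simp [show i ≠ m from hj.ne], ?_⟩
            exact fun hh => hj.asymm (show m < i from hh)
          · by_cases h3 : m < i
            · refine Or.inr ⟨some (j, false), by simp, by simp [Ne.symm h2], ?_⟩
              exact fun hh => hj.asymm ((show j < m from hh).trans h3)
            · refine Or.inl ⟨some (i, false), by simp, by simp [Ne.symm h1], ?_⟩
              exact h3
      · have hmi : m ≠ i := fun hh => hr (by rw [hh])
        refine Or.inl ⟨some (i, false), by simp, by simp, ?_⟩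
        exact fun hh => hmi (show i = m from hh).symm
  | some (i, false) =>
    obtain ⟨j, hj⟩ := hsucc i
    refine ⟨{some (j, true)}, {some (i, true)}, ?_, ?_, ?_⟩
    · intro a ha
      simp only [Finset.mem_singleton] at ha
      subst ha; exact hj.ne'
    · intro b hb
      simp only [Finset.mem_singleton] at hb
      subst hb; exact rfl
    · rintro (_ | ⟨m, _ | _⟩) hr
      · exact Or.inr ⟨some (i, true), by simp, by simp, fun hh => hh⟩
      · have hmi : m ≠ i := fun hh => hr (by rw [hh])
        refine Or.inr ⟨some (i, true), by simp, by simp, ?_⟩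
        exact fun hh => hmi (show m = i from hh)
      · by_cases h1 : m = i
        · subst h1
          refine Or.inl ⟨some (j, true), by simp, by simp [hj.ne'], ?_⟩
          exact fun hh => hj.asymm (show j < m from hh)
        · by_cases h2 : m = j
          · subst h2
            refine Or.inr ⟨some (i, true), by simp, by simp [show i ≠ m from hj.ne], ?_⟩
            exact fun hh => hj.asymm (show m < i from hh)
          · by_cases h3 : m < i
            · refine Or.inl ⟨some (j, true), by simp, by simp [Ne.symm h2], ?_⟩
              exact fun hh => hj.asymm ((show j < m from hh).trans h3)
            · refine Or.inr ⟨some (i, true), by simp, by simp [Ne.symm h1], ?_⟩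
              exact h3

theorem hsucc_aux {T : Type u} [LinearOrder T] [Nonempty T] :
    ∀ i : WithBot (Lex (T × ULift.{u} ℕ)), ∃ j, i < j := by
  intro i
  induction i using WithBot.recBotCoe with
  | bot =>
    exact ⟨(toLex (Classical.arbitrary T, ULift.up 0) : Lex (T × ULift.{u} ℕ)),
      WithBot.bot_lt_coe _⟩
  | coe x =>
    refine ⟨((toLex ((ofLex x).1, ULift.up ((ofLex x).2.down + 1)) : Lex (T × ULift.{u} ℕ)) :
      WithBot (Lex (T × ULift.{u} ℕ))), ?_⟩
    rw [WithBot.coe_lt_coe]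
    show toLex (ofLex x) < toLex ((ofLex x).1, ULift.up ((ofLex x).2.down + 1))
    rw [Prod.Lex.lt_iff]
    right
    refine ⟨rfl, ?_⟩
    show (ofLex x).2.down < (ofLex x).2.down + 1
    omega

theorem card_aux {T : Type u} [Infinite T] :
    Cardinal.mk (Option ((WithBot (Lex (T × ULift.{u} ℕ))) × Bool)) = Cardinal.mk T := by
  have hκ : Cardinal.aleph0 ≤ Cardinal.mk T := Cardinal.infinite_iff.1 inferInstance
  have hprod : Cardinal.mk (T × ULift.{u} ℕ) = Cardinal.mk T := by
    rw [Cardinal.mk_prod]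
    simp only [Cardinal.mk_uLift, Cardinal.mk_nat, Cardinal.lift_aleph0, Cardinal.lift_id]
    exact Cardinal.mul_eq_left hκ hκ Cardinal.aleph0_ne_zero
  have hI : Cardinal.mk (WithBot (Lex (T × ULift.{u} ℕ))) = Cardinal.mk T := by
    have h1 : Cardinal.mk (WithBot (Lex (T × ULift.{u} ℕ)))
        = Cardinal.mk (Lex (T × ULift.{u} ℕ)) + 1 := Cardinal.mk_option
    have h2 : Cardinal.mk (Lex (T × ULift.{u} ℕ)) = Cardinal.mk T := hprod
    rw [h1, h2]
    exact Cardinal.add_eq_left hκ (le_trans (by simp) hκ)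
  have h3 : Cardinal.mk ((WithBot (Lex (T × ULift.{u} ℕ))) × Bool) = Cardinal.mk T := by
    rw [Cardinal.mk_prod, hI, Cardinal.mk_bool]
    simp only [Cardinal.lift_uzero, Cardinal.lift_id, Cardinal.lift_ofNat]
    exact Cardinal.mul_eq_left hκ
      (le_trans ((Cardinal.nat_lt_aleph0 2).le.trans_eq' (by norm_num)) hκ) (by norm_num)
  rw [Cardinal.mk_option, h3]
  exact Cardinal.add_eq_left hκ (le_trans (by simp) hκ)

/-- The infinite case of the construction. -/
theorem build_inf {T : Type u} [Infinite T] (s₀ : T) :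
    ∃ σ : WeakSelection T, (∀ p : T, σ.le p s₀) ∧
      ∀ q : T, ∃ F G : Finset T, (∀ a ∈ F, σ.lt a q) ∧ (∀ b ∈ G, σ.lt q b) ∧
        ∀ r : T, r ≠ q → (∃ a ∈ F, a ≠ r ∧ ¬ σ.lt a r) ∨ (∃ b ∈ G, b ≠ r ∧ ¬ σ.lt r b) := by
  classical
  letI : LinearOrder T := linearOrderOfSTO WellOrderingRel
  haveI : Nonempty T := inferInstance
  obtain ⟨e₀⟩ := Cardinal.eq.1 (card_aux (T := T)).symm
  let e : T ≃ Option ((WithBot (Lex (T × ULift.{u} ℕ))) × Bool) :=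
    e₀.trans (Equiv.swap (e₀ s₀) none)
  have hes : e s₀ = none := by simp [e, Equiv.swap_apply_left]
  exact exists_sigma s₀ Rcode e none hes Rcode_total Rcode_asym Rcode_top
    (Rcode_iso ⊥ (fun m => not_lt_bot) hsucc_aux)

/-! #### The finite code tournament -/

/-- Finite tournament on `Option (Fin m)`: `u` lies below `v` iff `v = u + 1`
or `u ≥ v + 2`; `none` is the top. -/
def RF {m : ℕ} : Option (Fin m) → Option (Fin m) → Prop
  | none, _ => False
  | some _, none => True
  | some u, some v => v.val = u.val + 1 ∨ v.val + 2 ≤ u.val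

theorem RF_total {m : ℕ} : ∀ x y : Option (Fin m), x ≠ y → RF x y ∨ RF y x := by
  rintro (_ | u) (_ | v) hne
  · exact absurd rfl hne
  · exact Or.inr trivial
  · exact Or.inl trivial
  · have : u.val ≠ v.val := fun hh => hne (by rw [Fin.ext hh])
    show (v.val = u.val + 1 ∨ v.val + 2 ≤ u.val) ∨ (u.val = v.val + 1 ∨ u.val + 2 ≤ v.val)
    omega

theorem RF_asym {m : ℕ} : ∀ x y : Option (Fin m), RF x y → ¬ RF y x := by
  rintro (_ | u) (_ | v) h1 h2
  · exact h1
  · exact h1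
  · exact h2
  · revert h1 h2
    show (v.val = u.val + 1 ∨ v.val + 2 ≤ u.val) → ¬(u.val = v.val + 1 ∨ u.val + 2 ≤ v.val)
    omega

theorem RF_top {m : ℕ} : ∀ c : Option (Fin m), c ≠ none → RF c none := by
  rintro (_ | u) h
  · exact absurd rfl h
  · exact trivial

theorem cross (m lo hi : ℕ) (hm : 6 ≤ m) (hlo : lo < hi) (hhi : hi < m) :
    ∃ y, y < m ∧ ((y = hi + 1 ∨ y + 2 ≤ hi) ∧ (lo = y + 1 ∨ lo + 2 ≤ y)) := by
  by_cases h1 : hi + 1 < m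
  · exact ⟨hi + 1, h1, Or.inl rfl, Or.inr (by omega)⟩
  · by_cases h2 : 1 ≤ lo
    · exact ⟨lo - 1, by omega, Or.inr (by omega), Or.inl (by omega)⟩
    · exact ⟨2, by omega, Or.inr (by omega), Or.inr (by omega)⟩

theorem RF_iso {m : ℕ} (hm : 6 ≤ m) (q : Option (Fin m)) :
    ∃ F G : Finset (Option (Fin m)),
      (∀ a ∈ F, RF a q) ∧ (∀ b ∈ G, RF q b) ∧
      ∀ r, r ≠ q → (∃ a ∈ F, a ≠ r ∧ ¬ RF a r) ∨ (∃ b ∈ G, b ≠ r ∧ ¬ RF r b) := by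
  classical
  match q with
  | none =>
    refine ⟨Finset.univ.image some, ∅, ?_, by simp, ?_⟩
    · intro a ha
      obtain ⟨i, _, rfl⟩ := Finset.mem_image.1 ha
      exact trivial
    · rintro (_ | t) hr
      · exact absurd rfl hr
      · left
        by_cases ht : t.val + 1 < m
        · refine ⟨some ⟨t.val + 1, ht⟩, Finset.mem_image_of_mem _ (Finset.mem_univ _), ?_, ?_⟩
          · intro hh
            have : t.val + 1 = t.val := congrArg Fin.val (Option.some_injective _ hh)
            omega
          · show ¬(t.val = t.val + 1 + 1 ∨ t.val + 2 ≤ t.val + 1)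
            omega
        · have h0 : 0 < m := by omega
          refine ⟨some ⟨0, h0⟩, Finset.mem_image_of_mem _ (Finset.mem_univ _), ?_, ?_⟩
          · intro hh
            have : (0 : ℕ) = t.val := congrArg Fin.val (Option.some_injective _ hh)
            have := t.isLt
            omega
          · show ¬(t.val = 0 + 1 ∨ t.val + 2 ≤ 0)
            have := t.isLt
            omega
  | some s =>
    refine ⟨(Finset.univ.filter (fun y : Fin m => RF (some y) (some s))).image some,
            (Finset.univ.filter (fun y : Fin m => RF (some s) (some y))).image some,
            ?_, ?_, ?_⟩
    · intro a ha
      obtain ⟨y, hy, rfl⟩ := Finset.mem_image.1 ha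
      exact (Finset.mem_filter.1 hy).2
    · intro b hb
      obtain ⟨y, hy, rfl⟩ := Finset.mem_image.1 hb
      exact (Finset.mem_filter.1 hy).2
    · rintro (_ | t) hr
      · right
        have hy0 : ∃ y : Fin m, RF (some s) (some y) := by
          by_cases hs : s.val + 1 < m
          · exact ⟨⟨s.val + 1, hs⟩, Or.inl rfl⟩
          · refine ⟨⟨0, by omega⟩, Or.inr ?_⟩
            have := s.isLt
            show (0 : ℕ) + 2 ≤ s.val
            omega
        obtain ⟨y, hy⟩ := hy0
        refine ⟨some y, Finset.mem_image_of_mem _ (Finset.mem_filter.2 ⟨Finset.mem_univ _, hy⟩),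
          by simp, fun hh => hh⟩
      · have hst : t.val ≠ s.val := fun hh => hr (by rw [Fin.ext hh])
        rcases Nat.lt_or_ge t.val s.val with hts | hts
        · obtain ⟨y, hym, hy1, hy2⟩ := cross m t.val s.val hm hts s.isLt
          refine Or.inr ⟨some ⟨y, hym⟩,
            Finset.mem_image_of_mem _ (Finset.mem_filter.2 ⟨Finset.mem_univ _, ?_⟩), ?_, ?_⟩
          · show (y = s.val + 1 ∨ y + 2 ≤ s.val)
            exact hy1
          · intro hh
            have : y = t.val := congrArg Fin.val (Option.some_injective _ hh)
            omega
          · show ¬(y = t.val + 1 ∨ y + 2 ≤ t.val)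
            omega
        · have hst' : s.val < t.val := by omega
          obtain ⟨y, hym, hy1, hy2⟩ := cross m s.val t.val hm hst' t.isLt
          refine Or.inl ⟨some ⟨y, hym⟩,
            Finset.mem_image_of_mem _ (Finset.mem_filter.2 ⟨Finset.mem_univ _, ?_⟩), ?_, ?_⟩
          · show (s.val = y + 1 ∨ s.val + 2 ≤ y)
            exact hy2
          · intro hh
            have : y = t.val := congrArg Fin.val (Option.some_injective _ hh)
            omega
          · show ¬(t.val = y + 1 ∨ t.val + 2 ≤ y)
            omega

/-- The finite case of the construction. -/
theorem build_fin {T : Type u} [Fintype T] (hT : 7 ≤ Fintype.card T) (s₀ : T) :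
    ∃ σ : WeakSelection T, (∀ p : T, σ.le p s₀) ∧
      ∀ q : T, ∃ F G : Finset T, (∀ a ∈ F, σ.lt a q) ∧ (∀ b ∈ G, σ.lt q b) ∧
        ∀ r : T, r ≠ q → (∃ a ∈ F, a ≠ r ∧ ¬ σ.lt a r) ∨ (∃ b ∈ G, b ≠ r ∧ ¬ σ.lt r b) := by
  classical
  obtain ⟨m, hm⟩ : ∃ m, Fintype.card T = m + 1 := ⟨Fintype.card T - 1, by omega⟩
  have hm6 : 6 ≤ m := by omega
  let e : T ≃ Option (Fin m) :=
    (((Fintype.equivFin T).trans ((finCongr hm).trans (finSuccEquiv m)))).trans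
      (Equiv.swap ((((Fintype.equivFin T).trans ((finCongr hm).trans (finSuccEquiv m)))) s₀) none)
  have hes : e s₀ = none := by simp [e, Equiv.swap_apply_left]
  exact exists_sigma s₀ RF e none hes RF_total RF_asym RF_top (RF_iso hm6)

end StmtAux

/-- Lemma 2.4: if `P` is a partition of `X` with `|P| ≥ 7` and `S ∈ P`, then
`P` has a weak selection `σ` such that `S` is the `≤_σ`-maximal element of `P`
and every member of `P` is open in the selection topology of `σ * h`, for
every choice of weak selections `h p` on the blocks. -/
theorem stmt3 {X : Type*} (P : Set (Set X)) (blk : X → Set X)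
    (hmem : ∀ x : X, x ∈ blk x) (hblk : ∀ x, blk x ∈ P)
    (huniq : ∀ x : X, ∀ p ∈ P, x ∈ p → p = blk x)
    (hne : ∀ p ∈ P, Set.Nonempty p)
    (hcard : 7 ≤ Cardinal.mk ↥P)
    (S : Set X) (hS : S ∈ P) :
    ∃ σ : WeakSelection ↥P,
      (∀ p : ↥P, σ.le p ⟨S, hS⟩) ∧
      ∀ (h : ∀ p : ↥P, WeakSelection ↥(p : Set X)) (g : WeakSelection X),
        IsStar P blk hblk σ h g → ∀ p ∈ P, IsOpen[g.selTop] p := by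
  classical
  cases finite_or_infinite ↥P with
  | inl hfin =>
    haveI : Fintype ↥P := Fintype.ofFinite _
    have h7 : 7 ≤ Fintype.card ↥P := by
      have hc := hcard
      rw [Cardinal.mk_fintype] at hc
      exact_mod_cast hc
    obtain ⟨σ, hmax, hiso⟩ := StmtAux.build_fin h7 (⟨S, hS⟩ : ↥P)
    exact ⟨σ, hmax, fun h g hg => StmtAux.master P blk hmem hblk huniq hne σ hiso h g hg⟩
  | inr hinf =>
    obtain ⟨σ, hmax, hiso⟩ := StmtAux.build_inf (⟨S, hS⟩ : ↥P)
    exact ⟨σ, hmax, fun h g hg => StmtAux.master P blk hmem hblk huniq hne σ hiso h g hg⟩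
end

section
/- Let P be a partition of a set X, let S ∈ P, and suppose P \ {S} = Q ∪ R for disjoint subfamilies Q, R ⊆ P with |Q| ≥ 6 and |R| ≥ 6. Then there is a weak selection σ for P such that A ≤_σ B for every A ∈ Q ∪ {S} and B ∈ {S} ∪ R, and, for every choice of weak selections h_P for each P ∈ P, every member of P is open in the selection topology T_{σ*h} on X. -/
open Topology

namespace Stmt4Aux

variable {α : Type*}

/-- `b` is an immediate successor of `a` w.r.t. the strict relation `r`. -/
def Cv (r : α → α → Prop) (a b : α) : Prop := r a b ∧ ∀ c, ¬(r a c ∧ r c b)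

/-- The tournament obtained from `r` by reversing all immediate-successor edges. -/
def Beat (r : α → α → Prop) (a b : α) : Prop := (r a b ∧ ¬ Cv r a b) ∨ Cv r b a

section

variable {r : α → α → Prop}

theorem rasym (htr : Transitive r) (hirr : ∀ x, ¬ r x x) {x y} (h1 : r x y) (h2 : r y x) :
    False := hirr _ (htr h1 h2)

theorem beat_irrefl (hirr : ∀ x, ¬ r x x) (x : α) : ¬ Beat r x x := by
  rintro (⟨h, -⟩ | ⟨h, -⟩) <;> exact hirr _ h

theorem beat_asym (htr : Transitive r) (hirr : ∀ x, ¬ r x x) {x y}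
    (h1 : Beat r x y) (h2 : Beat r y x) : False := by
  rcases h1 with ⟨h1, hc1⟩ | hc1 <;> rcases h2 with ⟨h2, hc2⟩ | hc2
  · exact rasym htr hirr h1 h2
  · exact hc1 hc2
  · exact hc2 hc1
  · exact rasym htr hirr hc1.1 hc2.1

theorem beat_total (htri : ∀ x y : α, x = y ∨ r x y ∨ r y x) {x y} (hne : x ≠ y) :
    Beat r x y ∨ Beat r y x := by
  rcases htri x y with rfl | h | h
  · exact absurd rfl hne
  · by_cases hc : Cv r x y
    · exact Or.inr (Or.inr hc)
    · exact Or.inl (Or.inl ⟨h, hc⟩)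
  · by_cases hc : Cv r y x
    · exact Or.inl (Or.inr hc)
    · exact Or.inr (Or.inl ⟨h, hc⟩)

theorem beat_of_gap (htr : Transitive r) {x y c} (h1 : r x c) (h2 : r c y) : Beat r x y :=
  Or.inl ⟨htr h1 h2, fun hc => hc.2 c ⟨h1, h2⟩⟩

theorem beat_of_cv {x y} (h : Cv r y x) : Beat r x y := Or.inr h

end

theorem gadget (r : α → α → Prop) (htr : Transitive r) (hirr : ∀ x, ¬ r x x)
    (htri : ∀ x y : α, x = y ∨ r x y ∨ r y x) (hwf : WellFounded r)
    (t : Fin 6 → α) (hmono : ∀ i j : Fin 6, i < j → r (t i) (t j))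
    (htop : ∀ a, (∀ i, a ≠ t i) → r a (t 0)) :
    (∀ p : α, ∃ A B : List α, B ≠ [] ∧ (∀ a ∈ A, Beat r a p) ∧ (∀ b ∈ B, Beat r p b) ∧
      ∀ u, u ≠ p → (∃ a ∈ A, Beat r u a) ∨ (∃ b ∈ B, Beat r b u)) ∧
    (∃ C : List α, C ≠ [] ∧ ∀ u : α, ∃ c ∈ C, Beat r u c) := by
  have fin6 : ∀ i : Fin 6, i = 0 ∨ i = 1 ∨ i = 2 ∨ i = 3 ∨ i = 4 ∨ i = 5 := by decide
  -- if `r (t i) (t k)` then `i < k`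
  have tltrev : ∀ {i k : Fin 6}, r (t i) (t k) → i < k := by
    intro i k h
    rcases lt_trichotomy i k with h' | rfl | h'
    · exact h'
    · exact absurd h (hirr _)
    · exact absurd (hmono _ _ h') fun h2 => rasym htr hirr h h2
  have tlt : ∀ u, (∀ i, u ≠ t i) → ∀ i : Fin 6, r u (t i) := by
    intro u hu i
    rcases eq_or_ne i 0 with rfl | h
    · exact htop u hu
    · exact htr (htop u hu) (hmono 0 i (Fin.pos_of_ne_zero h))
  -- anything strictly between `t i` and `t j` is some `t k`, `i < k < j`
  have tween : ∀ {i j : Fin 6} {c}, r (t i) c → r c (t j) → ∃ k : Fin 6, c = t k ∧ i < k ∧ k < j := by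
    intro i j c h1 h2
    by_cases hc : ∀ k, c ≠ t k
    · have h0 : r c (t 0) := htop c hc
      have : r (t i) (t 0) := htr h1 h0
      have hi0 : i < 0 := tltrev this
      exact absurd hi0 (Fin.not_lt_zero _ : ¬ _)
    · push_neg at hc
      obtain ⟨k, rfl⟩ := hc
      exact ⟨k, rfl, tltrev h1, tltrev h2⟩
  have cv_t : ∀ i j : Fin 6, i < j → (∀ k : Fin 6, ¬(i < k ∧ k < j)) → Cv r (t i) (t j) := by
    intro i j hij hnb
    refine ⟨hmono _ _ hij, fun c ⟨h1, h2⟩ => ?_⟩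
    obtain ⟨k, rfl, hk1, hk2⟩ := tween h1 h2
    exact hnb k ⟨hk1, hk2⟩
  have cv01 : Cv r (t 0) (t 1) := cv_t 0 1 (by decide) (by decide)
  have cv12 : Cv r (t 1) (t 2) := cv_t 1 2 (by decide) (by decide)
  have cv23 : Cv r (t 2) (t 3) := cv_t 2 3 (by decide) (by decide)
  have cv34 : Cv r (t 3) (t 4) := cv_t 3 4 (by decide) (by decide)
  have cv45 : Cv r (t 4) (t 5) := cv_t 4 5 (by decide) (by decide)
  have hsucc : ∀ x z, r x z → ∃ y, Cv r x y ∧ (y = z ∨ r y z) := by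
    intro x z hxz
    have hne : {w | r x w}.Nonempty := ⟨z, hxz⟩
    refine ⟨hwf.min _ hne, ⟨hwf.min_mem _ hne, fun c ⟨h1, h2⟩ => hwf.not_lt_min _ h1 h2⟩, ?_⟩
    rcases htri (hwf.min _ hne) z with h | h | h
    · exact Or.inl h
    · exact Or.inr h
    · exact absurd h (hwf.not_lt_min _ hxz)
  constructor
  · intro p
    by_cases h5 : p = t 5
    · subst h5
      refine ⟨[t 3, t 1], [t 4], by simp, ?_, ?_, ?_⟩
      · intro a ha
        simp only [List.mem_cons, List.not_mem_nil, or_false] at ha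
        rcases ha with rfl | rfl
        · exact beat_of_gap htr (hmono 3 4 (by decide)) (hmono 4 5 (by decide))
        · exact beat_of_gap htr (hmono 1 2 (by decide)) (hmono 2 5 (by decide))
      · intro b hb
        simp only [List.mem_cons, List.not_mem_nil, or_false] at hb
        rcases hb with rfl
        exact beat_of_cv cv45
      · intro u hup
        by_cases h4 : u = t 4
        · exact Or.inl ⟨t 3, by simp, h4 ▸ beat_of_cv cv34⟩
        by_cases h3 : u = t 3
        · exact Or.inr ⟨t 4, by simp, beat_of_cv (h3 ▸ cv34)⟩
        by_cases h2 : u = t 2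
        · exact Or.inl ⟨t 1, by simp, h2 ▸ beat_of_cv cv12⟩
        by_cases h1 : u = t 1
        · exact Or.inl ⟨t 3, by simp, h1 ▸ beat_of_gap htr (hmono 1 2 (by decide)) (hmono 2 3 (by decide))⟩
        by_cases h0 : u = t 0
        · exact Or.inl ⟨t 3, by simp, h0 ▸ beat_of_gap htr (hmono 0 1 (by decide)) (hmono 1 3 (by decide))⟩
        · have hu : ∀ i, u ≠ t i := by
            intro i
            rcases fin6 i with rfl | rfl | rfl | rfl | rfl | rfl <;> assumption
          exact Or.inl ⟨t 3, by simp, beat_of_gap htr (htop u hu) (hmono 0 3 (by decide))⟩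
    · by_cases h4 : p = t 4
      · subst h4
        refine ⟨[t 5], [t 3], by simp, ?_, ?_, ?_⟩
        · intro a ha
          simp only [List.mem_cons, List.not_mem_nil, or_false] at ha
          rcases ha with rfl
          exact beat_of_cv cv45
        · intro b hb
          simp only [List.mem_cons, List.not_mem_nil, or_false] at hb
          rcases hb with rfl
          exact beat_of_cv cv34
        · intro u hup
          by_cases hu5 : u = t 5
          · exact Or.inr ⟨t 3, by simp, hu5 ▸ beat_of_gap htr (hmono 3 4 (by decide)) (hmono 4 5 (by decide))⟩
          by_cases hu3 : u = t 3
          · exact Or.inl ⟨t 5, by simp, hu3 ▸ beat_of_gap htr (hmono 3 4 (by decide)) (hmono 4 5 (by decide))⟩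
          by_cases hu2 : u = t 2
          · exact Or.inl ⟨t 5, by simp, hu2 ▸ beat_of_gap htr (hmono 2 3 (by decide)) (hmono 3 5 (by decide))⟩
          by_cases hu1 : u = t 1
          · exact Or.inl ⟨t 5, by simp, hu1 ▸ beat_of_gap htr (hmono 1 2 (by decide)) (hmono 2 5 (by decide))⟩
          by_cases hu0 : u = t 0
          · exact Or.inl ⟨t 5, by simp, hu0 ▸ beat_of_gap htr (hmono 0 1 (by decide)) (hmono 1 5 (by decide))⟩
          · have hu : ∀ i, u ≠ t i := by
              intro i
              rcases fin6 i with rfl | rfl | rfl | rfl | rfl | rfl <;> assumption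
            exact Or.inl ⟨t 5, by simp, beat_of_gap htr (htop u hu) (hmono 0 5 (by decide))⟩
      by_cases h3 : p = t 3
      · subst h3
        refine ⟨[t 4], [t 5], by simp, ?_, ?_, ?_⟩
        · intro a ha
          simp only [List.mem_cons, List.not_mem_nil, or_false] at ha
          rcases ha with rfl
          exact beat_of_cv cv34
        · intro b hb
          simp only [List.mem_cons, List.not_mem_nil, or_false] at hb
          rcases hb with rfl
          exact beat_of_gap htr (hmono 3 4 (by decide)) (hmono 4 5 (by decide))
        · intro u hup
          by_cases hu4 : u = t 4
          · exact Or.inr ⟨t 5, by simp, beat_of_cv (hu4 ▸ cv45)⟩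
          by_cases hu5 : u = t 5
          · exact Or.inl ⟨t 4, by simp, hu5 ▸ beat_of_cv cv45⟩
          by_cases hu2 : u = t 2
          · exact Or.inl ⟨t 4, by simp, hu2 ▸ beat_of_gap htr (hmono 2 3 (by decide)) (hmono 3 4 (by decide))⟩
          by_cases hu1 : u = t 1
          · exact Or.inl ⟨t 4, by simp, hu1 ▸ beat_of_gap htr (hmono 1 2 (by decide)) (hmono 2 4 (by decide))⟩
          by_cases hu0 : u = t 0
          · exact Or.inl ⟨t 4, by simp, hu0 ▸ beat_of_gap htr (hmono 0 1 (by decide)) (hmono 1 4 (by decide))⟩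
          · have hu : ∀ i, u ≠ t i := by
              intro i
              rcases fin6 i with rfl | rfl | rfl | rfl | rfl | rfl <;> assumption
            exact Or.inl ⟨t 4, by simp, beat_of_gap htr (htop u hu) (hmono 0 4 (by decide))⟩
      by_cases h2 : p = t 2
      · subst h2
        refine ⟨[t 3], [t 4, t 1], by simp, ?_, ?_, ?_⟩
        · intro a ha
          simp only [List.mem_cons, List.not_mem_nil, or_false] at ha
          rcases ha with rfl
          exact beat_of_cv cv23
        · intro b hb
          simp only [List.mem_cons, List.not_mem_nil, or_false] at hb
          rcases hb with rfl | rfl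
          · exact beat_of_gap htr (hmono 2 3 (by decide)) (hmono 3 4 (by decide))
          · exact beat_of_cv cv12
        · intro u hup
          by_cases hu3 : u = t 3
          · exact Or.inr ⟨t 4, by simp, beat_of_cv (hu3 ▸ cv34)⟩
          by_cases hu4 : u = t 4
          · exact Or.inl ⟨t 3, by simp, hu4 ▸ beat_of_cv cv34⟩
          by_cases hu5 : u = t 5
          · exact Or.inr ⟨t 1, by simp, hu5 ▸ beat_of_gap htr (hmono 1 2 (by decide)) (hmono 2 5 (by decide))⟩
          by_cases hu1 : u = t 1
          · exact Or.inl ⟨t 3, by simp, hu1 ▸ beat_of_gap htr (hmono 1 2 (by decide)) (hmono 2 3 (by decide))⟩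
          by_cases hu0 : u = t 0
          · exact Or.inl ⟨t 3, by simp, hu0 ▸ beat_of_gap htr (hmono 0 1 (by decide)) (hmono 1 3 (by decide))⟩
          · have hu : ∀ i, u ≠ t i := by
              intro i
              rcases fin6 i with rfl | rfl | rfl | rfl | rfl | rfl <;> assumption
            exact Or.inl ⟨t 3, by simp, beat_of_gap htr (htop u hu) (hmono 0 3 (by decide))⟩
      -- generic case: `p` has `t 2` strictly above it
      · have Hp2 : r p (t 2) := by
          by_cases h0 : p = t 0
          · exact h0 ▸ hmono 0 2 (by decide)
          by_cases h1 : p = t 1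
          · exact h1 ▸ hmono 1 2 (by decide)
          · have hu : ∀ i, p ≠ t i := by
              intro i
              rcases fin6 i with rfl | rfl | rfl | rfl | rfl | rfl <;> assumption
            exact tlt p hu 2
        obtain ⟨p1, hc1, hle1⟩ := hsucc p (t 2) Hp2
        have h13 : r p1 (t 3) := by
          rcases hle1 with rfl | h
          · exact hmono 2 3 (by decide)
          · exact htr h (hmono 2 3 (by decide))
        obtain ⟨p2, hc2, hle2⟩ := hsucc p1 (t 3) h13
        have h24 : r p2 (t 4) := by
          rcases hle2 with rfl | h
          · exact hmono 3 4 (by decide)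
          · exact htr h (hmono 3 4 (by decide))
        obtain ⟨p3, hc3, hle3⟩ := hsucc p2 (t 4) h24
        have h35 : r p3 (t 5) := by
          rcases hle3 with rfl | h
          · exact hmono 4 5 (by decide)
          · exact htr h (hmono 4 5 (by decide))
        obtain ⟨p4, hc4, -⟩ := hsucc p3 (t 5) h35
        refine ⟨[p1], [p2, p4], by simp, ?_, ?_, ?_⟩
        · intro a ha
          simp only [List.mem_cons, List.not_mem_nil, or_false] at ha
          rcases ha with rfl
          exact beat_of_cv hc1
        · intro b hb
          simp only [List.mem_cons, List.not_mem_nil, or_false] at hb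
          rcases hb with rfl | rfl
          · exact beat_of_gap htr hc1.1 hc2.1
          · exact beat_of_gap htr hc1.1 (htr hc2.1 (htr hc3.1 hc4.1))
        · intro u hup
          rcases htri u p with rfl | hup' | hpu
          · exact absurd rfl hup
          · exact Or.inl ⟨p1, by simp, beat_of_gap htr hup' hc1.1⟩
          rcases htri u p1 with rfl | h1 | h1
          · exact Or.inr ⟨p2, by simp, beat_of_cv hc2⟩
          · exact absurd ⟨hpu, h1⟩ (hc1.2 u)
          rcases htri u p2 with rfl | h2 | h2
          · exact Or.inl ⟨p1, by simp, beat_of_cv hc2⟩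
          · exact absurd ⟨h1, h2⟩ (hc2.2 u)
          rcases htri u p3 with rfl | h3 | h3
          · exact Or.inr ⟨p4, by simp, beat_of_cv hc4⟩
          · exact absurd ⟨h2, h3⟩ (hc3.2 u)
          rcases htri u p4 with rfl | h4 | h4
          · exact Or.inr ⟨p2, by simp, beat_of_gap htr hc3.1 hc4.1⟩
          · exact absurd ⟨h3, h4⟩ (hc4.2 u)
          · exact Or.inr ⟨p2, by simp, beat_of_gap htr hc3.1 (htr hc4.1 h4)⟩
  · refine ⟨[t 3, t 4, t 5], by simp, ?_⟩
    intro u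
    by_cases h3 : u = t 3
    · exact ⟨t 5, by simp, h3 ▸ beat_of_gap htr (hmono 3 4 (by decide)) (hmono 4 5 (by decide))⟩
    by_cases h4 : u = t 4
    · exact ⟨t 3, by simp, h4 ▸ beat_of_cv cv34⟩
    by_cases h5 : u = t 5
    · exact ⟨t 4, by simp, h5 ▸ beat_of_cv cv45⟩
    by_cases h2 : u = t 2
    · exact ⟨t 4, by simp, h2 ▸ beat_of_gap htr (hmono 2 3 (by decide)) (hmono 3 4 (by decide))⟩
    by_cases h1 : u = t 1
    · exact ⟨t 3, by simp, h1 ▸ beat_of_gap htr (hmono 1 2 (by decide)) (hmono 2 3 (by decide))⟩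
    by_cases h0 : u = t 0
    · exact ⟨t 3, by simp, h0 ▸ beat_of_gap htr (hmono 0 1 (by decide)) (hmono 1 3 (by decide))⟩
    · have hu : ∀ i, u ≠ t i := by
        intro i
        rcases fin6 i with rfl | rfl | rfl | rfl | rfl | rfl <;> assumption
      exact ⟨t 3, by simp, beat_of_gap htr (htop u hu) (hmono 0 3 (by decide))⟩

end Stmt4Aux

namespace Stmt4Aux

theorem exists_tournament (β : Type*) (e6 : Nonempty (Fin 6 ↪ β)) :
    ∃ bt : β → β → Prop,
      (∀ x, ¬ bt x x) ∧
      (∀ {x y}, bt x y → bt y x → False) ∧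
      (∀ x y, x ≠ y → bt x y ∨ bt y x) ∧
      (∀ p, ∃ A B : List β, B ≠ [] ∧ (∀ a ∈ A, bt a p) ∧ (∀ b ∈ B, bt p b) ∧
        ∀ u, u ≠ p → (∃ a ∈ A, bt u a) ∨ (∃ b ∈ B, bt b u)) ∧
      (∃ C : List β, C ≠ [] ∧ ∀ u, ∃ c ∈ C, bt u c) := by
  classical
  obtain ⟨e⟩ := e6
  let lex : (β ⊕ Fin 6) → (β ⊕ Fin 6) → Prop :=
    Sum.Lex (WellOrderingRel) (· < ·)
  haveI : IsWellOrder (β ⊕ Fin 6) lex := by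
    unfold lex; infer_instance
  let φ : β → β ⊕ Fin 6 := fun q => if h : ∃ i, e i = q then .inr h.choose else .inl q
  have φe : ∀ i, φ (e i) = .inr i := by
    intro i
    have hex : ∃ j, e j = e i := ⟨i, rfl⟩
    simp only [φ, dif_pos hex]
    exact congrArg _ (e.injective hex.choose_spec)
  have inlφ : ∀ x, (¬∃ i, e i = x) → φ x = Sum.inl x := fun x hx => dif_neg hx
  have inrφ : ∀ x (hx : ∃ i, e i = x), φ x = Sum.inr hx.choose := fun x hx => dif_pos hx
  have φinj : Function.Injective φ := by
    intro a b h
    by_cases ha : ∃ i, e i = a <;> by_cases hb : ∃ i, e i = b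
    · rw [inrφ a ha, inrφ b hb, Sum.inr.injEq] at h
      rw [← ha.choose_spec, ← hb.choose_spec, h]
    · rw [inrφ a ha, inlφ b hb] at h; simp at h
    · rw [inlφ a ha, inrφ b hb] at h; simp at h
    · rw [inlφ a ha, inlφ b hb, Sum.inl.injEq] at h; exact h
  let r : β → β → Prop := fun a b => lex (φ a) (φ b)
  have htr : Transitive r := fun a b c h1 h2 => IsTrans.trans (r := lex) _ _ _ h1 h2
  have hirr : ∀ x, ¬ r x x := fun x h => Std.Irrefl.irrefl (r := lex) (φ x) h
  have htri : ∀ x y : β, x = y ∨ r x y ∨ r y x := by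
    intro x y
    rcases trichotomous_of lex (φ x) (φ y) with h | h | h
    · exact Or.inr (Or.inl h)
    · exact Or.inl (φinj h)
    · exact Or.inr (Or.inr h)
  have hwf : WellFounded r := InvImage.wf φ (IsWellFounded.wf (r := lex))
  have hmono : ∀ i j : Fin 6, i < j → r (e i) (e j) := by
    intro i j hij
    show lex (φ (e i)) (φ (e j))
    rw [φe, φe]
    exact Sum.Lex.inr hij
  have htop : ∀ a, (∀ i, a ≠ e i) → r a (e 0) := by
    intro a ha
    have : φ a = .inl a := by
      refine dif_neg ?_
      rintro ⟨i, hi⟩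
      exact ha i hi.symm
    show lex (φ a) (φ (e 0))
    rw [this, φe]
    exact Sum.Lex.sep _ _
  obtain ⟨hkill, htopC⟩ := gadget r htr hirr htri hwf e hmono htop
  exact ⟨Beat r, beat_irrefl hirr, fun h1 h2 => beat_asym htr hirr h1 h2,
    fun x y h => beat_total htri h, hkill, htopC⟩

end Stmt4Aux


open Stmt4Aux in
/-- Corollary 2.5: if `P \ {S} = Q ∪ R` with `Q, R` disjoint, `|Q| ≥ 6` and
`|R| ≥ 6`, then `P` has a weak selection `σ` with `A ≤_σ B` for all
`A ∈ Q ∪ {S}`, `B ∈ {S} ∪ R`, such that every member of `P` is open in the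
selection topology of `σ * h`, for every choice of weak selections `h p`. -/
theorem stmt4 {X : Type*} (P : Set (Set X)) (blk : X → Set X)
    (hmem : ∀ x : X, x ∈ blk x) (hblk : ∀ x, blk x ∈ P)
    (huniq : ∀ x : X, ∀ p ∈ P, x ∈ p → p = blk x)
    (hne : ∀ p ∈ P, Set.Nonempty p)
    (S : Set X) (hS : S ∈ P)
    (Q R : Set (Set X)) (hQP : Q ⊆ P) (hRP : R ⊆ P)
    (hdisj : Disjoint Q R) (hunion : Q ∪ R = P \ {S})
    (hQ6 : 6 ≤ Cardinal.mk ↥Q) (hR6 : 6 ≤ Cardinal.mk ↥R) :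
    ∃ σ : WeakSelection ↥P,
      (∀ A (hA : A ∈ P), ∀ B (hB : B ∈ P), (A ∈ Q ∨ A = S) → (B = S ∨ B ∈ R) →
        σ.le ⟨A, hA⟩ ⟨B, hB⟩) ∧
      ∀ (h : ∀ p : ↥P, WeakSelection ↥(p : Set X)) (g : WeakSelection X),
        IsStar P blk hblk σ h g → ∀ p ∈ P, IsOpen[g.selTop] p := by
  classical
  have hSQ : S ∉ Q := by
    intro h
    have : S ∈ P \ {S} := hunion ▸ Set.mem_union_left R h
    exact this.2 rfl
  have hSR : S ∉ R := by
    intro h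
    have : S ∈ P \ {S} := hunion ▸ Set.mem_union_right Q h
    exact this.2 rfl
  have hQnR : ∀ {a : Set X}, a ∈ Q → a ∉ R := fun {a} ha => Set.disjoint_left.mp hdisj ha
  have zone : ∀ a ∈ P, a = S ∨ a ∈ Q ∨ a ∈ R := by
    intro a ha
    by_cases h : a = S
    · exact Or.inl h
    · have : a ∈ Q ∪ R := by rw [hunion]; exact ⟨ha, h⟩
      exact Or.inr this
  have hembQ : Nonempty (Fin 6 ↪ ↥Q) := by
    rw [← Cardinal.lift_mk_le']
    simpa using hQ6
  have hembR : Nonempty (Fin 6 ↪ ↥R) := by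
    rw [← Cardinal.lift_mk_le']
    simpa using hR6
  obtain ⟨btQ, hQirr, hQasym, hQtot, hQkill, hQC⟩ := Stmt4Aux.exists_tournament ↥Q hembQ
  obtain ⟨btR, hRirr, hRasym, hRtot, hRkill, hRC⟩ := Stmt4Aux.exists_tournament ↥R hembR
  obtain ⟨tn, tnIrr, tnAsym, tnTot, tnQout, tnSR, tnQQ, tnRR⟩ :
      ∃ tn : Set X → Set X → Prop,
        (∀ a, ¬ tn a a) ∧
        (∀ {a b}, tn a b → tn b a → False) ∧
        (∀ a b, a ∈ P → b ∈ P → a ≠ b → tn a b ∨ tn b a) ∧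
        (∀ {a b}, a ∈ Q → b ∉ Q → tn a b) ∧
        (∀ {b}, b ∈ R → tn S b) ∧
        (∀ {a b} (ha : a ∈ Q) (hb : b ∈ Q), btQ ⟨a, ha⟩ ⟨b, hb⟩ → tn a b) ∧
        (∀ {a b} (ha : a ∈ R) (hb : b ∈ R), btR ⟨b, hb⟩ ⟨a, ha⟩ → tn a b) := by
    refine ⟨fun a b =>
      (∃ (ha : a ∈ Q) (hb : b ∈ Q), btQ ⟨a, ha⟩ ⟨b, hb⟩) ∨
      (a ∈ Q ∧ b ∉ Q) ∨ (a = S ∧ b ∈ R) ∨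
      (∃ (ha : a ∈ R) (hb : b ∈ R), btR ⟨b, hb⟩ ⟨a, ha⟩), ?_, ?_, ?_,
      fun ha hb => Or.inr (Or.inl ⟨ha, hb⟩),
      fun hb => Or.inr (Or.inr (Or.inl ⟨rfl, hb⟩)),
      fun ha hb h' => Or.inl ⟨ha, hb, h'⟩,
      fun ha hb h' => Or.inr (Or.inr (Or.inr ⟨ha, hb, h'⟩))⟩
    · rintro a (⟨h1, h2, h'⟩ | ⟨h1, h2⟩ | ⟨rfl, h2⟩ | ⟨h1, h2, h'⟩)
      · exact hQirr _ h'
      · exact h2 h1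
      · exact hSR h2
      · exact hRirr _ h'
    · rintro a b (⟨haQ, hbQ, h1⟩ | ⟨haQ, hbnQ⟩ | ⟨haS, hbR⟩ | ⟨haR, hbR, h1⟩)
        (⟨hbQ2, haQ2, h2⟩ | ⟨hbQ2, hanQ2⟩ | ⟨hbS, haR2⟩ | ⟨hbR2, haR2, h2⟩)
      · exact hQasym h1 h2
      · exact hanQ2 haQ
      · exact hSQ (hbS ▸ hbQ)
      · exact hQnR hbQ hbR2
      · exact hbnQ hbQ2
      · exact hbnQ hbQ2
      · exact hQnR haQ haR2
      · exact hQnR haQ haR2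
      · exact hSQ (haS ▸ haQ2)
      · exact hQnR hbQ2 hbR
      · exact hSR (hbS ▸ hbR)
      · exact hSR (haS ▸ haR2)
      · exact hQnR hbQ2 hbR
      · exact hQnR hbQ2 hbR
      · exact hSR (hbS ▸ hbR)
      · exact hRasym h1 h2
    · intro a b ha hb hneq
      rcases zone a ha with haS | haQ | haR <;> rcases zone b hb with hbS | hbQ | hbR
      · exact absurd (haS.trans hbS.symm) hneq
      · exact Or.inr (Or.inr (Or.inl ⟨hbQ, fun h' => hSQ (haS ▸ h')⟩))
      · exact Or.inl (Or.inr (Or.inr (Or.inl ⟨haS, hbR⟩)))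
      · exact Or.inl (Or.inr (Or.inl ⟨haQ, fun h' => hSQ (hbS ▸ h')⟩))
      · have hne' : (⟨a, haQ⟩ : ↥Q) ≠ ⟨b, hbQ⟩ := fun h' => hneq (congrArg Subtype.val h')
        rcases hQtot _ _ hne' with h' | h'
        · exact Or.inl (Or.inl ⟨haQ, hbQ, h'⟩)
        · exact Or.inr (Or.inl ⟨hbQ, haQ, h'⟩)
      · exact Or.inl (Or.inr (Or.inl ⟨haQ, fun h' => hQnR h' hbR⟩))
      · exact Or.inr (Or.inr (Or.inr (Or.inl ⟨hbS, haR⟩)))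
      · exact Or.inr (Or.inr (Or.inl ⟨hbQ, fun h' => hQnR h' haR⟩))
      · have hne' : (⟨a, haR⟩ : ↥R) ≠ ⟨b, hbR⟩ := fun h' => hneq (congrArg Subtype.val h')
        rcases hRtot _ _ hne' with h' | h'
        · exact Or.inr (Or.inr (Or.inr (Or.inr ⟨hbR, haR, h'⟩)))
        · exact Or.inl (Or.inr (Or.inr (Or.inr ⟨haR, hbR, h'⟩)))
  obtain ⟨σ, hσle, hσlerefl, hσlt⟩ :
      ∃ σ : WeakSelection ↥P,
        (∀ x y : ↥P, tn x.1 y.1 → σ.le x y) ∧ (∀ x : ↥P, σ.le x x) ∧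
        (∀ x y : ↥P, σ.lt x y ↔ ((x : Set X) ≠ (y : Set X) ∧ tn x.1 y.1)) := by
    refine ⟨⟨fun x y => if tn x.1 y.1 then x else y, ?_, ?_⟩, ?_, ?_, ?_⟩
    · intro x y; split
      · exact Or.inl rfl
      · exact Or.inr rfl
    · intro x y
      by_cases hxy : x = y
      · subst hxy; rfl
      · have hv : x.1 ≠ y.1 := fun h' => hxy (Subtype.ext h')
        rcases tnTot x.1 y.1 x.2 y.2 hv with h' | h'
        · rw [if_pos h', if_neg (fun h'' => tnAsym h' h'')]
        · rw [if_neg (fun h'' => tnAsym h'' h'), if_pos h']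
    · intro x y h'
      show (if tn x.1 y.1 then x else y) = x
      rw [if_pos h']
    · intro x
      show (if tn x.1 x.1 then x else x) = x
      rw [ite_self]
    · intro x y
      constructor
      · rintro ⟨hle, hne'⟩
        have hv : x.1 ≠ y.1 := fun h' => hne' (Subtype.ext h')
        refine ⟨hv, ?_⟩
        by_contra ht
        have heq : (if tn x.1 y.1 then x else y) = x := hle
        rw [if_neg ht] at heq
        exact hne' heq.symm
      · rintro ⟨hv, ht⟩
        exact ⟨by show (if tn x.1 y.1 then x else y) = x; rw [if_pos ht],
          fun h' => hv (congrArg Subtype.val h')⟩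
  refine ⟨σ, ?_, ?_⟩
  · rintro A hA B hB (hAQ | rfl) (rfl | hBR)
    · exact hσle _ _ (tnQout hAQ hSQ)
    · exact hσle _ _ (tnQout hAQ (fun h' => hQnR h' hBR))
    · exact hσlerefl _
    · exact hσle _ _ (tnSR hBR)
  · intro h g hst p hp
    have hg1 := hst.1
    have key : ∀ x y : X, blk x ≠ blk y → (g.lt x y ↔ tn (blk x) (blk y)) := by
      intro x y hxy
      rw [hg1 x y hxy, hσlt]
      exact ⟨fun h' => h'.2, fun h' => ⟨hxy, h'⟩⟩
    have core : ∀ p' ∈ P, ∀ LO HI : List (Set X), (∀ o ∈ LO, o ∈ P) → (∀ o ∈ LO, tn o p') →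
        (∀ b ∈ HI, b ∈ P) → (∀ b ∈ HI, tn p' b) →
        (∀ u ∈ P, u ≠ p' → (∃ o ∈ LO, tn u o) ∨ (∃ b ∈ HI, tn b u)) →
        IsOpen[g.selTop] p' := by
      intro p' hp' LO HI hLOP hLO hHIP hHI hkill
      have hXne : Nonempty X := ⟨(hne p' hp').some⟩
      let pt : Set X → X := fun s => if h' : s ∈ P then (hne s h').some else Classical.arbitrary X
      have hpt : ∀ s, s ∈ P → pt s ∈ s := by
        intro s hs
        simp only [pt, dif_pos hs]
        exact (hne s hs).some_mem
      have hbpt : ∀ s, s ∈ P → blk (pt s) = s := fun s hs => (huniq _ s hs (hpt s hs)).symm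
      have hU : p' = (⋂ o ∈ {o : Set X | o ∈ LO}, {y | g.lt (pt o) y}) ∩
          (⋂ b ∈ {b : Set X | b ∈ HI}, {y | g.lt y (pt b)}) := by
        ext y
        simp only [Set.mem_inter_iff, Set.mem_iInter, Set.mem_setOf_eq]
        constructor
        · intro hyp
          have hby : blk y = p' := (huniq y p' hp' hyp).symm
          constructor
          · intro o ho
            have hoP := hLOP o ho
            have hop : o ≠ p' := fun he => tnIrr p' (he ▸ hLO o ho)
            have hblo : blk (pt o) ≠ blk y := by rw [hbpt o hoP, hby]; exact hop
            rw [key _ _ hblo, hbpt o hoP, hby]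
            exact hLO o ho
          · intro b hb
            have hbP := hHIP b hb
            have hblb : blk y ≠ blk (pt b) := by
              rw [hbpt b hbP, hby]
              exact fun he => tnIrr b (he ▸ hHI b hb)
            rw [key _ _ hblb, hbpt b hbP, hby]
            exact hHI b hb
        · rintro ⟨hlo, hhi⟩
          by_cases hby : blk y = p'
          · rw [← hby]; exact hmem y
          · exfalso
            rcases hkill (blk y) (hblk y) hby with ⟨o, ho, hto⟩ | ⟨b, hb, htb⟩
            · have hoP := hLOP o ho
              have hone : blk (pt o) ≠ blk y := by
                rw [hbpt o hoP]
                exact fun he => tnIrr (blk y) (he ▸ hto)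
              have h2 := (key _ _ hone).mp (hlo o ho)
              rw [hbpt o hoP] at h2
              exact tnAsym h2 hto
            · have hbP := hHIP b hb
              have hbne : blk y ≠ blk (pt b) := by
                rw [hbpt b hbP]
                exact fun he => tnIrr b (by rw [he] at htb; exact htb)
              have h2 := (key _ _ hbne).mp (hhi b hb)
              rw [hbpt b hbP] at h2
              exact tnAsym htb h2
      rw [hU]
      letI : TopologicalSpace X := g.selTop
      apply IsOpen.inter
      · apply Set.Finite.isOpen_biInter (List.finite_toSet LO)
        intro o ho
        exact TopologicalSpace.isOpen_generateFrom_of_mem ⟨pt o, Or.inr rfl⟩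
      · apply Set.Finite.isOpen_biInter (List.finite_toSet HI)
        intro b hb
        exact TopologicalSpace.isOpen_generateFrom_of_mem ⟨pt b, Or.inl rfl⟩
    rcases zone p hp with hpS | hpQ | hpR
    · obtain ⟨C, -, hC⟩ := hQC
      obtain ⟨D, -, hD⟩ := hRC
      rw [hpS]
      apply core S hS (C.map Subtype.val) (D.map Subtype.val)
      · intro o ho
        obtain ⟨c, -, rfl⟩ := List.mem_map.mp ho
        exact hQP c.2
      · intro o ho
        obtain ⟨c, -, rfl⟩ := List.mem_map.mp ho
        exact tnQout c.2 hSQ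
      · intro b hb
        obtain ⟨d, -, rfl⟩ := List.mem_map.mp hb
        exact hRP d.2
      · intro b hb
        obtain ⟨d, -, rfl⟩ := List.mem_map.mp hb
        exact tnSR d.2
      · intro u huP hune
        rcases zone u huP with rfl | huQ | huR
        · exact absurd rfl hune
        · obtain ⟨c, hc, hbt⟩ := hC ⟨u, huQ⟩
          exact Or.inl ⟨(c : Set X), List.mem_map_of_mem hc, tnQQ huQ c.2 hbt⟩
        · obtain ⟨d, hd, hbt⟩ := hD ⟨u, huR⟩
          exact Or.inr ⟨(d : Set X), List.mem_map_of_mem hd, tnRR d.2 huR hbt⟩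
    · obtain ⟨A, B, hBne, hA, hB, hk⟩ := hQkill ⟨p, hpQ⟩
      obtain ⟨b0, hb0⟩ := List.exists_mem_of_ne_nil B hBne
      apply core p hp (A.map Subtype.val) (B.map Subtype.val)
      · intro o ho
        obtain ⟨a, -, rfl⟩ := List.mem_map.mp ho
        exact hQP a.2
      · intro o ho
        obtain ⟨a, ha, rfl⟩ := List.mem_map.mp ho
        exact tnQQ a.2 hpQ (hA a ha)
      · intro b hb
        obtain ⟨b', -, rfl⟩ := List.mem_map.mp hb
        exact hQP b'.2
      · intro b hb
        obtain ⟨b', hb', rfl⟩ := List.mem_map.mp hb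
        exact tnQQ hpQ b'.2 (hB b' hb')
      · intro u huP hune
        rcases zone u huP with rfl | huQ | huR
        · exact Or.inr ⟨(b0 : Set X), List.mem_map_of_mem hb0, tnQout b0.2 hSQ⟩
        · have hne' : (⟨u, huQ⟩ : ↥Q) ≠ ⟨p, hpQ⟩ := fun h' => hune (congrArg Subtype.val h')
          rcases hk _ hne' with ⟨a, ha, hbt⟩ | ⟨b, hb, hbt⟩
          · exact Or.inl ⟨(a : Set X), List.mem_map_of_mem ha, tnQQ huQ a.2 hbt⟩
          · exact Or.inr ⟨(b : Set X), List.mem_map_of_mem hb, tnQQ b.2 huQ hbt⟩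
        · exact Or.inr ⟨(b0 : Set X), List.mem_map_of_mem hb0,
            tnQout b0.2 (fun h' => hQnR h' huR)⟩
    · obtain ⟨A, B, hBne, hA, hB, hk⟩ := hRkill ⟨p, hpR⟩
      obtain ⟨b0, hb0⟩ := List.exists_mem_of_ne_nil B hBne
      apply core p hp (B.map Subtype.val) (A.map Subtype.val)
      · intro o ho
        obtain ⟨b, -, rfl⟩ := List.mem_map.mp ho
        exact hRP b.2
      · intro o ho
        obtain ⟨b, hb, rfl⟩ := List.mem_map.mp ho
        exact tnRR b.2 hpR (hB b hb)
      · intro b hb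
        obtain ⟨a, -, rfl⟩ := List.mem_map.mp hb
        exact hRP a.2
      · intro b hb
        obtain ⟨a, ha, rfl⟩ := List.mem_map.mp hb
        exact tnRR hpR a.2 (hA a ha)
      · intro u huP hune
        rcases zone u huP with rfl | huQ | huR
        · exact Or.inl ⟨(b0 : Set X), List.mem_map_of_mem hb0, tnSR b0.2⟩
        · exact Or.inl ⟨(b0 : Set X), List.mem_map_of_mem hb0,
            tnQout huQ (fun h' => hQnR h' b0.2)⟩
        · have hne' : (⟨u, huR⟩ : ↥R) ≠ ⟨p, hpR⟩ := fun h' => hune (congrArg Subtype.val h')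
          rcases hk _ hne' with ⟨a, ha, hbt⟩ | ⟨b, hb, hbt⟩
          · exact Or.inr ⟨(a : Set X), List.mem_map_of_mem ha, tnRR a.2 huR hbt⟩
          · exact Or.inl ⟨(b : Set X), List.mem_map_of_mem hb, tnRR huR b.2 hbt⟩
end

section
/- Let (X,≤) be a suborderable Hausdorff space with compatible linear order ≤, let C be a connected component of X, and let U be a neighbourhood of C. Then there exists a ≤-convex open set O ⊆ X with C ⊆ O ⊆ U such that O is a union of connected components of X (i.e., O = C⁻¹(C(O))). In particular, the quotient map C : X → C[X] onto the space of components is a closed map. -/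
open Topology

/-- In a space where open rays are open, preconnected sets are order-convex. -/
theorem aux_conv {X : Type*} [LinearOrder X] [TopologicalSpace X]
    (hIio : ∀ a : X, IsOpen (Set.Iio a)) (hIoi : ∀ a : X, IsOpen (Set.Ioi a))
    {s : Set X} (hs : IsPreconnected s) : s.OrdConnected := by
  refine ⟨fun x hx y hy z hz => ?_⟩
  by_contra hzs
  have h1 : s ⊆ Set.Iio z ∪ Set.Ioi z := by
    intro w hw
    rcases lt_trichotomy w z with h|h|h
    · exact Or.inl h
    · exact absurd (h ▸ hw) hzs
    · exact Or.inr h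
  obtain ⟨w, _, hw1, hw2⟩ := hs (Set.Iio z) (Set.Ioi z) (hIio z) (hIoi z) h1
    ⟨x, hx, lt_of_le_of_ne hz.1 (by rintro rfl; exact hzs hx)⟩
    ⟨y, hy, lt_of_le_of_ne hz.2 (by rintro rfl; exact hzs hy)⟩
  exact absurd (hw1.trans hw2) (lt_irrefl _)

/-- Union of two order-convex sets with a common point is order-convex. -/
theorem aux_union {X : Type*} [LinearOrder X] {s t : Set X} (hs : s.OrdConnected)
    (ht : t.OrdConnected) {p : X} (hps : p ∈ s) (hpt : p ∈ t) : (s ∪ t).OrdConnected := by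
  refine ⟨fun x hx y hy z hz => ?_⟩
  rcases hx with hx|hx <;> rcases hy with hy|hy
  · exact Or.inl (hs.out hx hy hz)
  · rcases le_total z p with h|h
    · exact Or.inl (hs.out hx hps ⟨hz.1, h⟩)
    · exact Or.inr (ht.out hpt hy ⟨h, hz.2⟩)
  · rcases le_total z p with h|h
    · exact Or.inr (ht.out hx hpt ⟨hz.1, h⟩)
    · exact Or.inl (hs.out hps hy ⟨h, hz.2⟩)
  · exact Or.inr (ht.out hx hy hz)

/-- The main construction. -/
theorem aux_main {X : Type*} [LinearOrder X] [TopologicalSpace X]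
    (hIio : ∀ a : X, IsOpen (Set.Iio a)) (hIoi : ∀ a : X, IsOpen (Set.Ioi a))
    (hbase : ∀ (x : X) (U : Set X), IsOpen U → x ∈ U →
      ∃ V : Set X, IsOpen V ∧ x ∈ V ∧ V ⊆ U ∧ V.OrdConnected)
    (x₀ : X) (U : Set X) (hU : U ∈ nhdsSet (connectedComponent x₀)) :
    ∃ O : Set X, IsOpen O ∧ O.OrdConnected ∧
      connectedComponent x₀ ⊆ O ∧ O ⊆ U ∧
      ∀ y ∈ O, connectedComponent y ⊆ O := by
  obtain ⟨U', hU'open, hCU', hU'U⟩ := mem_nhdsSet_iff_exists.mp hU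
  set C := connectedComponent x₀ with hC
  have hCconv : C.OrdConnected := aux_conv hIio hIoi isPreconnected_connectedComponent
  have hx₀C : x₀ ∈ C := mem_connectedComponent
  -- choose convex open neighbourhoods inside U'
  have hV : ∀ a : C, ∃ V : Set X, IsOpen V ∧ ↑a ∈ V ∧ V ⊆ U' ∧ V.OrdConnected :=
    fun a => hbase a U' hU'open (hCU' a.2)
  choose V hVopen hVmem hVsub hVconv using hV
  set O₁ : Set X := ⋃ a, V a with hO₁def
  have hO₁open : IsOpen O₁ := isOpen_iUnion fun a => hVopen a
  have hCO₁ : C ⊆ O₁ := fun a ha => Set.mem_iUnion.mpr ⟨⟨a, ha⟩, hVmem ⟨a, ha⟩⟩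
  have hO₁U' : O₁ ⊆ U' := Set.iUnion_subset fun a => hVsub a
  have hO₁conv : O₁.OrdConnected := by
    refine ⟨fun x hx y hy z hz => ?_⟩
    obtain ⟨a, hxa⟩ := Set.mem_iUnion.mp hx
    obtain ⟨b, hyb⟩ := Set.mem_iUnion.mp hy
    rcases le_total z x₀ with h|h
    · have := (aux_union (hVconv a) hCconv (hVmem a) a.2).out (Or.inl hxa) (Or.inr hx₀C)
        ⟨hz.1, h⟩
      rcases this with h'|h'
      · exact Set.mem_iUnion.mpr ⟨a, h'⟩
      · exact hCO₁ h'
    · have := (aux_union (hVconv b) hCconv (hVmem b) b.2).out (Or.inr hx₀C) (Or.inl hyb)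
        ⟨h, hz.2⟩
      rcases this with h'|h'
      · exact Set.mem_iUnion.mpr ⟨b, h'⟩
      · exact hCO₁ h'
  -- dichotomy for points outside O₁
  have dich : ∀ w, w ∉ O₁ → (∀ o ∈ O₁, o < w) ∨ (∀ o ∈ O₁, w < o) := by
    intro w hw
    by_contra hc
    push_neg at hc
    obtain ⟨⟨o₁, ho₁, h₁⟩, ⟨o₂, ho₂, h₂⟩⟩ := hc
    exact hw (hO₁conv.out ho₂ ho₁ ⟨h₂, h₁⟩)
  -- the saturated refinement
  refine ⟨{y ∈ O₁ | connectedComponent y ⊆ O₁}, ?_, ?_, ?_, ?_, ?_⟩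
  · -- openness
    classical
    set TopBad : X → Prop := fun z => z ∈ O₁ ∧ ∃ w ∈ connectedComponent z, ∀ o ∈ O₁, o < w
      with hTBdef
    set BotBad : X → Prop := fun z => z ∈ O₁ ∧ ∃ w ∈ connectedComponent z, ∀ o ∈ O₁, w < o
      with hBBdef
    have compconv : ∀ z : X, (connectedComponent z).OrdConnected :=
      fun z => aux_conv hIio hIoi isPreconnected_connectedComponent
    -- two top-bad points have the same component
    have L2 : ∀ z₁ z₂, TopBad z₁ → TopBad z₂ →
        connectedComponent z₁ = connectedComponent z₂ := by
      intro z₁ z₂ ⟨hz₁O, w₁, hw₁, hub₁⟩ ⟨hz₂O, w₂, hw₂, hub₂⟩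
      rcases le_total w₁ w₂ with h|h
      · have : w₁ ∈ connectedComponent z₂ :=
          (compconv z₂).out mem_connectedComponent hw₂ ⟨(hub₁ z₂ hz₂O).le, h⟩
        rw [connectedComponent_eq hw₁, connectedComponent_eq this]
      · have : w₂ ∈ connectedComponent z₁ :=
          (compconv z₁).out mem_connectedComponent hw₁ ⟨(hub₂ z₁ hz₁O).le, h⟩
        rw [connectedComponent_eq this, connectedComponent_eq hw₂]
    have L3 : ∀ z₁ z₂, BotBad z₁ → BotBad z₂ →
        connectedComponent z₁ = connectedComponent z₂ := by
      intro z₁ z₂ ⟨hz₁O, w₁, hw₁, hub₁⟩ ⟨hz₂O, w₂, hw₂, hub₂⟩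
      rcases le_total w₁ w₂ with h|h
      · have : w₂ ∈ connectedComponent z₁ :=
          (compconv z₁).out hw₁ mem_connectedComponent ⟨h, (hub₂ z₁ hz₁O).le⟩
        rw [connectedComponent_eq this, connectedComponent_eq hw₂]
      · have : w₁ ∈ connectedComponent z₂ :=
          (compconv z₂).out hw₂ mem_connectedComponent ⟨h, (hub₁ z₂ hz₂O).le⟩
        rw [connectedComponent_eq hw₁, connectedComponent_eq this]
    set T : Set X := if h : ∃ z, TopBad z then connectedComponent h.choose else ∅ with hTdef
    set B : Set X := if h : ∃ z, BotBad z then connectedComponent h.choose else ∅ with hBdef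
    have hTclosed : IsClosed T := by
      rw [hTdef]; split
      · exact isClosed_connectedComponent
      · exact isClosed_empty
    have hBclosed : IsClosed B := by
      rw [hBdef]; split
      · exact isClosed_connectedComponent
      · exact isClosed_empty
    have key : {y ∈ O₁ | connectedComponent y ⊆ O₁} = O₁ \ (T ∪ B) := by
      ext z
      constructor
      · rintro ⟨hzO, hzc⟩
        refine ⟨hzO, ?_⟩
        rintro (hzT | hzB)
        · rw [hTdef] at hzT
          split at hzT
          case isTrue h =>
            obtain ⟨hO, w, hw, hub⟩ := h.choose_spec
            have : connectedComponent z = connectedComponent h.choose :=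
              (connectedComponent_eq hzT).symm
            exact absurd (hub w (hzc (this ▸ hw))) (lt_irrefl w)
          case isFalse => exact hzT
        · rw [hBdef] at hzB
          split at hzB
          case isTrue h =>
            obtain ⟨hO, w, hw, hub⟩ := h.choose_spec
            have : connectedComponent z = connectedComponent h.choose :=
              (connectedComponent_eq hzB).symm
            exact absurd (hub w (hzc (this ▸ hw))) (lt_irrefl w)
          case isFalse => exact hzB
      · rintro ⟨hzO, hzTB⟩
        refine ⟨hzO, ?_⟩
        by_contra hcomp
        obtain ⟨w, hwz, hwO₁⟩ := Set.not_subset.mp hcomp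
        rcases dich w hwO₁ with h|h
        · have htb : TopBad z := ⟨hzO, w, hwz, h⟩
          have hex : ∃ z, TopBad z := ⟨z, htb⟩
          apply hzTB
          left
          rw [hTdef, dif_pos hex, L2 _ _ hex.choose_spec htb]
          exact mem_connectedComponent
        · have htb : BotBad z := ⟨hzO, w, hwz, h⟩
          have hex : ∃ z, BotBad z := ⟨z, htb⟩
          apply hzTB
          right
          rw [hBdef, dif_pos hex, L3 _ _ hex.choose_spec htb]
          exact mem_connectedComponent
    rw [key]
    exact hO₁open.sdiff (hTclosed.union hBclosed)
  · -- convexity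
    refine ⟨fun x hx y hy z hz => ?_⟩
    have hzO₁ : z ∈ O₁ := hO₁conv.out hx.1 hy.1 hz
    refine ⟨hzO₁, ?_⟩
    by_contra hcomp
    obtain ⟨w, hwz, hwO₁⟩ := Set.not_subset.mp hcomp
    have hzconv : (connectedComponent z).OrdConnected :=
      aux_conv hIio hIoi isPreconnected_connectedComponent
    rcases dich w hwO₁ with h|h
    · have hyw : y ∈ connectedComponent z :=
        hzconv.out mem_connectedComponent hwz ⟨hz.2, (h y hy.1).le⟩
      exact hwO₁ (((connectedComponent_eq hyw) ▸ hy.2) hwz)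
    · have hxw : x ∈ connectedComponent z :=
        hzconv.out hwz mem_connectedComponent ⟨(h x hx.1).le, hz.1⟩
      exact hwO₁ (((connectedComponent_eq hxw) ▸ hx.2) hwz)
  · -- contains C
    intro a ha
    exact ⟨hCO₁ ha, (connectedComponent_eq ha).symm ▸ hCO₁⟩
  · exact fun y hy => hU'U (hO₁U' hy.1)
  · -- saturated
    intro y hy z hz
    exact ⟨hy.2 hz, (connectedComponent_eq hz) ▸ hy.2⟩

/-- Proposition 3.2: in a suborderable space `(X, ≤)` (the linear order `≤` is
compatible: open rays are open and there is a base of order-convex open sets),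
every neighbourhood `U` of a connected component `C` contains a `≤`-convex open
set `O ⊇ C` which is a union of connected components; in particular, the
quotient map onto the space of connected components is closed. -/
theorem stmt6 {X : Type*} [LinearOrder X] [TopologicalSpace X] [T2Space X]
    (hIio : ∀ a : X, IsOpen (Set.Iio a)) (hIoi : ∀ a : X, IsOpen (Set.Ioi a))
    (hbase : ∀ (x : X) (U : Set X), IsOpen U → x ∈ U →
      ∃ V : Set X, IsOpen V ∧ x ∈ V ∧ V ⊆ U ∧ V.OrdConnected)
    (x₀ : X) (U : Set X) (hU : U ∈ nhdsSet (connectedComponent x₀)) :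
    (∃ O : Set X, IsOpen O ∧ O.OrdConnected ∧
      connectedComponent x₀ ⊆ O ∧ O ⊆ U ∧
      ∀ y ∈ O, connectedComponent y ⊆ O) ∧
    IsClosedMap (ConnectedComponents.mk : X → ConnectedComponents X) := by
  refine ⟨aux_main hIio hIoi hbase x₀ U hU, ?_⟩
  intro F hF
  rw [← ConnectedComponents.isQuotientMap_coe.isClosed_preimage, ← isOpen_compl_iff]
  rw [isOpen_iff_forall_mem_open]
  intro x hx
  have hxF : connectedComponent x ⊆ Fᶜ := by
    intro z hz hzF
    exact hx ⟨z, hzF, (ConnectedComponents.coe_eq_coe).mpr (connectedComponent_eq hz).symm⟩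
  obtain ⟨O, hOopen, _, hCO, hOF, hsat⟩ := aux_main hIio hIoi hbase x Fᶜ
    (hF.isOpen_compl.mem_nhdsSet.mpr hxF)
  refine ⟨O, ?_, hOopen, hCO mem_connectedComponent⟩
  intro y hy hyim
  obtain ⟨z, hzF, hzy⟩ := hyim
  have : connectedComponent z = connectedComponent y := (ConnectedComponents.coe_eq_coe).mp hzy
  exact hOF (hsat y hy (this ▸ (mem_connectedComponent : z ∈ connectedComponent z))) hzF
end

section
/- Let (X,≤) be a suborderable Hausdorff space with compatible linear order ≤. Then ≤ induces a linear order on the set C[X] of connected components of X (declaring C < S iff c < s for all c ∈ C, s ∈ S, for distinct components C, S), and the quotient space C[X] is suborderable with respect to this induced order: the open-interval topology of the induced order is coarser than the quotient topology on C[X], and C[X] has a base of convex sets with respect to the induced order. -/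
open Topology

section Aux

variable {X : Type*} [LinearOrder X] [TopologicalSpace X]

/-- Connected components are order-convex when open rays are open. -/
private lemma comp_ordConn (hIio : ∀ a : X, IsOpen (Set.Iio a))
    (hIoi : ∀ a : X, IsOpen (Set.Ioi a)) (x : X) :
    (connectedComponent x).OrdConnected := by
  constructor
  intro a ha b hb z hz
  by_contra hzc
  have hpre := isPreconnected_connectedComponent (x := x)
  have hsub : connectedComponent x ⊆ Set.Iio z ∪ Set.Ioi z := by
    intro w hw
    rcases lt_trichotomy w z with h | h | h
    · exact Or.inl h
    · exact absurd (h ▸ hw) hzc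
    · exact Or.inr h
  have h1 : (connectedComponent x ∩ Set.Iio z).Nonempty :=
    ⟨a, ha, lt_of_le_of_ne hz.1 (by rintro rfl; exact hzc ha)⟩
  have h2 : (connectedComponent x ∩ Set.Ioi z).Nonempty :=
    ⟨b, hb, lt_of_le_of_ne hz.2 (by rintro rfl; exact hzc hb)⟩
  obtain ⟨w, -, hw1, hw2⟩ := hpre _ _ (hIio z) (hIoi z) hsub h1 h2
  exact absurd hw1 (not_lt.2 hw2.le)

/-- If two points are in distinct components and `a < b`, then every point of
`a`'s component is below every point of `b`'s component. -/
private lemma comp_key (hIio : ∀ a : X, IsOpen (Set.Iio a))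
    (hIoi : ∀ a : X, IsOpen (Set.Ioi a)) {a b : X}
    (hne : connectedComponent a ≠ connectedComponent b) (hab : a < b) :
    ∀ a' ∈ connectedComponent a, ∀ b' ∈ connectedComponent b, a' < b' := by
  intro a' ha' b' hb'
  by_contra h
  push_neg at h
  rcases le_total a b' with h1 | h1
  · have hmem : b' ∈ connectedComponent a :=
      (comp_ordConn hIio hIoi a).out mem_connectedComponent ha' ⟨h1, h⟩
    exact hne ((connectedComponent_eq hmem).trans (connectedComponent_eq hb').symm)
  · have hmem : a ∈ connectedComponent b :=
      (comp_ordConn hIio hIoi b).out hb' mem_connectedComponent ⟨h1, hab.le⟩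
    exact hne (connectedComponent_eq hmem).symm

/-- The induced strict order on components. -/
private def cr (A B : ConnectedComponents X) : Prop :=
  A ≠ B ∧ ∀ a : X, ConnectedComponents.mk a = A →
    ∀ b : X, ConnectedComponents.mk b = B → a < b

private lemma cr_of_lt (hIio : ∀ a : X, IsOpen (Set.Iio a))
    (hIoi : ∀ a : X, IsOpen (Set.Ioi a)) {a b : X}
    (h : ConnectedComponents.mk a ≠ ConnectedComponents.mk b) (hab : a < b) :
    cr (ConnectedComponents.mk a) (ConnectedComponents.mk b) :=
  ⟨h, fun a' ha' b' hb' =>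
    comp_key hIio hIoi (fun he => h (ConnectedComponents.coe_eq_coe.2 he)) hab
      a' (ConnectedComponents.coe_eq_coe'.1 ha')
      b' (ConnectedComponents.coe_eq_coe'.1 hb')⟩

private lemma cr_sto (hIio : ∀ a : X, IsOpen (Set.Iio a))
    (hIoi : ∀ a : X, IsOpen (Set.Ioi a)) :
    IsStrictTotalOrder (ConnectedComponents X) cr where
  irrefl A h := h.1 rfl
  trans A B C hAB hBC := by
    obtain ⟨a, rfl⟩ := ConnectedComponents.surjective_coe A
    obtain ⟨b, rfl⟩ := ConnectedComponents.surjective_coe B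
    obtain ⟨c, rfl⟩ := ConnectedComponents.surjective_coe C
    have hab : a < b := hAB.2 a rfl b rfl
    have hbc : b < c := hBC.2 b rfl c rfl
    refine ⟨fun h => ?_, fun x hx z hz => lt_trans (hAB.2 x hx b rfl) (hBC.2 b rfl z hz)⟩
    have : b < a := hBC.2 b rfl a h
    exact absurd (hab.trans this) (lt_irrefl a)
  trichotomous A B := by
    obtain ⟨a, rfl⟩ := ConnectedComponents.surjective_coe A
    obtain ⟨b, rfl⟩ := ConnectedComponents.surjective_coe B
    by_cases h : ConnectedComponents.mk a = ConnectedComponents.mk b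
    · exact fun _ _ => h
    · have hab : a ≠ b := fun he => h (he ▸ rfl)
      rcases hab.lt_or_gt with h1 | h1
      · exact fun h2 _ => absurd (cr_of_lt hIio hIoi h h1) h2
      · exact fun _ h3 => absurd (cr_of_lt hIio hIoi (Ne.symm h) h1) h3

/-- Pure order lemma: a point between `a` and `c` is between `a` and `b` or
between `b` and `c`. -/
private lemma lemA {α : Type*} [LinearOrder α] {a c d : α} (b : α)
    (h : (a ≤ d ∧ d ≤ c) ∨ (c ≤ d ∧ d ≤ a)) :
    ((a ≤ d ∧ d ≤ b) ∨ (b ≤ d ∧ d ≤ a)) ∨ ((b ≤ d ∧ d ≤ c) ∨ (c ≤ d ∧ d ≤ b)) := by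
  rcases le_total d b with h1 | h1 <;> rcases h with ⟨h2, h3⟩ | ⟨h2, h3⟩ <;> tauto

private lemma lemB {α : Type*} [LinearOrder α] {a b c d e : α} (hbd : b ≤ d) (hdc : d ≤ c)
    (h : (a ≤ e ∧ e ≤ d) ∨ (d ≤ e ∧ e ≤ a)) :
    ((a ≤ e ∧ e ≤ b) ∨ (b ≤ e ∧ e ≤ a)) ∨ ((a ≤ e ∧ e ≤ c) ∨ (c ≤ e ∧ e ≤ a)) := by
  rcases h with ⟨h1, h2⟩ | ⟨h1, h2⟩
  · exact Or.inr (Or.inl ⟨h1, h2.trans hdc⟩)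
  · exact Or.inl (Or.inr ⟨hbd.trans h1, h2⟩)

end Aux

/-- Corollary 3.3: for a suborderable space `(X, ≤)` with compatible linear
order `≤`, the order induced on the set of connected components (declaring
`C < S` iff `c < s` for all `c ∈ C`, `s ∈ S`, for distinct components) is a
linear order with respect to which the quotient space of components is
suborderable: the induced open rays are open in the quotient topology, and the
quotient has a base of sets convex for the induced order. -/
theorem stmt7 {X : Type*} [LinearOrder X] [TopologicalSpace X] [T2Space X]
    (hIio : ∀ a : X, IsOpen (Set.Iio a)) (hIoi : ∀ a : X, IsOpen (Set.Ioi a))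
    (hbase : ∀ (x : X) (U : Set X), IsOpen U → x ∈ U →
      ∃ V : Set X, IsOpen V ∧ x ∈ V ∧ V ⊆ U ∧ V.OrdConnected) :
    ∃ l : LinearOrder (ConnectedComponents X),
      (∀ x y : X, ConnectedComponents.mk x ≠ ConnectedComponents.mk y →
        (l.lt (ConnectedComponents.mk x) (ConnectedComponents.mk y) ↔
          ∀ c ∈ connectedComponent x, ∀ s ∈ connectedComponent y, c < s)) ∧
      (∀ A : ConnectedComponents X, IsOpen {B | l.lt B A}) ∧
      (∀ A : ConnectedComponents X, IsOpen {B | l.lt A B}) ∧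
      (∀ (A : ConnectedComponents X) (U : Set (ConnectedComponents X)),
        IsOpen U → A ∈ U →
          ∃ V : Set (ConnectedComponents X), IsOpen V ∧ A ∈ V ∧ V ⊆ U ∧
            ∀ B ∈ V, ∀ C ∈ V, ∀ D, l.le B D → l.le D C → D ∈ V) := by
  haveI := cr_sto hIio hIoi
  haveI : DecidableRel (cr (X := X)) := fun _ _ => Classical.dec _
  letI L : LinearOrder (ConnectedComponents X) := linearOrderOfSTO cr
  have hlt : ∀ A B : ConnectedComponents X, L.lt A B ↔ cr A B := fun _ _ => Iff.rfl
  have hle : ∀ A B : ConnectedComponents X, L.le A B ↔ (A = B ∨ cr A B) := fun _ _ => Iff.rfl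
  refine ⟨L, ?_, ?_, ?_, ?_⟩
  · intro x y hne
    rw [hlt]
    constructor
    · intro h c hc s hs
      exact h.2 c (ConnectedComponents.coe_eq_coe'.2 hc) s (ConnectedComponents.coe_eq_coe'.2 hs)
    · intro h
      exact ⟨hne, fun a ha b hb =>
        h a (ConnectedComponents.coe_eq_coe'.1 ha) b (ConnectedComponents.coe_eq_coe'.1 hb)⟩
  · intro A
    obtain ⟨a, rfl⟩ := ConnectedComponents.surjective_coe A
    rw [← ConnectedComponents.isQuotientMap_coe.isOpen_preimage]
    have heq : (ConnectedComponents.mk (α := X)) ⁻¹'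
        {B | L.lt B (ConnectedComponents.mk a)}
        = Set.Iio a ∩ (connectedComponent a)ᶜ := by
      ext x
      simp only [Set.mem_preimage, Set.mem_setOf_eq, Set.mem_inter_iff, Set.mem_Iio,
        Set.mem_compl_iff, hlt]
      constructor
      · rintro ⟨hne, hall⟩
        exact ⟨hall x rfl a rfl, fun hx => hne (ConnectedComponents.coe_eq_coe'.2 hx)⟩
      · rintro ⟨hxa, hxc⟩
        exact cr_of_lt hIio hIoi (fun h => hxc (ConnectedComponents.coe_eq_coe'.1 h)) hxa
    rw [heq]
    exact (hIio a).inter isClosed_connectedComponent.isOpen_compl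
  · intro A
    obtain ⟨a, rfl⟩ := ConnectedComponents.surjective_coe A
    rw [← ConnectedComponents.isQuotientMap_coe.isOpen_preimage]
    have heq : (ConnectedComponents.mk (α := X)) ⁻¹'
        {B | L.lt (ConnectedComponents.mk a) B}
        = Set.Ioi a ∩ (connectedComponent a)ᶜ := by
      ext x
      simp only [Set.mem_preimage, Set.mem_setOf_eq, Set.mem_inter_iff, Set.mem_Ioi,
        Set.mem_compl_iff, hlt]
      constructor
      · rintro ⟨hne, hall⟩
        exact ⟨hall a rfl x rfl,
          fun hx => hne ((ConnectedComponents.coe_eq_coe'.2 hx).symm)⟩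
      · rintro ⟨hxa, hxc⟩
        exact cr_of_lt hIio hIoi
          (fun h => hxc (ConnectedComponents.coe_eq_coe'.1 h.symm)) hxa
    rw [heq]
    exact (hIoi a).inter isClosed_connectedComponent.isOpen_compl
  · intro A U hU hA
    have hbetween_self : ∀ B : ConnectedComponents X,
        (A ≤ B ∧ B ≤ B) ∨ (B ≤ B ∧ B ≤ A) := by
      intro B
      rcases le_total A B with h | h
      · exact Or.inl ⟨h, le_refl _⟩
      · exact Or.inr ⟨le_refl _, h⟩
    refine ⟨{B | ∀ D, ((A ≤ D ∧ D ≤ B) ∨ (B ≤ D ∧ D ≤ A)) → D ∈ U}, ?_, ?_, ?_, ?_⟩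
    · rw [← ConnectedComponents.isQuotientMap_coe.isOpen_preimage,
        isOpen_iff_forall_mem_open]
      intro x hx
      simp only [Set.mem_preimage, Set.mem_setOf_eq] at hx
      have hxU : x ∈ ConnectedComponents.mk ⁻¹' U :=
        hx (ConnectedComponents.mk x) (hbetween_self _)
      obtain ⟨V, hVopen, hxV, hVsub, hVconv⟩ :=
        hbase x _ (hU.preimage ConnectedComponents.continuous_coe) hxU
      refine ⟨V, ?_, hVopen, hxV⟩
      intro y hy
      simp only [Set.mem_preimage, Set.mem_setOf_eq]
      intro D hD
      rcases lemA (ConnectedComponents.mk x) hD with h | h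
      · exact hx D h
      · obtain ⟨d, rfl⟩ := ConnectedComponents.surjective_coe D
        have hyU : ConnectedComponents.mk y ∈ U := hVsub hy
        rcases h with ⟨h1, h2⟩ | ⟨h1, h2⟩
        · rcases (hle _ _).1 h1 with he | hl1
          · exact he ▸ hxU
          rcases (hle _ _).1 h2 with he | hl2
          · exact he.symm ▸ hyU
          have hxd : x < d := hl1.2 x rfl d rfl
          have hdy : d < y := hl2.2 d rfl y rfl
          exact hVsub (hVconv.out hxV hy ⟨hxd.le, hdy.le⟩)
        · rcases (hle _ _).1 h1 with he | hl1
          · exact he ▸ hyU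
          rcases (hle _ _).1 h2 with he | hl2
          · exact he.symm ▸ hxU
          have hyd : y < d := hl1.2 y rfl d rfl
          have hdx : d < x := hl2.2 d rfl x rfl
          exact hVsub (hVconv.out hy hxV ⟨hyd.le, hdx.le⟩)
    · intro D hD
      have hDA : D = A := by
        rcases hD with ⟨h1, h2⟩ | ⟨h1, h2⟩
        · exact le_antisymm h2 h1
        · exact le_antisymm h2 h1
      exact hDA ▸ hA
    · intro B hB
      exact hB B (hbetween_self B)
    · intro B hB C hC D hBD hDC E hE
      exact (lemB hBD hDC hE).elim (hB E) (hC E)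
end
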